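/- arXiv:math/0503463 — 12 statements merged into one kernel-verified Lean document; each statement's English description precedes it below -/
import Mathlib

section
/- For every θ > φ, the supremum Λ*(θ) = sup_{t ∈ ℝ}(θt − Λ(t)) is finite and strictly positive, and it is attained at a unique point t₀, which lies in (0, ∞) and satisfies θ = Λ'(t₀) = λE[ζ e^{t₀ζ}]. -/
open MeasureTheory Real Filter Set

-- pure real helper lemmas
lemma bnd_aux (x s c M : ℝ) (hx : |x| ≤ M) (hs : |s| ≤ c) :
    |x * Real.exp (s * x)| ≤ M * Real.exp (c * M) := by
  have h1 : s * x ≤ c * M := by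
    calc s * x ≤ |s * x| := le_abs_self _
    _ = |s| * |x| := abs_mul _ _
    _ ≤ c * M := mul_le_mul hs hx (abs_nonneg x) ((abs_nonneg s).trans hs)
  rw [abs_mul, abs_exp]
  exact mul_le_mul hx (exp_le_exp.2 h1) (exp_pos _).le ((abs_nonneg x).trans hx)

lemma mono_aux (x r s : ℝ) (hrs : r < s) :
    x * Real.exp (r * x) ≤ x * Real.exp (s * x) := by
  rcases le_or_gt 0 x with hx | hx
  · exact mul_le_mul_of_nonneg_left (exp_le_exp.2 (mul_le_mul_of_nonneg_right hrs.le hx)) hx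
  · exact mul_le_mul_of_nonpos_left (exp_le_exp.2 (mul_le_mul_of_nonpos_right hrs.le hx.le)) hx.le

lemma mono_aux' (x r s : ℝ) (hrs : r < s) (hx : 0 < x) :
    x * Real.exp (r * x) < x * Real.exp (s * x) :=
  mul_lt_mul_of_pos_left (exp_lt_exp.2 (mul_lt_mul_of_pos_right hrs hx)) hx

/-- Let ζ be a bounded real random variable with P{ζ > 0} > 0, λ > 0,
Λ(t) = λ(E[e^{tζ}] − 1) and φ = λE[ζ]. For every θ > φ, the supremum
Λ*(θ) = sup_t (θt − Λ(t)) is finite and strictly positive, attained at a unique point t₀,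
which lies in (0,∞) and satisfies θ = Λ'(t₀) = λE[ζ e^{t₀ζ}]. -/
theorem stmt1
    {Ω : Type*} [MeasurableSpace Ω] (μ : Measure Ω) [IsProbabilityMeasure μ]
    (ζ : Ω → ℝ) (hmeas : Measurable ζ) (M : ℝ) (hbdd : ∀ ω, |ζ ω| ≤ M)
    (hpos : 0 < μ {ω | 0 < ζ ω})
    (lam : ℝ) (hlam : 0 < lam)
    (Λ : ℝ → ℝ) (hΛ : ∀ t, Λ t = lam * ((∫ ω, Real.exp (t * ζ ω) ∂μ) - 1))
    (φ : ℝ) (hφ : φ = lam * ∫ ω, ζ ω ∂μ)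
    (θ : ℝ) (hθ : φ < θ) :
    ∃ t₀ : ℝ,
      (0 < t₀) ∧
      (∀ t : ℝ, θ * t - Λ t ≤ θ * t₀ - Λ t₀) ∧
      (∀ t : ℝ, (∀ s : ℝ, θ * s - Λ s ≤ θ * t - Λ t) → t = t₀) ∧
      (0 < θ * t₀ - Λ t₀) ∧
      HasDerivAt Λ θ t₀ ∧
      θ = lam * ∫ ω, ζ ω * Real.exp (t₀ * ζ ω) ∂μ := by
  set N := max M 0 with hN
  have hbN : ∀ ω, |ζ ω| ≤ N := fun ω => (hbdd ω).trans (le_max_left _ _)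
  have hN0 : 0 ≤ N := le_max_right _ _
  set g' : ℝ → ℝ := fun t => ∫ ω, ζ ω * Real.exp (t * ζ ω) ∂μ with hg'def
  -- measurability
  have measF : ∀ t : ℝ, AEStronglyMeasurable (fun ω => Real.exp (t * ζ ω)) μ :=
    fun t => ((measurable_const.mul hmeas).exp).aestronglyMeasurable
  have measF' : ∀ t : ℝ, AEStronglyMeasurable (fun ω => ζ ω * Real.exp (t * ζ ω)) μ :=
    fun t => (hmeas.mul ((measurable_const.mul hmeas).exp)).aestronglyMeasurable
  -- integrability
  have intF : ∀ t : ℝ, Integrable (fun ω => Real.exp (t * ζ ω)) μ := by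
    intro t
    refine (integrable_const (Real.exp (|t| * N))).mono' (measF t) ?_
    refine Eventually.of_forall fun ω => ?_
    rw [norm_eq_abs, abs_exp]
    refine exp_le_exp.2 ?_
    calc t * ζ ω ≤ |t * ζ ω| := le_abs_self _
    _ = |t| * |ζ ω| := abs_mul _ _
    _ ≤ |t| * N := mul_le_mul_of_nonneg_left (hbN ω) (abs_nonneg t)
  have intF' : ∀ t : ℝ, Integrable (fun ω => ζ ω * Real.exp (t * ζ ω)) μ := by
    intro t
    refine (integrable_const (N * Real.exp (|t| * N))).mono' (measF' t) ?_
    exact Eventually.of_forall fun ω => bnd_aux _ _ _ _ (hbN ω) le_rfl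
  -- derivative of the mgf
  have hasDg : ∀ t : ℝ, HasDerivAt (fun s => ∫ ω, Real.exp (s * ζ ω) ∂μ) (g' t) t := by
    intro t
    have := hasDerivAt_integral_of_dominated_loc_of_deriv_le (F := fun s ω => Real.exp (s * ζ ω))
      (F' := fun s ω => ζ ω * Real.exp (s * ζ ω)) (x₀ := t)
      (bound := fun _ => N * Real.exp ((|t| + 1) * N)) (s := Metric.ball t 1) (Metric.ball_mem_nhds t one_pos)
      (Eventually.of_forall measF) (intF t) (measF' t) ?_ (integrable_const _) ?_
    · exact this.2
    · refine Eventually.of_forall fun ω => fun s hs => ?_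
      rw [norm_eq_abs]
      refine bnd_aux _ _ _ _ (hbN ω) ?_
      have : |s - t| < 1 := by simpa [Real.dist_eq] using hs
      calc |s| = |t + (s - t)| := by ring_nf
      _ ≤ |t| + |s - t| := abs_add_le _ _
      _ ≤ |t| + 1 := by linarith
    · refine Eventually.of_forall fun ω => fun s _ => ?_
      have h := (hasDerivAt_mul_const (ζ ω) (x := s)).exp
      simpa [mul_comm] using h
  -- derivative of Λ
  have hasDΛ : ∀ t : ℝ, HasDerivAt Λ (lam * g' t) t := by
    intro t
    have hfun : Λ = fun t => lam * ((∫ ω, Real.exp (t * ζ ω) ∂μ) - 1) := funext hΛ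
    rw [hfun]
    exact (((hasDg t).sub_const 1).const_mul lam)
  -- continuity of g'
  have contg' : Continuous g' := by
    rw [continuous_iff_continuousAt]
    intro t
    refine continuousAt_of_dominated (F := fun s ω => ζ ω * Real.exp (s * ζ ω))
      (bound := fun _ => N * Real.exp ((|t| + 1) * N))
      (Eventually.of_forall measF') ?_ (integrable_const _) ?_
    · filter_upwards [Metric.ball_mem_nhds t one_pos] with s hs
      refine Eventually.of_forall fun ω => ?_
      rw [norm_eq_abs]
      refine bnd_aux _ _ _ _ (hbN ω) ?_
      have : |s - t| < 1 := by simpa [Real.dist_eq] using hs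
      calc |s| = |t + (s - t)| := by ring_nf
      _ ≤ |t| + |s - t| := abs_add_le _ _
      _ ≤ |t| + 1 := by linarith
    · refine Eventually.of_forall fun ω => ?_
      exact (Continuous.continuousAt (by fun_prop))
  -- strict monotonicity of g'
  have smono : StrictMono g' := by
    intro r s hrs
    have hsub : g' s - g' r = ∫ ω, (ζ ω * Real.exp (s * ζ ω) - ζ ω * Real.exp (r * ζ ω)) ∂μ := by
      rw [integral_sub (intF' s) (intF' r)]
    have hnn : 0 ≤ fun ω => ζ ω * Real.exp (s * ζ ω) - ζ ω * Real.exp (r * ζ ω) := by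
      intro ω
      simpa using sub_nonneg.2 (mono_aux (ζ ω) r s hrs)
    have hint : Integrable (fun ω => ζ ω * Real.exp (s * ζ ω) - ζ ω * Real.exp (r * ζ ω)) μ :=
      (intF' s).sub (intF' r)
    have hposint : 0 < ∫ ω, (ζ ω * Real.exp (s * ζ ω) - ζ ω * Real.exp (r * ζ ω)) ∂μ := by
      rw [integral_pos_iff_support_of_nonneg hnn hint]
      refine lt_of_lt_of_le hpos (measure_mono ?_)
      intro ω hω
      have := mono_aux' (ζ ω) r s hrs hω
      simp only [Function.mem_support]
      intro h
      rw [sub_eq_zero] at h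
      exact absurd h.symm (ne_of_lt this)
    linarith [hsub ▸ hposint]
  -- value at 0
  have hg'0 : lam * g' 0 = φ := by
    rw [hφ, hg'def]
    congr 1
    simp
  -- find ε with positive measure of {ζ ≥ ε}
  have hexists_eps : ∃ ε : ℝ, 0 < ε ∧ 0 < μ {ω | ε ≤ ζ ω} := by
    by_contra h
    push_neg at h
    have hz : ∀ n : ℕ, μ {ω | 1/(n+1 : ℝ) ≤ ζ ω} = 0 := fun n =>
      le_zero_iff.1 (h _ (by positivity))
    have hsub : {ω | 0 < ζ ω} ⊆ ⋃ n : ℕ, {ω | 1/(n+1:ℝ) ≤ ζ ω} := by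
      intro ω hω
      obtain ⟨n, hn⟩ := exists_nat_one_div_lt (K := ℝ) (show 0 < ζ ω from hω)
      exact Set.mem_iUnion.2 ⟨n, hn.le⟩
    have hle := measure_mono (μ := μ) hsub
    rw [measure_iUnion_null hz] at hle
    exact absurd (le_zero_iff.1 hle) (ne_of_gt hpos)
  obtain ⟨ε, hε, hμε⟩ := hexists_eps
  set c := (μ {ω | ε ≤ ζ ω}).toReal with hc
  have hc0 : 0 < c := ENNReal.toReal_pos (ne_of_gt hμε) (measure_ne_top μ _)
  have hmeasS : MeasurableSet {ω | ε ≤ ζ ω} := measurableSet_le measurable_const hmeas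
  -- lower bound for g' on positive t
  have hlow : ∀ t : ℝ, 0 < t → -N + ε * Real.exp (t * ε) * c ≤ g' t := by
    intro t ht
    have hintlow : Integrable (fun ω => -N +
        Set.indicator {ω | ε ≤ ζ ω} (fun _ => ε * Real.exp (t*ε)) ω) μ :=
      (integrable_const _).add ((integrable_const _).indicator hmeasS)
    have hptwise : ∀ ω, -N + Set.indicator {ω | ε ≤ ζ ω} (fun _ => ε * Real.exp (t*ε)) ω
        ≤ ζ ω * Real.exp (t * ζ ω) := by
      intro ω
      by_cases hω : ω ∈ {ω | ε ≤ ζ ω}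
      · rw [Set.indicator_of_mem hω]
        have hω' : ε ≤ ζ ω := hω
        have h1 : Real.exp (t*ε) ≤ Real.exp (t * ζ ω) :=
          exp_le_exp.2 (mul_le_mul_of_nonneg_left hω' ht.le)
        nlinarith [exp_pos (t*ε), exp_pos (t*ζ ω)]
      · rw [Set.indicator_of_notMem hω]
        have hω' : ζ ω < ε := lt_of_not_ge hω
        rcases le_or_gt 0 (ζ ω) with h0 | h0
        · nlinarith [exp_pos (t * ζ ω)]
        · have h1 : Real.exp (t * ζ ω) ≤ 1 := by
            rw [← Real.exp_zero]
            exact exp_le_exp.2 (by nlinarith)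
          have h2 : ζ ω * 1 ≤ ζ ω * Real.exp (t * ζ ω) :=
            mul_le_mul_of_nonpos_left h1 h0.le
          have h3 := abs_le.1 (hbN ω)
          linarith
    have hmono := integral_mono hintlow (intF' t) hptwise
    have heq : ∫ ω, (-N + Set.indicator {ω | ε ≤ ζ ω} (fun _ => ε * Real.exp (t*ε)) ω) ∂μ
        = -N + ε * Real.exp (t*ε) * c := by
      rw [integral_add (integrable_const _) ((integrable_const _).indicator hmeasS),
        integral_const, integral_indicator_const _ hmeasS]
      simp [hc, mul_comm, Measure.real]
    rw [heq] at hmono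
    exact hmono
  -- divergence, choose t₁
  have htend : Tendsto (fun t : ℝ => -N + ε * Real.exp (t * ε) * c) atTop atTop := by
    apply tendsto_atTop_add_const_left
    exact ((tendsto_exp_atTop.comp (tendsto_id.atTop_mul_const hε)).const_mul_atTop hε).atTop_mul_const hc0
  obtain ⟨t₁, ht₁pos, ht₁⟩ :=
    ((eventually_gt_atTop (0:ℝ)).and (htend.eventually_gt_atTop (θ / lam))).exists
  have hg't₁ : θ < lam * g' t₁ := by
    have h2 : θ / lam < g' t₁ := lt_of_lt_of_le ht₁ (hlow t₁ ht₁pos)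
    have h3 := (div_lt_iff₀ hlam).1 h2
    linarith
  -- IVT
  have hΛ'cont : Continuous (fun t => lam * g' t) := continuous_const.mul contg'
  have hmem : θ ∈ Set.Icc (lam * g' 0) (lam * g' t₁) := ⟨by rw [hg'0]; exact hθ.le, hg't₁.le⟩
  obtain ⟨t₀, ht₀mem, ht₀⟩ := intermediate_value_Icc ht₁pos.le hΛ'cont.continuousOn hmem
  replace ht₀ : lam * g' t₀ = θ := ht₀
  have ht₀pos : 0 < t₀ := by
    rcases ht₀mem.1.lt_or_eq with h | h
    · exact h
    · exfalso
      rw [← h, hg'0] at ht₀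
      exact absurd ht₀ (ne_of_lt hθ)
  -- the function f and its monotonicity
  set f : ℝ → ℝ := fun t => θ * t - Λ t with hfdef
  have hasDf : ∀ t, HasDerivAt f (θ - lam * g' t) t := by
    intro t
    have h1 : HasDerivAt (fun s : ℝ => θ * s) θ t := by
      simpa using (hasDerivAt_id t).const_mul θ
    exact h1.sub (hasDΛ t)
  have hderiv : ∀ t, deriv f t = θ - lam * g' t := fun t => (hasDf t).deriv
  have hmonoIic : StrictMonoOn f (Set.Iic t₀) := by
    apply strictMonoOn_of_deriv_pos (convex_Iic t₀)
      (fun t _ => (hasDf t).continuousAt.continuousWithinAt)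
    intro t ht
    rw [interior_Iic] at ht
    rw [hderiv]
    have h2 : lam * g' t < lam * g' t₀ := mul_lt_mul_of_pos_left (smono ht) hlam
    rw [ht₀] at h2
    linarith
  have hantiIci : StrictAntiOn f (Set.Ici t₀) := by
    apply strictAntiOn_of_deriv_neg (convex_Ici t₀)
      (fun t _ => (hasDf t).continuousAt.continuousWithinAt)
    intro t ht
    rw [interior_Ici] at ht
    rw [hderiv]
    have h2 : lam * g' t₀ < lam * g' t := mul_lt_mul_of_pos_left (smono ht) hlam
    rw [ht₀] at h2
    linarith
  have hlt : ∀ t, t ≠ t₀ → f t < f t₀ := by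
    intro t hne
    rcases lt_or_gt_of_ne hne with h | h
    · exact hmonoIic h.le Set.self_mem_Iic h
    · exact hantiIci Set.self_mem_Ici h.le h
  refine ⟨t₀, ht₀pos, ?_, ?_, ?_, ?_, ?_⟩
  · intro t
    show f t ≤ f t₀
    rcases eq_or_ne t t₀ with h | h
    · rw [h]
    · exact (hlt t h).le
  · intro t hmax
    by_contra hne
    exact absurd (hmax t₀) (not_le.2 (hlt t hne))
  · show 0 < f t₀
    have h0 : f 0 < f t₀ := hlt 0 (ne_of_lt ht₀pos)
    have hΛ0 : Λ 0 = 0 := by rw [hΛ]; simp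
    have hf0 : f 0 = 0 := by rw [hfdef]; simp [hΛ0]
    linarith
  · rw [← ht₀]
    exact hasDΛ t₀
  · exact ht₀.symm
end

section
/- The Legendre transform Λ* is finite, strictly positive, continuous, strictly increasing and convex on the open interval (φ, ∞). -/
open MeasureTheory Real Set

set_option maxHeartbeats 1000000 in

/-- Let ζ be a bounded real random variable with P{ζ > 0} > 0, λ > 0,
Λ(t) = λ(E[e^{tζ}] − 1), φ = λE[ζ] and Λ*(θ) = sup_t (θt − Λ(t)). Then Λ* is finite,
strictly positive, continuous, strictly increasing and convex on the open interval (φ, ∞). -/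
theorem stmt2
    {Ω : Type*} [MeasurableSpace Ω] (μ : Measure Ω) [IsProbabilityMeasure μ]
    (ζ : Ω → ℝ) (hmeas : Measurable ζ) (M : ℝ) (hbdd : ∀ ω, |ζ ω| ≤ M)
    (hpos : 0 < μ {ω | 0 < ζ ω})
    (lam : ℝ) (hlam : 0 < lam)
    (Λ : ℝ → ℝ) (hΛ : ∀ t, Λ t = lam * ((∫ ω, Real.exp (t * ζ ω) ∂μ) - 1))
    (φ : ℝ) (hφ : φ = lam * ∫ ω, ζ ω ∂μ)
    (Λstar : ℝ → ℝ) (hΛstar : ∀ θ, Λstar θ = ⨆ t : ℝ, (θ * t - Λ t)) :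
    (∀ θ ∈ Ioi φ, BddAbove (Set.range fun t : ℝ => θ * t - Λ t)) ∧
    (∀ θ ∈ Ioi φ, 0 < Λstar θ) ∧
    ContinuousOn Λstar (Ioi φ) ∧
    StrictMonoOn Λstar (Ioi φ) ∧
    ConvexOn ℝ (Ioi φ) Λstar := by
  -- M is positive
  have hM : 0 < M := by
    obtain ⟨ω, hω⟩ : {ω | 0 < ζ ω}.Nonempty := nonempty_of_measure_ne_zero hpos.ne'
    have := hbdd ω
    have := abs_nonneg (ζ ω)
    have : ζ ω ≤ |ζ ω| := le_abs_self _
    simp only [Set.mem_setOf_eq] at hω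
    linarith [hbdd ω]
  -- ζ is integrable
  have hζint : Integrable ζ μ := by
    refine Integrable.mono' (integrable_const M) hmeas.aestronglyMeasurable ?_
    filter_upwards with ω
    simpa using hbdd ω
  -- exp(t ζ) is integrable
  have hexpint : ∀ t : ℝ, Integrable (fun ω => Real.exp (t * ζ ω)) μ := by
    intro t
    refine Integrable.mono' (integrable_const (Real.exp (|t| * M)))
      (Real.measurable_exp.comp (measurable_const.mul hmeas)).aestronglyMeasurable ?_
    filter_upwards with ω
    rw [Real.norm_eq_abs, abs_of_pos (Real.exp_pos _)]
    apply Real.exp_le_exp.2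
    calc t * ζ ω ≤ |t * ζ ω| := le_abs_self _
      _ = |t| * |ζ ω| := abs_mul _ _
      _ ≤ |t| * M := by
          exact mul_le_mul_of_nonneg_left (hbdd ω) (abs_nonneg t)
  -- Jensen-type lower bound: Λ t ≥ φ t
  have hJ : ∀ t : ℝ, φ * t ≤ Λ t := by
    intro t
    rw [hΛ, hφ]
    have h1 : ∫ ω, (t * ζ ω + 1) ∂μ ≤ ∫ ω, Real.exp (t * ζ ω) ∂μ := by
      refine integral_mono ((hζint.const_mul t).add (integrable_const 1)) (hexpint t) ?_
      intro ω
      have := Real.add_one_le_exp (t * ζ ω)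
      simpa using this
    have h2 : ∫ ω, (t * ζ ω + 1) ∂μ = t * (∫ ω, ζ ω ∂μ) + 1 := by
      rw [integral_add (hζint.const_mul t) (integrable_const 1),
        integral_const_mul, integral_const]
      simp
    rw [h2] at h1
    nlinarith [h1, hlam, mul_le_mul_of_nonneg_left h1 hlam.le]
  -- find ε > 0 with positive mass above ε
  obtain ⟨ε, hε, hA⟩ : ∃ ε > (0:ℝ), 0 < μ {ω | ε ≤ ζ ω} := by
    by_contra h
    push_neg at h
    have hz : μ {ω | 0 < ζ ω} = 0 := by
      have hsub : {ω | 0 < ζ ω} ⊆ ⋃ n : ℕ, {ω | 1 / ((n : ℝ) + 1) ≤ ζ ω} := by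
        intro ω hω
        obtain ⟨n, hn⟩ := exists_nat_one_div_lt (Set.mem_setOf_eq ▸ hω)
        exact Set.mem_iUnion.2 ⟨n, hn.le⟩
      refine measure_mono_null hsub (measure_iUnion_null fun n => ?_)
      exact le_zero_iff.1 (h _ (by positivity))
    exact absurd hz hpos.ne'
  have hAm : MeasurableSet {ω | ε ≤ ζ ω} := hmeas measurableSet_Ici
  set p : ℝ := (μ {ω | ε ≤ ζ ω}).toReal with hpdef
  have hp : 0 < p := ENNReal.toReal_pos hA.ne' (measure_ne_top μ _)
  -- exponential lower bound for t ≥ 0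
  have hLB : ∀ t : ℝ, 0 ≤ t → p * Real.exp (t * ε) ≤ ∫ ω, Real.exp (t * ζ ω) ∂μ := by
    intro t ht
    have h1 : ∫ ω, ({ω | ε ≤ ζ ω}.indicator (fun _ => Real.exp (t * ε))) ω ∂μ
        ≤ ∫ ω, Real.exp (t * ζ ω) ∂μ := by
      refine integral_mono ((integrable_const _).indicator hAm) (hexpint t) ?_
      intro ω
      by_cases hω : ω ∈ {ω | ε ≤ ζ ω}
      · simp only [Set.indicator_of_mem hω]
        exact Real.exp_le_exp.2 (mul_le_mul_of_nonneg_left hω ht)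
      · simp only [Set.indicator_of_notMem hω]
        exact (Real.exp_pos _).le
    rw [integral_indicator_const _ hAm, smul_eq_mul] at h1
    exact h1
  -- quadratic lower bound for exp on [0,∞)
  have hquad : ∀ x : ℝ, 0 ≤ x → x ^ 2 / 4 ≤ Real.exp x := by
    intro x hx
    have h1 : x / 2 + 1 ≤ Real.exp (x / 2) := Real.add_one_le_exp (x / 2)
    have h2 : Real.exp (x / 2) * Real.exp (x / 2) = Real.exp x := by
      rw [← Real.exp_add]; ring_nf
    nlinarith [Real.exp_pos (x / 2)]
  -- uniform upper bound for θ t - Λ t when θ > φ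
  have hB : ∀ θ, φ < θ → ∀ t : ℝ, θ * t - Λ t ≤ θ ^ 2 / (lam * p * ε ^ 2) + lam := by
    intro θ hθ t
    have hD : 0 < lam * p * ε ^ 2 := by positivity
    rcases le_or_gt t 0 with ht | ht
    · have h1 : θ * t - Λ t ≤ (θ - φ) * t := by nlinarith [hJ t]
      have h2 : (θ - φ) * t ≤ 0 := mul_nonpos_of_nonneg_of_nonpos (by linarith) ht
      have h3 : 0 ≤ θ ^ 2 / (lam * p * ε ^ 2) := by positivity
      linarith
    · have h1 : p * Real.exp (t * ε) ≤ ∫ ω, Real.exp (t * ζ ω) ∂μ := hLB t ht.le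
      have h2 : (t * ε) ^ 2 / 4 ≤ Real.exp (t * ε) := hquad _ (by positivity)
      have h3 : lam * (p * ((t * ε) ^ 2 / 4) - 1) ≤ Λ t := by
        rw [hΛ]
        nlinarith [h1, h2, hp, hlam, mul_le_mul_of_nonneg_left h2 hp.le]
      have key : θ * t - lam * p * ε ^ 2 / 4 * t ^ 2 ≤ θ ^ 2 / (lam * p * ε ^ 2) := by
        rw [le_div_iff₀ hD]
        nlinarith [sq_nonneg (lam * p * ε ^ 2 * t - 2 * θ)]
      nlinarith [h3]
  have part1 : ∀ θ ∈ Ioi φ, BddAbove (Set.range fun t : ℝ => θ * t - Λ t) := by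
    intro θ hθ
    exact ⟨θ ^ 2 / (lam * p * ε ^ 2) + lam, by
      rintro _ ⟨t, rfl⟩; exact hB θ hθ t⟩
  -- upper bound on Λ for small nonnegative t
  have hsmall : ∀ t : ℝ, 0 ≤ t → t * M ≤ 1 → Λ t ≤ φ * t + lam * M ^ 2 * t ^ 2 := by
    intro t ht htM
    have h1 : ∫ ω, Real.exp (t * ζ ω) ∂μ ≤ ∫ ω, (t * ζ ω + (1 + t ^ 2 * M ^ 2)) ∂μ := by
      refine integral_mono (hexpint t) ((hζint.const_mul t).add (integrable_const _)) ?_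
      intro ω
      dsimp only
      have habs : |t * ζ ω| ≤ 1 := by
        rw [abs_mul, abs_of_nonneg ht]
        calc t * |ζ ω| ≤ t * M := mul_le_mul_of_nonneg_left (hbdd ω) ht
          _ ≤ 1 := htM
      have h2 := Real.abs_exp_sub_one_sub_id_le habs
      have hz2 : ζ ω ^ 2 ≤ M ^ 2 := by
        nlinarith [sq_abs (ζ ω), hbdd ω, abs_nonneg (ζ ω)]
      have h3 : (t * ζ ω) ^ 2 ≤ t ^ 2 * M ^ 2 := by
        nlinarith [sq_nonneg t, hz2]
      have h4 : Real.exp (t * ζ ω) - 1 - t * ζ ω ≤ (t * ζ ω) ^ 2 :=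
        (le_abs_self _).trans h2
      linarith
    have h2 : ∫ ω, (t * ζ ω + (1 + t ^ 2 * M ^ 2)) ∂μ
        = t * (∫ ω, ζ ω ∂μ) + (1 + t ^ 2 * M ^ 2) := by
      rw [integral_add (hζint.const_mul t) (integrable_const _),
        integral_const_mul, integral_const]
      simp
    rw [h2] at h1
    rw [hΛ, hφ]
    nlinarith [h1, hlam, mul_le_mul_of_nonneg_left h1 hlam.le]
  -- strict positivity
  have part2 : ∀ θ ∈ Ioi φ, 0 < Λstar θ := by
    intro θ hθ
    rw [Set.mem_Ioi] at hθ
    set t0 : ℝ := min (1 / M) ((θ - φ) / (2 * lam * M ^ 2)) with ht0def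
    have ht0pos : 0 < t0 := lt_min (by positivity) (by
      apply div_pos (by linarith) (by positivity))
    have ht0M : t0 * M ≤ 1 := by
      have : t0 ≤ 1 / M := min_le_left _ _
      rw [le_div_iff₀ hM] at this
      linarith
    have ht0b : lam * M ^ 2 * t0 ≤ (θ - φ) / 2 := by
      have h := min_le_right (1 / M) ((θ - φ) / (2 * lam * M ^ 2))
      rw [le_div_iff₀ (by positivity : (0:ℝ) < 2 * lam * M ^ 2)] at h
      have hlM : (0:ℝ) < lam * M ^ 2 := by positivity
      nlinarith
    have hval : t0 * (θ - φ) / 2 ≤ θ * t0 - Λ t0 := by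
      have := hsmall t0 ht0pos.le ht0M
      nlinarith [ht0b, ht0pos]
    have hle : θ * t0 - Λ t0 ≤ Λstar θ := by
      rw [hΛstar]
      exact le_ciSup (part1 θ hθ) t0
    have : 0 < t0 * (θ - φ) / 2 := by
      have := mul_pos ht0pos (sub_pos.2 hθ); linarith
    linarith
  -- key comparison for strict monotonicity
  have hcomp : ∀ x ∈ Ioi φ, ∀ y ∈ Ioi φ, x < y →
      Λstar x * (y - φ) ≤ Λstar y * (x - φ) := by
    intro x hx y hy hxy
    rw [Set.mem_Ioi] at hx hy
    have hxpos := part2 x (Set.mem_Ioi.2 hx)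
    refine le_of_forall_pos_le_add ?_
    intro δ hδ
    set ε' : ℝ := min (Λstar x / 2) (δ / (y - φ)) with hε'def
    have hε'pos : 0 < ε' := lt_min (by linarith) (div_pos hδ (by linarith))
    have hε'lt : ε' < Λstar x := (min_le_left _ _).trans_lt (by linarith)
    have hε'δ : ε' * (y - φ) ≤ δ := by
      have h := min_le_right (Λstar x / 2) (δ / (y - φ))
      rw [le_div_iff₀ (by linarith : (0:ℝ) < y - φ)] at h
      linarith
    -- pick near-optimal t for x
    have hlt : Λstar x - ε' < ⨆ t : ℝ, (x * t - Λ t) := by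
      rw [← hΛstar]; linarith
    obtain ⟨t, ht⟩ := exists_lt_of_lt_ciSup hlt
    have hs1 : x * t - Λ t ≤ (x - φ) * t := by nlinarith [hJ t]
    have hstp : 0 < (x - φ) * t := lt_of_lt_of_le (by linarith) hs1
    have htpos : 0 < t := by
      by_contra h
      push_neg at h
      nlinarith [mul_nonpos_of_nonneg_of_nonpos (by linarith : (0:ℝ) ≤ x - φ) h]
    have hs2 : y * t - Λ t ≤ Λstar y := by
      rw [hΛstar]
      exact le_ciSup (part1 y (Set.mem_Ioi.2 hy)) t
    -- combine
    have ha : 0 < Λstar x - ε' := by linarith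
    have e1 : (Λstar x - ε') * (x - φ) ≤ (x * t - Λ t) * (x - φ) :=
      mul_le_mul_of_nonneg_right ht.le (by linarith)
    have e2 : (Λstar x - ε') * (y - x) ≤ ((x - φ) * t) * (y - x) :=
      mul_le_mul_of_nonneg_right (ht.le.trans hs1) (by linarith)
    have e3 : (y * t - Λ t) * (x - φ) ≤ Λstar y * (x - φ) :=
      mul_le_mul_of_nonneg_right hs2 (by linarith)
    linarith [e1, e2, e3, hε'δ]
  have part4 : StrictMonoOn Λstar (Ioi φ) := by
    intro x hx y hy hxy
    have h := hcomp x hx y hy hxy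
    have hxpos := part2 x hx
    rw [Set.mem_Ioi] at hx hy
    nlinarith [mul_pos hxpos (sub_pos.2 hxy), sub_pos.2 hx]
  have part5 : ConvexOn ℝ (Ioi φ) Λstar := by
    refine ⟨convex_Ioi φ, ?_⟩
    intro x hx y hy a b ha hb hab
    rw [Set.mem_Ioi] at hx hy
    simp only [smul_eq_mul]
    rw [hΛstar]
    refine ciSup_le fun t => ?_
    have h1 : x * t - Λ t ≤ Λstar x := by
      rw [hΛstar]; exact le_ciSup (part1 x (Set.mem_Ioi.2 hx)) t
    have h2 : y * t - Λ t ≤ Λstar y := by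
      rw [hΛstar]; exact le_ciSup (part1 y (Set.mem_Ioi.2 hy)) t
    have key : (a * x + b * y) * t - Λ t = a * (x * t - Λ t) + b * (y * t - Λ t) := by
      have hb' : b = 1 - a := by linarith
      rw [hb']; ring
    rw [key]
    exact add_le_add (mul_le_mul_of_nonneg_left h1 ha) (mul_le_mul_of_nonneg_left h2 hb)
  exact ⟨part1, part2, part5.continuousOn isOpen_Ioi, part4, part5⟩
end

section
/- |E[ζ e^{⟨t,ζ⟩}]| → ∞ as |t| → ∞; equivalently, the gradient ∇Λ(t) = λE[ζ e^{⟨t,ζ⟩}] has norm tending to infinity as |t| → ∞. -/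
open MeasureTheory Real Filter
open scoped RealInnerProductSpace

/-- Let ζ be a bounded ℝ^n-valued random variable (n ≥ 1) such that
P{⟨v,ζ⟩ > 0} > 0 for every v ≠ 0. Then |E[ζ e^{⟨t,ζ⟩}]| → ∞ as |t| → ∞. -/
theorem stmt3
    {Ω : Type*} [MeasurableSpace Ω] (μ : Measure Ω) [IsProbabilityMeasure μ]
    (n : ℕ) (hn : 1 ≤ n)
    (ζ : Ω → EuclideanSpace ℝ (Fin n)) (hmeas : Measurable ζ)
    (M : ℝ) (hbdd : ∀ ω, ‖ζ ω‖ ≤ M)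
    (hpos : ∀ v : EuclideanSpace ℝ (Fin n), v ≠ 0 → 0 < μ {ω | 0 < ⟪v, ζ ω⟫}) :
    Tendsto (fun t : EuclideanSpace ℝ (Fin n) =>
        ‖∫ ω, Real.exp ⟪t, ζ ω⟫ • ζ ω ∂μ‖)
      (Bornology.cobounded (EuclideanSpace ℝ (Fin n))) atTop := by
  obtain ⟨M', hM'0, hbdd'⟩ : ∃ M' : ℝ, 0 ≤ M' ∧ ∀ ω, ‖ζ ω‖ ≤ M' :=
    ⟨max M 0, le_max_right _ _, fun ω => (hbdd ω).trans (le_max_left _ _)⟩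
  clear hbdd M
  -- measurability of inner products
  have hinner : ∀ v : EuclideanSpace ℝ (Fin n), Measurable (fun ω => ⟪v, ζ ω⟫) := fun v =>
    (continuous_const.inner continuous_id).measurable.comp hmeas
  -- step 1 : for each unit u, find e>0 with positive measure of {2e < ⟪u,ζ⟫}
  have key : ∀ u : EuclideanSpace ℝ (Fin n),
      ∃ e : ℝ, 0 < e ∧ (‖u‖ = 1 → 0 < μ {ω | 2 * e < ⟪u, ζ ω⟫}) := by
    intro u
    by_cases hu : ‖u‖ = 1
    · have hu0 : u ≠ 0 := by intro h; rw [h] at hu; simp at hu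
      have h0 := hpos u hu0
      by_contra hcon
      push_neg at hcon
      have hsub : {ω | 0 < ⟪u, ζ ω⟫} ⊆
          ⋃ k : ℕ, {ω | 2 * (1 / (2 * ((k : ℝ) + 1))) < ⟪u, ζ ω⟫} := by
        intro ω hω
        obtain ⟨k, hk⟩ := exists_nat_one_div_lt (show (0:ℝ) < ⟪u, ζ ω⟫ from hω)
        refine Set.mem_iUnion.2 ⟨k, ?_⟩
        simp only [Set.mem_setOf_eq]
        rw [show (2 : ℝ) * (1 / (2 * ((k : ℝ) + 1))) = 1 / ((k : ℝ) + 1) by field_simp]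
        exact hk
      have hz : ∀ k : ℕ, μ {ω | 2 * (1 / (2 * ((k : ℝ) + 1))) < ⟪u, ζ ω⟫} = 0 := by
        intro k
        have h := (hcon (1 / (2 * ((k : ℝ) + 1))) (by positivity)).2
        exact le_antisymm h (zero_le)
      have : μ {ω | 0 < ⟪u, ζ ω⟫} = 0 :=
        measure_mono_null hsub (measure_iUnion_null fun k => hz k)
      exact absurd this (ne_of_gt h0)
    · exact ⟨1, one_pos, fun h => absurd h hu⟩
  choose e he hμe using key
  -- step 2 : compactness on the sphere, uniform ε, δ
  have hS : IsCompact (Metric.sphere (0 : EuclideanSpace ℝ (Fin n)) 1) := isCompact_sphere 0 1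
  have hcover : Metric.sphere (0 : EuclideanSpace ℝ (Fin n)) 1 ⊆
      ⋃ u ∈ Metric.sphere (0 : EuclideanSpace ℝ (Fin n)) 1, Metric.ball u (e u / (M' + 1)) := by
    intro u hu
    exact Set.mem_biUnion hu (Metric.mem_ball_self (div_pos (he u) (by linarith)))
  obtain ⟨s, hsS, hsfin, hscov⟩ := hS.elim_finite_subcover_image
    (fun u _ => Metric.isOpen_ball) hcover
  haveI : Nonempty (Fin n) := ⟨⟨0, hn⟩⟩
  have hnt : Nontrivial (EuclideanSpace ℝ (Fin n)) := by
    refine ⟨EuclideanSpace.single ⟨0, hn⟩ (1 : ℝ), 0, ?_⟩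
    intro h
    have := congrArg (fun x : EuclideanSpace ℝ (Fin n) => x ⟨0, hn⟩) h
    simp [EuclideanSpace.single] at this
  have hSne : (Metric.sphere (0 : EuclideanSpace ℝ (Fin n)) 1).Nonempty :=
    NormedSpace.sphere_nonempty.2 zero_le_one
  have hFne : hsfin.toFinset.Nonempty := by
    rcases hSne with ⟨u, hu⟩
    rcases Set.mem_iUnion₂.1 (hscov hu) with ⟨i, hi, _⟩
    exact ⟨i, hsfin.mem_toFinset.2 hi⟩
  obtain ⟨ε, δ, hε, hδ, hεδ⟩ : ∃ ε δ : ℝ, 0 < ε ∧ 0 < δ ∧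
      ∀ u : EuclideanSpace ℝ (Fin n), ‖u‖ = 1 → δ ≤ (μ {ω | ε < ⟪u, ζ ω⟫}).toReal := by
    refine ⟨hsfin.toFinset.inf' hFne e,
      hsfin.toFinset.inf' hFne (fun i => (μ {ω | 2 * e i < ⟪i, ζ ω⟫}).toReal), ?_, ?_, ?_⟩
    · exact (Finset.lt_inf'_iff hFne).2 fun i _ => he i
    · refine (Finset.lt_inf'_iff hFne).2 fun i hi => ?_
      have hi1 : ‖i‖ = 1 := by
        have := hsS (hsfin.mem_toFinset.1 hi)
        simpa [mem_sphere_iff_norm] using this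
      exact ENNReal.toReal_pos (ne_of_gt (hμe i hi1)) (measure_ne_top μ _)
    · intro u hu
      have hu' : u ∈ Metric.sphere (0 : EuclideanSpace ℝ (Fin n)) 1 := by
        simpa [mem_sphere_iff_norm] using hu
      rcases Set.mem_iUnion₂.1 (hscov hu') with ⟨i, hi, hball⟩
      have hiF : i ∈ hsfin.toFinset := hsfin.mem_toFinset.2 hi
      have hsub : {ω | 2 * e i < ⟪i, ζ ω⟫} ⊆
          {ω | hsfin.toFinset.inf' hFne e < ⟪u, ζ ω⟫} := by
        intro ω hω
        simp only [Set.mem_setOf_eq] at hω ⊢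
        have hdiff : ⟪u - i, ζ ω⟫ = ⟪u, ζ ω⟫ - ⟪i, ζ ω⟫ := inner_sub_left u i (ζ ω)
        have habs : |⟪u - i, ζ ω⟫| ≤ ‖u - i‖ * ‖ζ ω‖ := abs_real_inner_le_norm _ _
        have hdist : ‖u - i‖ < e i / (M' + 1) := by
          rw [← dist_eq_norm]; exact Metric.mem_ball.1 hball
        have h1 : ‖u - i‖ * ‖ζ ω‖ ≤ (e i / (M' + 1)) * M' :=
          mul_le_mul hdist.le (hbdd' ω) (norm_nonneg _)
            (le_of_lt (div_pos (he i) (by linarith)))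
        have h2 : (e i / (M' + 1)) * M' < e i := by
          rw [div_mul_eq_mul_div, div_lt_iff₀ (by linarith)]
          nlinarith [he i]
        have h3 : hsfin.toFinset.inf' hFne e ≤ e i := Finset.inf'_le _ hiF
        have h4 : |⟪u, ζ ω⟫ - ⟪i, ζ ω⟫| < e i := by
          rw [← hdiff]; exact lt_of_le_of_lt habs (lt_of_le_of_lt h1 h2)
        have := abs_lt.1 h4
        linarith [this.1]
      calc hsfin.toFinset.inf' hFne (fun i => (μ {ω | 2 * e i < ⟪i, ζ ω⟫}).toReal)
          ≤ (μ {ω | 2 * e i < ⟪i, ζ ω⟫}).toReal := Finset.inf'_le _ hiF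
        _ ≤ (μ {ω | hsfin.toFinset.inf' hFne e < ⟪u, ζ ω⟫}).toReal :=
            ENNReal.toReal_mono (measure_ne_top μ _) (measure_mono hsub)
  clear hscov hsS hcover hμe he hFne hSne hS hnt
  -- integrability
  have hInt : ∀ t : EuclideanSpace ℝ (Fin n),
      Integrable (fun ω => Real.exp ⟪t, ζ ω⟫ • ζ ω) μ := by
    intro t
    have hm : AEStronglyMeasurable (fun ω => Real.exp ⟪t, ζ ω⟫ • ζ ω) μ :=
      (((hinner t).exp).aestronglyMeasurable.smul hmeas.aestronglyMeasurable)
    refine Integrable.mono' (integrable_const (Real.exp (‖t‖ * M') * M')) hm ?_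
    filter_upwards with ω
    rw [norm_smul, Real.norm_eq_abs, abs_of_pos (Real.exp_pos _)]
    have h1 : ⟪t, ζ ω⟫ ≤ ‖t‖ * M' :=
      (real_inner_le_norm t (ζ ω)).trans
        (mul_le_mul_of_nonneg_left (hbdd' ω) (norm_nonneg t))
    exact mul_le_mul (Real.exp_le_exp.2 h1) (hbdd' ω) (norm_nonneg _) (Real.exp_pos _).le
  -- main estimate
  have hmain : ∀ t : EuclideanSpace ℝ (Fin n), 1 ≤ ‖t‖ →
      ε * δ * Real.exp (ε * ‖t‖) - M' ≤ ‖∫ ω, Real.exp ⟪t, ζ ω⟫ • ζ ω ∂μ‖ := by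
    intro t ht
    have htn : ‖t‖ ≠ 0 := by intro h; rw [h] at ht; linarith
    set u : EuclideanSpace ℝ (Fin n) := ‖t‖⁻¹ • t with hu
    have hu1 : ‖u‖ = 1 := by
      rw [hu, norm_smul, norm_inv, norm_norm, inv_mul_cancel₀ htn]
    have hts : ∀ ω, ⟪t, ζ ω⟫ = ‖t‖ * ⟪u, ζ ω⟫ := by
      intro ω
      rw [hu, real_inner_smul_left, ← mul_assoc, mul_inv_cancel₀ htn, one_mul]
    have hInt' : Integrable (fun ω => Real.exp ⟪t, ζ ω⟫ * ⟪u, ζ ω⟫) μ := by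
      have : Integrable (fun ω => ⟪u, Real.exp ⟪t, ζ ω⟫ • ζ ω⟫) μ :=
        Integrable.const_inner u (hInt t)
      refine this.congr (Filter.Eventually.of_forall fun ω => ?_)
      simp only [real_inner_smul_right]
    have h1 : ∫ ω, Real.exp ⟪t, ζ ω⟫ * ⟪u, ζ ω⟫ ∂μ ≤
        ‖∫ ω, Real.exp ⟪t, ζ ω⟫ • ζ ω ∂μ‖ := by
      have heq : ∫ ω, Real.exp ⟪t, ζ ω⟫ * ⟪u, ζ ω⟫ ∂μ =
          ⟪u, ∫ ω, Real.exp ⟪t, ζ ω⟫ • ζ ω ∂μ⟫ := by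
        rw [← integral_inner (hInt t) u]
        congr 1
        funext ω
        rw [real_inner_smul_right]
      rw [heq]
      calc ⟪u, ∫ ω, Real.exp ⟪t, ζ ω⟫ • ζ ω ∂μ⟫
          ≤ ‖u‖ * ‖∫ ω, Real.exp ⟪t, ζ ω⟫ • ζ ω ∂μ‖ := real_inner_le_norm _ _
        _ = ‖∫ ω, Real.exp ⟪t, ζ ω⟫ • ζ ω ∂μ‖ := by rw [hu1, one_mul]
    refine le_trans ?_ h1
    -- split the integral
    set A := {ω | ε < ⟪u, ζ ω⟫} with hA
    have hAm : MeasurableSet A := measurableSet_lt measurable_const (hinner u)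
    have hsplit := integral_add_compl hAm hInt'
    have hlow1 : (ε * Real.exp (ε * ‖t‖)) * (μ A).toReal ≤
        ∫ ω in A, Real.exp ⟪t, ζ ω⟫ * ⟪u, ζ ω⟫ ∂μ := by
      refine setIntegral_ge_of_const_le_real hAm (measure_ne_top μ _) ?_ hInt'.integrableOn
      intro ω hω
      have hs : ε < ⟪u, ζ ω⟫ := hω
      rw [hts ω]
      have he1 : Real.exp (ε * ‖t‖) ≤ Real.exp (‖t‖ * ⟪u, ζ ω⟫) := by
        apply Real.exp_le_exp.2
        rw [mul_comm ε ‖t‖]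
        exact mul_le_mul_of_nonneg_left hs.le (by linarith)
      calc ε * Real.exp (ε * ‖t‖) ≤ ⟪u, ζ ω⟫ * Real.exp (‖t‖ * ⟪u, ζ ω⟫) :=
            mul_le_mul hs.le he1 (Real.exp_pos _).le (by linarith)
        _ = Real.exp (‖t‖ * ⟪u, ζ ω⟫) * ⟪u, ζ ω⟫ := mul_comm _ _
    have hlow2 : (-M') * (μ Aᶜ).toReal ≤
        ∫ ω in Aᶜ, Real.exp ⟪t, ζ ω⟫ * ⟪u, ζ ω⟫ ∂μ := by
      refine setIntegral_ge_of_const_le_real hAm.compl (measure_ne_top μ _) ?_ hInt'.integrableOn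
      intro ω hω
      have hsM : |⟪u, ζ ω⟫| ≤ M' := by
        calc |⟪u, ζ ω⟫| ≤ ‖u‖ * ‖ζ ω‖ := abs_real_inner_le_norm _ _
          _ ≤ M' := by rw [hu1, one_mul]; exact hbdd' ω
      rcases le_or_gt 0 ⟪u, ζ ω⟫ with hcase | hcase
      · have h0 : 0 ≤ Real.exp ⟪t, ζ ω⟫ * ⟪u, ζ ω⟫ :=
          mul_nonneg (Real.exp_pos _).le hcase
        linarith
      · have hexp : Real.exp ⟪t, ζ ω⟫ ≤ 1 := by
          rw [hts ω]
          exact Real.exp_le_one_iff.2 (mul_nonpos_of_nonneg_of_nonpos (by linarith) hcase.le)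
        have h2 : ⟪u, ζ ω⟫ ≤ Real.exp ⟪t, ζ ω⟫ * ⟪u, ζ ω⟫ := by
          nlinarith [Real.exp_pos ⟪t, ζ ω⟫]
        have h3 : -M' ≤ ⟪u, ζ ω⟫ := (abs_le.1 hsM).1
        linarith
    have h4 : (μ Aᶜ).toReal ≤ 1 := by
      calc (μ Aᶜ).toReal ≤ (μ Set.univ).toReal :=
            ENNReal.toReal_mono (measure_ne_top μ _) (measure_mono (Set.subset_univ Aᶜ))
        _ = 1 := by simp
    have hδA : δ ≤ (μ A).toReal := hεδ u hu1
    have hc : 0 ≤ ε * Real.exp (ε * ‖t‖) := by positivity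
    rw [← hsplit]
    nlinarith [hlow1, hlow2, ENNReal.toReal_nonneg (a := μ Aᶜ),
      ENNReal.toReal_nonneg (a := μ A)]
  -- final assembly
  have hφ : Tendsto (fun r : ℝ => ε * δ * Real.exp (ε * r) - M') atTop atTop := by
    simp only [sub_eq_add_neg]
    apply tendsto_atTop_add_const_right
    exact Tendsto.const_mul_atTop (by positivity)
      (Real.tendsto_exp_atTop.comp (Tendsto.const_mul_atTop hε tendsto_id))
  refine tendsto_atTop_mono' _ ?_ (hφ.comp tendsto_norm_cobounded_atTop)
  filter_upwards [tendsto_norm_cobounded_atTop.eventually (eventually_ge_atTop 1)] with t ht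
  exact hmain t ht
end

section
/- For every a > 1, the sublevel set V = {t ∈ ℝ^n : E[e^{⟨t,ζ⟩}] ≤ a} of the moment generating function is bounded. -/
open MeasureTheory Real
open scoped RealInnerProductSpace

/-- Let ζ be a bounded ℝ^n-valued random variable (n ≥ 1) such that
P{⟨v,ζ⟩ > 0} > 0 for every v ≠ 0. For every a > 1, the sublevel set
V = {t : E[e^{⟨t,ζ⟩}] ≤ a} of the moment generating function is bounded. -/
theorem stmt4
    {Ω : Type*} [MeasurableSpace Ω] (μ : Measure Ω) [IsProbabilityMeasure μ]
    (n : ℕ) (hn : 1 ≤ n)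
    (ζ : Ω → EuclideanSpace ℝ (Fin n)) (hmeas : Measurable ζ)
    (M : ℝ) (hbdd : ∀ ω, ‖ζ ω‖ ≤ M)
    (hpos : ∀ v : EuclideanSpace ℝ (Fin n), v ≠ 0 → 0 < μ {ω | 0 < ⟪v, ζ ω⟫})
    (a : ℝ) (ha : 1 < a) :
    Bornology.IsBounded
      {t : EuclideanSpace ℝ (Fin n) | (∫ ω, Real.exp ⟪t, ζ ω⟫ ∂μ) ≤ a} := by
  classical
  haveI : Nonempty (Fin n) := ⟨⟨0, hn⟩⟩
  haveI : Nonempty Ω := by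
    by_contra h
    rw [not_nonempty_iff] at h
    have h1 : μ Set.univ = 1 := measure_univ
    simp [Set.univ_eq_empty_iff.mpr h] at h1
  have hM0 : (0:ℝ) ≤ M := le_trans (norm_nonneg _) (hbdd (Classical.arbitrary Ω))
  set f : EuclideanSpace ℝ (Fin n) → ℝ := fun v => ∫ ω, max ⟪v, ζ ω⟫ 0 ∂μ with hf
  have hmv : ∀ v : EuclideanSpace ℝ (Fin n), Measurable fun ω => ⟪v, ζ ω⟫ :=
    fun v => measurable_const.inner hmeas
  have habs : ∀ (v : EuclideanSpace ℝ (Fin n)) ω, |⟪v, ζ ω⟫| ≤ ‖v‖ * M := by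
    intro v ω
    exact (abs_real_inner_le_norm v (ζ ω)).trans
      (mul_le_mul_of_nonneg_left (hbdd ω) (norm_nonneg v))
  have hint : ∀ v : EuclideanSpace ℝ (Fin n),
      Integrable (fun ω => max ⟪v, ζ ω⟫ 0) μ := by
    intro v
    refine (integrable_const (‖v‖ * M)).mono'
      ((hmv v).max measurable_const).aestronglyMeasurable ?_
    filter_upwards with ω
    rw [Real.norm_eq_abs, abs_of_nonneg (le_max_right _ _)]
    exact max_le ((le_abs_self _).trans (habs v ω))
      (mul_nonneg (norm_nonneg v) hM0)
  -- f is Lipschitz, hence continuous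
  have hlip : LipschitzWith (Real.toNNReal M) f := by
    refine LipschitzWith.of_dist_le_mul fun v w => ?_
    rw [Real.dist_eq, hf]
    have hsub : (∫ ω, max ⟪v, ζ ω⟫ 0 ∂μ) - (∫ ω, max ⟪w, ζ ω⟫ 0 ∂μ)
        = ∫ ω, (max ⟪v, ζ ω⟫ 0 - max ⟪w, ζ ω⟫ 0) ∂μ := (integral_sub (hint v) (hint w)).symm
    rw [hsub]
    calc |∫ ω, (max ⟪v, ζ ω⟫ 0 - max ⟪w, ζ ω⟫ 0) ∂μ|
        ≤ ∫ ω, |max ⟪v, ζ ω⟫ 0 - max ⟪w, ζ ω⟫ 0| ∂μ := by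
          simpa [Real.norm_eq_abs] using
            norm_integral_le_integral_norm (fun ω => max ⟪v, ζ ω⟫ 0 - max ⟪w, ζ ω⟫ 0)
      _ ≤ ∫ _ω, M * dist v w ∂μ := by
          refine integral_mono (((hint v).sub (hint w)).abs) (integrable_const _) fun ω => ?_
          calc |max ⟪v, ζ ω⟫ 0 - max ⟪w, ζ ω⟫ 0| ≤ |⟪v, ζ ω⟫ - ⟪w, ζ ω⟫| :=
                abs_max_sub_max_le_abs _ _ _
            _ = |⟪v - w, ζ ω⟫| := by rw [inner_sub_left]
            _ ≤ ‖v - w‖ * M := habs (v - w) ω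
            _ = M * dist v w := by rw [dist_eq_norm]; ring
      _ = M * dist v w := by simp
      _ ≤ (Real.toNNReal M) * dist v w := by
          gcongr
          exact (Real.coe_toNNReal M hM0).symm.le
  -- f is positive off 0
  have hfpos : ∀ v : EuclideanSpace ℝ (Fin n), v ≠ 0 → 0 < f v := by
    intro v hv
    rw [hf]
    have hae : 0 ≤ᵐ[μ] fun ω => max ⟪v, ζ ω⟫ 0 := by
      filter_upwards with ω using le_max_right _ _
    rw [integral_pos_iff_support_of_nonneg_ae hae (hint v)]
    have hsupp : (Function.support fun ω => max ⟪v, ζ ω⟫ 0) = {ω | 0 < ⟪v, ζ ω⟫} := by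
      ext ω
      simp only [Function.mem_support, Set.mem_setOf_eq]
      constructor
      · intro h
        rcases lt_or_ge 0 ⟪v, ζ ω⟫ with h' | h'
        · exact h'
        · exact absurd (max_eq_right h') h
      · intro h
        rw [max_eq_left h.le]
        exact h.ne'
    rw [hsupp]
    exact hpos v hv
  -- minimum on the sphere
  have hsphere : (Metric.sphere (0 : EuclideanSpace ℝ (Fin n)) 1).Nonempty :=
    NormedSpace.sphere_nonempty.mpr zero_le_one
  obtain ⟨v₀, hv₀s, hmin⟩ :=
    (isCompact_sphere (0 : EuclideanSpace ℝ (Fin n)) 1).exists_isMinOn hsphere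
      hlip.continuous.continuousOn
  have hv₀ : ‖v₀‖ = 1 := by simpa using mem_sphere_zero_iff_norm.mp hv₀s
  have hc : 0 < f v₀ := hfpos v₀ (by intro h; rw [h] at hv₀; simp at hv₀)
  -- main bound : every t in the set has ‖t‖ ≤ a / f v₀
  have hsubset : {t : EuclideanSpace ℝ (Fin n) | (∫ ω, Real.exp ⟪t, ζ ω⟫ ∂μ) ≤ a}
      ⊆ Metric.closedBall 0 (a / f v₀) := by
    intro t ht
    simp only [Set.mem_setOf_eq] at ht
    rw [Metric.mem_closedBall, dist_zero_right]
    rcases eq_or_ne t 0 with rfl | ht0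
    · simp only [norm_zero]
      positivity
    · rw [le_div_iff₀ hc]
      -- f t ≤ ∫ exp
      have hexpint : Integrable (fun ω => Real.exp ⟪t, ζ ω⟫) μ := by
        refine (integrable_const (Real.exp (‖t‖ * M))).mono'
          (hmv t).exp.aestronglyMeasurable ?_
        filter_upwards with ω
        rw [Real.norm_eq_abs, abs_of_pos (Real.exp_pos _)]
        exact Real.exp_le_exp.mpr ((le_abs_self _).trans (habs t ω))
      have hft : f t ≤ ∫ ω, Real.exp ⟪t, ζ ω⟫ ∂μ := by
        refine integral_mono (hint t) hexpint fun ω => ?_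
        exact max_le (((le_add_of_nonneg_right zero_le_one).trans
          (Real.add_one_le_exp _))) (Real.exp_pos _).le
      -- homogeneity
      set u : EuclideanSpace ℝ (Fin n) := ‖t‖⁻¹ • t with hu
      have htn : (0:ℝ) < ‖t‖ := norm_pos_iff.mpr ht0
      have hun : ‖u‖ = 1 := by
        rw [hu, norm_smul, norm_inv, norm_norm, inv_mul_cancel₀ htn.ne']
      have hhom : f t = ‖t‖ * f u := by
        simp only [hf]
        rw [← integral_const_mul]
        refine integral_congr_ae (Filter.Eventually.of_forall fun ω => ?_)
        simp only [hu, real_inner_smul_left]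
        rw [mul_max_of_nonneg _ _ htn.le, mul_zero, mul_inv_cancel_left₀ htn.ne']
      have := hmin (mem_sphere_zero_iff_norm.mpr hun)
      calc ‖t‖ * f v₀ ≤ ‖t‖ * f u := by
            exact mul_le_mul_of_nonneg_left this htn.le
        _ = f t := hhom.symm
        _ ≤ a := hft.trans ht
  exact Metric.isBounded_closedBall.subset hsubset
end

section
/- The Legendre transform Λ*(z) = sup_{t ∈ ℝ^n}(⟨z,t⟩ − Λ(t)) is bounded on every bounded subset of ℝ^n and is continuous on ℝ^n. -/
open MeasureTheory Real
open scoped RealInnerProductSpace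

private lemma aux_exp (x : ℝ) (hx : 0 ≤ x) : x^2/4 ≤ Real.exp x := by
  have h2 : x/2 ≤ Real.exp (x/2) := by linarith [Real.add_one_le_exp (x/2)]
  have h3 : (x/2) * (x/2) ≤ Real.exp (x/2) * Real.exp (x/2) :=
    mul_le_mul h2 h2 (by linarith) (Real.exp_nonneg _)
  rw [← Real.exp_add, add_halves] at h3
  nlinarith [h3]

private lemma aux_quad (D s z : ℝ) (hD : 0 < D) : z * s ≤ D*s^2/4 + z^2/D := by
  rw [← sub_nonneg]
  have h : D*s^2/4 + z^2/D - z*s = (D*s - 2*z)^2/(4*D) := by field_simp; ring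
  rw [h]; positivity

/-- Let ζ be a bounded ℝ^n-valued random variable (n ≥ 1) with
P{⟨v,ζ⟩ > 0} > 0 for every v ≠ 0, λ > 0, Λ(t) = λ(E[e^{⟨t,ζ⟩}] − 1) and
Λ*(z) = sup_t (⟨z,t⟩ − Λ(t)).  Then Λ* is (well defined and) bounded on every
bounded subset of ℝ^n and continuous on ℝ^n. -/
theorem stmt6
    {Ω : Type*} [MeasurableSpace Ω] (μ : Measure Ω) [IsProbabilityMeasure μ]
    (n : ℕ) (hn : 1 ≤ n)
    (ζ : Ω → EuclideanSpace ℝ (Fin n)) (hmeas : Measurable ζ)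
    (M : ℝ) (hbdd : ∀ ω, ‖ζ ω‖ ≤ M)
    (hpos : ∀ v : EuclideanSpace ℝ (Fin n), v ≠ 0 → 0 < μ {ω | 0 < ⟪v, ζ ω⟫})
    (lam : ℝ) (hlam : 0 < lam)
    (Λ : EuclideanSpace ℝ (Fin n) → ℝ)
    (hΛ : ∀ t, Λ t = lam * ((∫ ω, Real.exp ⟪t, ζ ω⟫ ∂μ) - 1))
    (Λstar : EuclideanSpace ℝ (Fin n) → ℝ)
    (hΛstar : ∀ z, Λstar z = ⨆ t : EuclideanSpace ℝ (Fin n), (⟪z, t⟫ - Λ t)) :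
    (∀ z : EuclideanSpace ℝ (Fin n),
        BddAbove (Set.range fun t : EuclideanSpace ℝ (Fin n) => ⟪z, t⟫ - Λ t)) ∧
    (∀ s : Set (EuclideanSpace ℝ (Fin n)), Bornology.IsBounded s →
        ∃ C : ℝ, ∀ z ∈ s, |Λstar z| ≤ C) ∧
    Continuous Λstar := by
  classical
  have hΩ : Nonempty Ω := by
    by_contra h
    rw [not_nonempty_iff] at h
    have h0 : μ Set.univ = 0 := by
      rw [Set.univ_eq_empty_iff.2 h]; exact measure_empty
    rw [measure_univ] at h0
    exact one_ne_zero h0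
  have hM0 : 0 ≤ M := le_trans (norm_nonneg _) (hbdd hΩ.some)
  have hm : ∀ v : EuclideanSpace ℝ (Fin n), Measurable fun ω => ⟪v, ζ ω⟫ :=
    fun v => (continuous_const.inner continuous_id).measurable.comp hmeas
  have hint : ∀ t : EuclideanSpace ℝ (Fin n),
      Integrable (fun ω => Real.exp ⟪t, ζ ω⟫) μ := by
    intro t
    refine (integrable_const (Real.exp (‖t‖ * M))).mono'
      ((Real.continuous_exp.measurable.comp (hm t)).aestronglyMeasurable) ?_
    filter_upwards with ω
    rw [Real.norm_eq_abs, abs_of_pos (Real.exp_pos _), Real.exp_le_exp]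
    calc ⟪t, ζ ω⟫ ≤ ‖t‖ * ‖ζ ω‖ := real_inner_le_norm _ _
      _ ≤ ‖t‖ * M := mul_le_mul_of_nonneg_left (hbdd ω) (norm_nonneg t)
  -- per-direction positivity with a gap
  have keyA : ∀ v : EuclideanSpace ℝ (Fin n), ‖v‖ = 1 →
      ∃ ε : ℝ, 0 < ε ∧ 0 < μ {ω | ε ≤ ⟪v, ζ ω⟫} := by
    intro v hv
    by_contra h
    push_neg at h
    have hz : ∀ k : ℕ, μ {ω | (1:ℝ)/(k+1) ≤ ⟪v, ζ ω⟫} = 0 := by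
      intro k
      exact le_antisymm (h (1/(k+1)) (by positivity)) zero_le
    have hsub : {ω | 0 < ⟪v, ζ ω⟫} ⊆ ⋃ k : ℕ, {ω | (1:ℝ)/(k+1) ≤ ⟪v, ζ ω⟫} := by
      intro ω hω
      have hω' : 0 < ⟪v, ζ ω⟫ := hω
      obtain ⟨k, hk⟩ := exists_nat_one_div_lt hω'
      exact Set.mem_iUnion.2 ⟨k, hk.le⟩
    have hvne : v ≠ 0 := by
      intro h0; rw [h0, norm_zero] at hv; exact one_ne_zero hv.symm
    have h1 := hpos v hvne
    have h2 : μ {ω | 0 < ⟪v, ζ ω⟫} = 0 :=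
      measure_mono_null hsub (measure_iUnion_null hz)
    rw [h2] at h1; exact lt_irrefl _ h1
  -- compactness of the sphere: uniform gap and probability
  obtain ⟨εd, hεd, hμd⟩ :
      ∃ εd : {v : EuclideanSpace ℝ (Fin n) // ‖v‖ = 1} → ℝ,
        (∀ v, 0 < εd v) ∧ (∀ v, 0 < μ {ω | εd v ≤ ⟪v.1, ζ ω⟫}) := by
    choose εd h1 h2 using fun v : {v : EuclideanSpace ℝ (Fin n) // ‖v‖ = 1} =>
      keyA v.1 v.2
    exact ⟨εd, h1, h2⟩
  set δ : {v : EuclideanSpace ℝ (Fin n) // ‖v‖ = 1} → ℝ :=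
    fun v => εd v / (2 * (M + 1)) with hδdef
  have hδpos : ∀ v, 0 < δ v := fun v => by
    have := hεd v; rw [hδdef]; positivity
  have hcover : Metric.sphere (0 : EuclideanSpace ℝ (Fin n)) 1 ⊆
      ⋃ v : {v : EuclideanSpace ℝ (Fin n) // ‖v‖ = 1}, Metric.ball v.1 (δ v) := by
    intro w hw
    have hw1 : ‖w‖ = 1 := by rwa [mem_sphere_zero_iff_norm] at hw
    exact Set.mem_iUnion.2 ⟨⟨w, hw1⟩, Metric.mem_ball_self (hδpos _)⟩
  obtain ⟨T, hT⟩ := (isCompact_sphere (0 : EuclideanSpace ℝ (Fin n)) 1).elim_finite_subcover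
    (fun v : {v : EuclideanSpace ℝ (Fin n) // ‖v‖ = 1} => Metric.ball v.1 (δ v))
    (fun v => Metric.isOpen_ball) hcover
  have hTne : T.Nonempty := by
    by_contra h
    rw [Finset.not_nonempty_iff_eq_empty] at h
    have hs : (EuclideanSpace.single (⟨0, hn⟩ : Fin n) (1:ℝ)) ∈
        Metric.sphere (0 : EuclideanSpace ℝ (Fin n)) 1 := by
      rw [mem_sphere_zero_iff_norm, EuclideanSpace.norm_single]; norm_num
    have := hT hs
    simp [h] at this
  set ε₀ : ℝ := T.inf' hTne (fun v => εd v) with hε₀def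
  have hε₀pos : 0 < ε₀ := by
    rw [hε₀def, Finset.lt_inf'_iff]; exact fun v _ => hεd v
  set p₀ : ENNReal := T.inf' hTne (fun v => μ {ω | εd v ≤ ⟪v.1, ζ ω⟫}) with hp₀def
  have hp₀pos : 0 < p₀ := by
    rw [hp₀def, Finset.lt_inf'_iff]; exact fun v _ => hμd v
  set εf : ℝ := ε₀ / 2 with hεfdef
  have hεf : 0 < εf := by rw [hεfdef]; positivity
  set pr : ℝ := p₀.toReal with hprdef
  have hp₀top : p₀ ≠ ⊤ := by
    obtain ⟨v, hv⟩ := hTne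
    exact ne_top_of_le_ne_top (measure_ne_top μ _) (Finset.inf'_le _ hv)
  have hpr : 0 < pr := ENNReal.toReal_pos hp₀pos.ne' hp₀top
  have hpr1 : pr ≤ 1 := by
    obtain ⟨v, hv⟩ := hTne
    have h1 : p₀ ≤ μ Set.univ :=
      le_trans (Finset.inf'_le _ hv) (measure_mono (Set.subset_univ _))
    rw [measure_univ] at h1
    rw [hprdef]
    calc p₀.toReal ≤ (1 : ENNReal).toReal := ENNReal.toReal_mono (by simp) h1
      _ = 1 := by simp
  -- uniform lower bound on measures
  have unif : ∀ w : EuclideanSpace ℝ (Fin n), ‖w‖ = 1 →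
      pr ≤ (μ {ω | εf ≤ ⟪w, ζ ω⟫}).toReal := by
    intro w hw
    have hw' := hT (mem_sphere_zero_iff_norm.2 hw)
    simp only [Set.mem_iUnion] at hw'
    obtain ⟨v, hvT, hball⟩ := hw'
    rw [Metric.mem_ball, dist_eq_norm] at hball
    have hsub : {ω | εd v ≤ ⟪v.1, ζ ω⟫} ⊆ {ω | εf ≤ ⟪w, ζ ω⟫} := by
      intro ω hω
      simp only [Set.mem_setOf_eq] at hω ⊢
      have he : v.1 + (w - v.1) = w := by abel
      have h1 : ⟪w, ζ ω⟫ = ⟪v.1, ζ ω⟫ + ⟪w - v.1, ζ ω⟫ := by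
        rw [← inner_add_left, he]
      have h2 : |⟪w - v.1, ζ ω⟫| ≤ ‖w - v.1‖ * ‖ζ ω‖ := abs_real_inner_le_norm _ _
      have h3 : ‖w - v.1‖ * ‖ζ ω‖ ≤ δ v * M :=
        mul_le_mul hball.le (hbdd ω) (norm_nonneg _) (hδpos v).le
      have h4 : δ v * M ≤ εd v / 2 := by
        rw [hδdef]
        rw [div_mul_eq_mul_div, div_le_div_iff₀ (by positivity) (by norm_num : (0:ℝ) < 2)]
        nlinarith [hεd v]
      have h5 : ε₀ ≤ εd v := Finset.inf'_le _ hvT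
      have h6 : -(δ v * M) ≤ ⟪w - v.1, ζ ω⟫ := neg_le_of_abs_le (h2.trans h3)
      rw [hεfdef, h1]
      linarith
    calc pr ≤ (μ {ω | εd v ≤ ⟪v.1, ζ ω⟫}).toReal := by
          rw [hprdef]
          exact ENNReal.toReal_mono (measure_ne_top μ _) (Finset.inf'_le _ hvT)
      _ ≤ (μ {ω | εf ≤ ⟪w, ζ ω⟫}).toReal :=
          ENNReal.toReal_mono (measure_ne_top μ _) (measure_mono hsub)
  -- lower bound on the mgf
  have hlow : ∀ t : EuclideanSpace ℝ (Fin n),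
      pr * Real.exp (εf * ‖t‖) ≤ ∫ ω, Real.exp ⟪t, ζ ω⟫ ∂μ := by
    intro t
    rcases eq_or_ne t 0 with rfl | ht
    · simp only [norm_zero, mul_zero, Real.exp_zero, mul_one]
      have h1 : ∀ ω, Real.exp ⟪(0 : EuclideanSpace ℝ (Fin n)), ζ ω⟫ = 1 := by
        intro ω; rw [inner_zero_left, Real.exp_zero]
      rw [show (fun ω => Real.exp ⟪(0 : EuclideanSpace ℝ (Fin n)), ζ ω⟫) =
          fun _ => (1:ℝ) from funext h1]
      rw [integral_const, probReal_univ]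
      simpa using hpr1
    · set v : EuclideanSpace ℝ (Fin n) := ‖t‖⁻¹ • t with hvdef
      have hnt : 0 < ‖t‖ := norm_pos_iff.2 ht
      have hv1 : ‖v‖ = 1 := by
        rw [hvdef, norm_smul, norm_inv, norm_norm, inv_mul_cancel₀ hnt.ne']
      have hA : MeasurableSet {ω | εf ≤ ⟪v, ζ ω⟫} :=
        measurableSet_le measurable_const (hm v)
      have hAμ := unif v hv1
      have htv : ∀ x : EuclideanSpace ℝ (Fin n), ⟪t, x⟫ = ‖t‖ * ⟪v, x⟫ := by
        intro x
        rw [hvdef, real_inner_smul_left]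
        field_simp
      have hpt : ∀ ω, ({ω | εf ≤ ⟪v, ζ ω⟫}.indicator
          (fun _ => Real.exp (εf * ‖t‖))) ω ≤ Real.exp ⟪t, ζ ω⟫ := by
        intro ω
        by_cases hω : ω ∈ {ω | εf ≤ ⟪v, ζ ω⟫}
        · rw [Set.indicator_of_mem hω, Real.exp_le_exp, htv]
          calc εf * ‖t‖ = ‖t‖ * εf := mul_comm _ _
            _ ≤ ‖t‖ * ⟪v, ζ ω⟫ := mul_le_mul_of_nonneg_left hω hnt.le
        · rw [Set.indicator_of_notMem hω]; exact (Real.exp_pos _).le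
      have hI : ∫ ω, ({ω | εf ≤ ⟪v, ζ ω⟫}.indicator
          (fun _ => Real.exp (εf * ‖t‖))) ω ∂μ ≤ ∫ ω, Real.exp ⟪t, ζ ω⟫ ∂μ :=
        integral_mono ((integrable_const _).indicator hA) (hint t) hpt
      rw [integral_indicator_const _ hA, smul_eq_mul] at hI
      calc pr * Real.exp (εf * ‖t‖)
          ≤ (μ {ω | εf ≤ ⟪v, ζ ω⟫}).toReal * Real.exp (εf * ‖t‖) :=
            mul_le_mul_of_nonneg_right hAμ (Real.exp_nonneg _)
        _ ≤ _ := hI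
  -- the upper bound
  have hub : ∀ z t : EuclideanSpace ℝ (Fin n),
      ⟪z, t⟫ - Λ t ≤ lam + ‖z‖^2 / (lam * pr * εf^2) := by
    intro z t
    have h1 := hlow t
    have hiz : ⟪z, t⟫ ≤ ‖z‖ * ‖t‖ := real_inner_le_norm _ _
    have hexp := aux_exp (εf * ‖t‖) (by positivity)
    have key := aux_quad (lam * pr * εf^2) ‖t‖ ‖z‖ (by positivity)
    have h4 : lam * pr * ((εf * ‖t‖)^2/4) ≤ lam * pr * Real.exp (εf * ‖t‖) :=
      mul_le_mul_of_nonneg_left hexp (by positivity)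
    have h2 : lam * (pr * Real.exp (εf * ‖t‖)) ≤
        lam * ∫ ω, Real.exp ⟪t, ζ ω⟫ ∂μ :=
      mul_le_mul_of_nonneg_left h1 hlam.le
    rw [hΛ t]
    nlinarith [h4, h2, key, hiz]
  have hbd : ∀ z : EuclideanSpace ℝ (Fin n),
      BddAbove (Set.range fun t : EuclideanSpace ℝ (Fin n) => ⟪z, t⟫ - Λ t) := by
    intro z
    refine ⟨lam + ‖z‖^2 / (lam * pr * εf^2), ?_⟩
    rintro a ⟨t, rfl⟩
    exact hub z t
  have hΛ0 : Λ 0 = 0 := by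
    rw [hΛ]
    have h1 : ∀ ω, Real.exp ⟪(0 : EuclideanSpace ℝ (Fin n)), ζ ω⟫ = 1 := by
      intro ω; rw [inner_zero_left, Real.exp_zero]
    rw [show (fun ω => Real.exp ⟪(0 : EuclideanSpace ℝ (Fin n)), ζ ω⟫) =
        fun _ => (1:ℝ) from funext h1]
    rw [integral_const, probReal_univ]
    simp
  have hΛstar0 : ∀ z, 0 ≤ Λstar z := by
    intro z
    rw [hΛstar]
    have h1 := le_ciSup (hbd z) (0 : EuclideanSpace ℝ (Fin n))
    simpa [hΛ0] using h1
  have hΛstarle : ∀ z, Λstar z ≤ lam + ‖z‖^2 / (lam * pr * εf^2) := by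
    intro z
    rw [hΛstar]
    exact ciSup_le (hub z)
  refine ⟨hbd, ?_, ?_⟩
  · intro s hs
    obtain ⟨R, hR⟩ := hs.exists_norm_le
    refine ⟨lam + R^2 / (lam * pr * εf^2), ?_⟩
    intro z hz
    have hzR := hR z hz
    have hz2 : ‖z‖^2 ≤ R^2 := by nlinarith [norm_nonneg z]
    have hle : Λstar z ≤ lam + R^2 / (lam * pr * εf^2) := by
      refine (hΛstarle z).trans ?_
      have : ‖z‖^2 / (lam * pr * εf^2) ≤ R^2 / (lam * pr * εf^2) :=
        div_le_div_of_nonneg_right hz2 (by positivity) |>.trans_eq rfl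
      linarith
    rw [abs_of_nonneg (hΛstar0 z)]
    exact hle
  · have hconv : ConvexOn ℝ Set.univ Λstar := by
      refine ⟨convex_univ, ?_⟩
      intro x _ y _ a b ha hb hab
      rw [hΛstar (a • x + b • y)]
      refine ciSup_le fun t => ?_
      have h1 : ⟪x, t⟫ - Λ t ≤ Λstar x := by
        rw [hΛstar]; exact le_ciSup (hbd x) t
      have h2 : ⟪y, t⟫ - Λ t ≤ Λstar y := by
        rw [hΛstar]; exact le_ciSup (hbd y) t
      have h3 : ⟪a • x + b • y, t⟫ = a * ⟪x, t⟫ + b * ⟪y, t⟫ := by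
        rw [inner_add_left, real_inner_smul_left, real_inner_smul_left]
      have h4 : a * Λ t + b * Λ t = Λ t := by rw [← add_mul, hab, one_mul]
      have h5 := mul_le_mul_of_nonneg_left h1 ha
      have h6 := mul_le_mul_of_nonneg_left h2 hb
      simp only [smul_eq_mul]
      rw [h3]
      linarith
    have hcont := hconv.continuousOn isOpen_univ
    exact continuousOn_univ.mp hcont
end

section
/- There exists η > 0 such that P{⟨v,ζ⟩ > η} > η for every v ∈ ℝ^n with |v| = 1. -/
open MeasureTheory Real
open scoped RealInnerProductSpace

/-- Let ζ be a bounded ℝ^n-valued random variable (n ≥ 1) such that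
P{⟨v,ζ⟩ > 0} > 0 for every v ≠ 0. Then there exists η > 0 such that
P{⟨v,ζ⟩ > η} > η for every unit vector v. -/
theorem stmt7
    {Ω : Type*} [MeasurableSpace Ω] (μ : Measure Ω) [IsProbabilityMeasure μ]
    (n : ℕ) (hn : 1 ≤ n)
    (ζ : Ω → EuclideanSpace ℝ (Fin n)) (hmeas : Measurable ζ)
    (M : ℝ) (hbdd : ∀ ω, ‖ζ ω‖ ≤ M)
    (hpos : ∀ v : EuclideanSpace ℝ (Fin n), v ≠ 0 → 0 < μ {ω | 0 < ⟪v, ζ ω⟫}) :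
    ∃ η > (0 : ℝ), ∀ v : EuclideanSpace ℝ (Fin n), ‖v‖ = 1 →
      ENNReal.ofReal η < μ {ω | η < ⟪v, ζ ω⟫} := by
  classical
  -- Step 1: a pointwise η for each nonzero v
  have key : ∀ v : EuclideanSpace ℝ (Fin n), v ≠ 0 →
      ∃ e > (0:ℝ), ENNReal.ofReal e < μ {ω | e < ⟪v, ζ ω⟫} := by
    intro v hv
    have hU : {ω | 0 < ⟪v, ζ ω⟫} ⊆ ⋃ k : ℕ, {ω | 1/(k+1 : ℝ) < ⟪v, ζ ω⟫} := by
      intro ω hω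
      have hωr : (0:ℝ) < ⟪v, ζ ω⟫ := hω
      obtain ⟨k, hk⟩ := exists_nat_one_div_lt hωr
      exact Set.mem_iUnion.2 ⟨k, by exact_mod_cast hk⟩
    have h0 := hpos v hv
    have hex : ∃ k : ℕ, 0 < μ {ω | 1/(k+1 : ℝ) < ⟪v, ζ ω⟫} := by
      by_contra h
      push_neg at h
      simp only [nonpos_iff_eq_zero] at h
      have hle := (measure_mono hU).trans_eq (measure_iUnion_null h)
      exact absurd (le_antisymm hle zero_le) h0.ne'
    obtain ⟨k, hk⟩ := hex
    set a := μ {ω | 1/(k+1 : ℝ) < ⟪v, ζ ω⟫} with ha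
    have ha1 : a ≠ ⊤ := (measure_lt_top μ _).ne
    have hat : 0 < a.toReal := ENNReal.toReal_pos hk.ne' ha1
    refine ⟨min (1/(k+1)) (a.toReal/2), by positivity, ?_⟩
    have h1 : ENNReal.ofReal (min (1/(k+1:ℝ)) (a.toReal/2)) ≤ ENNReal.ofReal (a.toReal/2) :=
      ENNReal.ofReal_le_ofReal (min_le_right _ _)
    have h2 : ENNReal.ofReal (a.toReal/2) < a := by
      conv_rhs => rw [← ENNReal.ofReal_toReal ha1]
      exact ENNReal.ofReal_lt_ofReal_iff hat |>.2 (half_lt_self hat)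
    have h3 : a ≤ μ {ω | min (1/(k+1:ℝ)) (a.toReal/2) < ⟪v, ζ ω⟫} := by
      apply measure_mono
      intro ω hω
      simp only [Set.mem_setOf_eq] at hω ⊢
      exact (min_le_left _ _).trans_lt hω
    exact h1.trans_lt (h2.trans_le h3)
  choose e he hμe using key
  -- totalize
  set e' : EuclideanSpace ℝ (Fin n) → ℝ := fun v => if h : v ≠ 0 then e v h else 1 with he'
  have he'pos : ∀ v, 0 < e' v := by
    intro v
    rcases eq_or_ne v 0 with h | h
    · simp [he', h]
    · simp only [he', dif_pos h]; exact he v h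
  have hμe' : ∀ v : EuclideanSpace ℝ (Fin n), v ≠ 0 →
      ENNReal.ofReal (e' v) < μ {ω | e' v < ⟪v, ζ ω⟫} := by
    intro v h
    simp only [he', dif_pos h]
    exact hμe v h
  set M' : ℝ := max M 1 with hM'
  have hM'pos : (0:ℝ) < M' := lt_of_lt_of_le one_pos (le_max_right _ _)
  have hbdd' : ∀ ω, ‖ζ ω‖ ≤ M' := fun ω => (hbdd ω).trans (le_max_left _ _)
  -- geometric lemma
  have geom : ∀ v w : EuclideanSpace ℝ (Fin n), ‖w - v‖ ≤ e' v / (2 * M') →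
      ∀ ω, e' v < ⟪v, ζ ω⟫ → e' v / 2 < ⟪w, ζ ω⟫ := by
    intro v w hwv ω hω
    have h1 : ⟪w, ζ ω⟫ = ⟪v, ζ ω⟫ + ⟪w - v, ζ ω⟫ := by
      rw [← inner_add_left]; congr 1; abel
    have h2 : |⟪w - v, ζ ω⟫| ≤ ‖w - v‖ * ‖ζ ω‖ := abs_real_inner_le_norm _ _
    have h3 : ‖w - v‖ * ‖ζ ω‖ ≤ (e' v / (2 * M')) * M' :=
      mul_le_mul hwv (hbdd' ω) (norm_nonneg _)
        (le_of_lt (div_pos (he'pos v) (by positivity)))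
    have h4 : (e' v / (2 * M')) * M' = e' v / 2 := by
      field_simp
    have h5 : -(e' v / 2) ≤ ⟪w - v, ζ ω⟫ := by
      have := (abs_le.1 (h2.trans (h3.trans_eq h4))).1
      linarith
    rw [h1]
    linarith
  -- compactness
  have hcomp : IsCompact (Metric.sphere (0 : EuclideanSpace ℝ (Fin n)) 1) :=
    isCompact_sphere 0 1
  obtain ⟨t, hts, hcov⟩ := hcomp.elim_nhds_subcover
      (fun v => Metric.ball v (e' v / (2 * M')))
      (fun v _ => Metric.ball_mem_nhds v (div_pos (he'pos v) (by positivity)))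
  -- sphere nonempty, hence t nonempty
  have hsph : (EuclideanSpace.single (⟨0, hn⟩ : Fin n) (1:ℝ)) ∈
      Metric.sphere (0 : EuclideanSpace ℝ (Fin n)) 1 := by
    simp [EuclideanSpace.norm_single]
  have htne : t.Nonempty := by
    rcases Set.mem_iUnion₂.1 (hcov hsph) with ⟨v, hv, _⟩
    exact ⟨v, hv⟩
  set η : ℝ := t.inf' htne (fun v => e' v / 2) with hηdef
  have hηpos : 0 < η := by
    rw [hηdef, Finset.lt_inf'_iff]
    intro v _
    exact half_pos (he'pos v)
  refine ⟨η, hηpos, ?_⟩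
  intro w hw
  have hwmem : w ∈ Metric.sphere (0 : EuclideanSpace ℝ (Fin n)) 1 := by
    simp [Metric.mem_sphere, dist_eq_norm, hw]
  rcases Set.mem_iUnion₂.1 (hcov hwmem) with ⟨v, hvt, hball⟩
  have hvne : v ≠ 0 := by
    have : v ∈ Metric.sphere (0 : EuclideanSpace ℝ (Fin n)) 1 := hts v hvt
    intro h
    rw [h] at this
    simp at this
  have hdist : ‖w - v‖ ≤ e' v / (2 * M') := le_of_lt (by
    rwa [Metric.mem_ball, dist_eq_norm] at hball)
  have hle1 : η ≤ e' v / 2 := Finset.inf'_le _ hvt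
  have hsub : {ω | e' v < ⟪v, ζ ω⟫} ⊆ {ω | η < ⟪w, ζ ω⟫} := by
    intro ω hω
    exact lt_of_le_of_lt hle1 (geom v w hdist ω hω)
  calc ENNReal.ofReal η ≤ ENNReal.ofReal (e' v) :=
        ENNReal.ofReal_le_ofReal (hle1.trans (by linarith [he'pos v]))
    _ < μ {ω | e' v < ⟪v, ζ ω⟫} := hμe' v hvne
    _ ≤ μ {ω | η < ⟪w, ζ ω⟫} := measure_mono hsub
end

section
/- Let θ ∈ ℝ^n satisfy ⟨𝟙,θ⟩ > λE[⟨𝟙,ζ⟩], where 𝟙 = (1,…,1), and suppose P{⟨𝟙,ζ⟩ > 0} > 0. Then for every z ∈ ℝ^n with z ≥ θ, one has Λ*(z) ≥ sup_{t ≥ 0} { t⟨𝟙,θ⟩ − λ(E[e^{t⟨𝟙,ζ⟩}] − 1) } > 0; in particular inf_{z ≥ θ} Λ*(z) > 0. -/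
open MeasureTheory Real
open scoped RealInnerProductSpace

lemma aux_t0K (t0 K : ℝ) (hK0 : 0 ≤ K) (h1 : t0 ≤ 1 / (K + 1)) : t0 * K ≤ 1 := by
  have hK1 : (0:ℝ) < K + 1 := by linarith
  have h2 : (1 / (K + 1)) * (K + 1) = 1 := by field_simp
  nlinarith [mul_nonneg (sub_nonneg.2 h1) hK0, h2, div_nonneg zero_le_one hK1.le]

lemma aux_t0d (t0 d lam K : ℝ) (hlam : 0 < lam) (hd : 0 < d)
    (h1 : t0 ≤ d / (2 * lam * (K ^ 2 + 1))) : 3/4 * lam * K ^ 2 * t0 ≤ d / 2 := by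
  have hden : (0:ℝ) < 2 * lam * (K ^ 2 + 1) := mul_pos (by linarith) (by positivity)
  have h2 : (d / (2 * lam * (K ^ 2 + 1))) * (2 * lam * (K ^ 2 + 1)) = d := by
    field_simp
  have hq : (0:ℝ) ≤ d / (2 * lam * (K ^ 2 + 1)) := div_nonneg hd.le hden.le
  nlinarith [mul_nonneg (mul_nonneg hlam.le (sq_nonneg K)) (sub_nonneg.2 h1),
    mul_nonneg (mul_nonneg hlam.le (sq_nonneg K)) hq, mul_nonneg hlam.le hq, h2]

lemma exp_le_quad_aux {u : ℝ} (h : |u| ≤ 1) : Real.exp u ≤ 1 + u + 3/4 * u ^ 2 := by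
  have hb := Real.exp_bound h (by norm_num : 0 < 2)
  rw [Finset.sum_range_succ, Finset.sum_range_succ, Finset.sum_range_zero] at hb
  norm_num at hb
  have h2 := (abs_le.1 hb).2
  have h3 : |u| ^ 2 = u ^ 2 := sq_abs u
  nlinarith [h2, h3]

set_option maxHeartbeats 2000000 in
/-- Let ζ be a bounded ℝ^n-valued random variable, λ > 0,
Λ(t) = λ(E[e^{⟨t,ζ⟩}] − 1), Λ*(z) = sup_t (⟨z,t⟩ − Λ(t)). Let θ satisfy
⟨𝟙,θ⟩ > λE[⟨𝟙,ζ⟩] and P{⟨𝟙,ζ⟩ > 0} > 0. Then for every z ≥ θ (componentwise),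
Λ*(z) ≥ sup_{t ≥ 0} { t⟨𝟙,θ⟩ − λ(E[e^{t⟨𝟙,ζ⟩}] − 1) } > 0; in particular
inf_{z ≥ θ} Λ*(z) > 0. -/
theorem stmt9
    {Ω : Type*} [MeasurableSpace Ω] (μ : Measure Ω) [IsProbabilityMeasure μ]
    (n : ℕ) (hn : 1 ≤ n)
    (ζ : Ω → EuclideanSpace ℝ (Fin n)) (hmeas : Measurable ζ)
    (M : ℝ) (hbdd : ∀ ω, ‖ζ ω‖ ≤ M)
    (lam : ℝ) (hlam : 0 < lam)
    (Λ : EuclideanSpace ℝ (Fin n) → ℝ)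
    (hΛ : ∀ t, Λ t = lam * ((∫ ω, Real.exp ⟪t, ζ ω⟫ ∂μ) - 1))
    (Λstar : EuclideanSpace ℝ (Fin n) → EReal)
    (hΛstar : ∀ z, Λstar z
      = ⨆ t : EuclideanSpace ℝ (Fin n), ((⟪z, t⟫ - Λ t : ℝ) : EReal))
    (ones : EuclideanSpace ℝ (Fin n)) (hones : ∀ j, ones j = 1)
    (θ : EuclideanSpace ℝ (Fin n))
    (hθ : lam * (∫ ω, ⟪ones, ζ ω⟫ ∂μ) < ⟪ones, θ⟫)
    (hpos : 0 < μ {ω | 0 < ⟪ones, ζ ω⟫})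
    (S : Set ℝ)
    (hS : S = {x : ℝ | ∃ t : ℝ, 0 ≤ t ∧
        x = t * ⟪ones, θ⟫ - lam * ((∫ ω, Real.exp (t * ⟪ones, ζ ω⟫) ∂μ) - 1)}) :
    (0 < sSup S) ∧
    (∀ z : EuclideanSpace ℝ (Fin n), (∀ j, θ j ≤ z j) → ((sSup S : ℝ) : EReal) ≤ Λstar z) ∧
    (0 < ⨅ z : {z : EuclideanSpace ℝ (Fin n) // ∀ j, θ j ≤ z j}, Λstar z) := by
  -- basic notations
  have hXmeas : Measurable fun ω => ⟪ones, ζ ω⟫ := by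
    have hc : Continuous fun x : EuclideanSpace ℝ (Fin n) => ⟪ones, x⟫ :=
      continuous_const.inner continuous_id
    exact hc.measurable.comp hmeas
  set K : ℝ := ‖ones‖ * M with hKdef
  have hM0 : ∀ ω, |⟪ones, ζ ω⟫| ≤ K := by
    intro ω
    refine (abs_real_inner_le_norm _ _).trans ?_
    have := hbdd ω
    nlinarith [norm_nonneg ones, norm_nonneg (ζ ω)]
  obtain ⟨ω₀, hω₀⟩ : Set.Nonempty {ω | 0 < ⟪ones, ζ ω⟫} :=
    nonempty_of_measure_ne_zero hpos.ne'
  have hK0 : 0 ≤ K := le_trans (abs_nonneg _) (hM0 ω₀)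
  -- integrability facts
  have hint : ∀ t : ℝ, Integrable (fun ω => Real.exp (t * ⟪ones, ζ ω⟫)) μ := by
    intro t
    refine ⟨(Real.measurable_exp.comp (hXmeas.const_mul t)).aestronglyMeasurable, ?_⟩
    refine HasFiniteIntegral.of_bounded (C := Real.exp (|t| * K)) ?_
    filter_upwards with ω
    rw [Real.norm_eq_abs, abs_of_pos (Real.exp_pos _)]
    apply Real.exp_le_exp.2
    have h1 := hM0 ω
    have h2 := le_abs_self (t * ⟪ones, ζ ω⟫)
    have h3 := abs_mul t ⟪ones, ζ ω⟫
    nlinarith [abs_nonneg t, abs_nonneg ⟪ones, ζ ω⟫]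
  have hXint : Integrable (fun ω => ⟪ones, ζ ω⟫) μ := by
    refine ⟨hXmeas.aestronglyMeasurable, HasFiniteIntegral.of_bounded (C := K) ?_⟩
    filter_upwards with ω
    exact (Real.norm_eq_abs _).le.trans (hM0 ω) |>.trans le_rfl
  have hX2int : Integrable (fun ω => ⟪ones, ζ ω⟫ ^ 2) μ := by
    refine ⟨(hXmeas.pow_const 2).aestronglyMeasurable,
      HasFiniteIntegral.of_bounded (C := K ^ 2) ?_⟩
    filter_upwards with ω
    rw [Real.norm_eq_abs]
    calc |⟪ones, ζ ω⟫ ^ 2| = |⟪ones, ζ ω⟫| ^ 2 := abs_pow _ 2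
      _ ≤ K ^ 2 := pow_le_pow_left₀ (abs_nonneg _) (hM0 ω) 2
  -- 0 ∈ S
  have h0S : (0 : ℝ) ∈ S := by
    rw [hS]
    refine ⟨0, le_refl 0, ?_⟩
    simp [measure_univ]
  have hne : S.Nonempty := ⟨0, h0S⟩
  -- positive mass above a positive level
  obtain ⟨k, hk⟩ : ∃ k : ℕ, μ {ω | 1 / (k + 1 : ℝ) ≤ ⟪ones, ζ ω⟫} ≠ 0 := by
    by_contra h
    push_neg at h
    have hsub : {ω | 0 < ⟪ones, ζ ω⟫} ⊆
        ⋃ k : ℕ, {ω | 1 / (k + 1 : ℝ) ≤ ⟪ones, ζ ω⟫} := by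
      intro ω hω
      obtain ⟨k, hk⟩ := exists_nat_one_div_lt (show (0:ℝ) < ⟪ones, ζ ω⟫ from hω)
      exact Set.mem_iUnion.2 ⟨k, hk.le⟩
    exact hpos.ne' (measure_mono_null hsub (measure_iUnion_null h))
  set c : ℝ := 1 / (k + 1 : ℝ) with hcdef
  have hc : 0 < c := by positivity
  set A : Set Ω := {ω | c ≤ ⟪ones, ζ ω⟫} with hAdef
  have hAmeas : MeasurableSet A := measurableSet_le measurable_const hXmeas
  set p : ℝ := (μ A).toReal with hpdef
  have hp : 0 < p := ENNReal.toReal_pos hk (measure_ne_top μ A)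
  -- lower bound on the mgf
  have hlow : ∀ t : ℝ, 0 ≤ t →
      p * Real.exp (t * c) ≤ ∫ ω, Real.exp (t * ⟪ones, ζ ω⟫) ∂μ := by
    intro t ht
    have h1 : ∫ ω, A.indicator (fun _ => Real.exp (t * c)) ω ∂μ
        = (μ A).toReal • Real.exp (t * c) := integral_indicator_const _ hAmeas
    have h2 : ∀ ω, A.indicator (fun _ => Real.exp (t * c)) ω
        ≤ Real.exp (t * ⟪ones, ζ ω⟫) := by
      intro ω
      by_cases hω : ω ∈ A
      · rw [Set.indicator_of_mem hω]
        exact Real.exp_le_exp.2 (mul_le_mul_of_nonneg_left hω ht)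
      · rw [Set.indicator_of_notMem hω]
        exact (Real.exp_pos _).le
    calc p * Real.exp (t * c) = ∫ ω, A.indicator (fun _ => Real.exp (t * c)) ω ∂μ := by
          rw [h1, smul_eq_mul, hpdef]
      _ ≤ _ := integral_mono ((integrable_const _).indicator hAmeas) (hint t) h2
  -- S is bounded above
  set A0 : ℝ := ⟪ones, θ⟫ with hA0def
  set a : ℝ := lam * p * c ^ 2 / 2 with hadef
  have ha : 0 < a := by positivity
  set b : ℝ := A0 ^ 2 / (4 * a) with hbdef
  have hab : a * (4 * b) = A0 ^ 2 := by
    rw [hbdef]; field_simp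
  have hbddS : BddAbove S := by
    refine ⟨lam + b, ?_⟩
    rintro x hx
    rw [hS] at hx
    obtain ⟨t, ht, rfl⟩ := hx
    have h1 := hlow t ht
    have h2 : 1 + t * c + (t * c) ^ 2 / 2 ≤ Real.exp (t * c) := by
      have h := Real.sum_le_exp_of_nonneg (mul_nonneg ht hc.le) 3
      rw [Finset.sum_range_succ, Finset.sum_range_succ, Finset.sum_range_succ,
        Finset.sum_range_zero] at h
      norm_num at h
      linarith
    have h3 : p * (1 + t * c + (t * c) ^ 2 / 2) ≤ p * Real.exp (t * c) :=
      mul_le_mul_of_nonneg_left h2 hp.le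
    have h4 : p * (1 + t * c + (t * c) ^ 2 / 2)
        ≤ ∫ ω, Real.exp (t * ⟪ones, ζ ω⟫) ∂μ := h3.trans h1
    have key : t * A0 - a * t ^ 2 ≤ b := by
      nlinarith [sq_nonneg (A0 - 2 * a * t), ha, hab, mul_pos ha ha]
    have haT : a * t ^ 2 = lam * (p * (t * c) ^ 2 / 2) := by rw [hadef]; ring
    have h5 := mul_le_mul_of_nonneg_left h4 hlam.le
    have h6 : 0 ≤ lam * (p * (t * c)) :=
      mul_nonneg hlam.le (mul_nonneg hp.le (mul_nonneg ht hc.le))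
    nlinarith [key, h5, haT, h6, mul_pos hlam hp]
  -- upper bound on the mgf for small t
  set EX : ℝ := ∫ ω, ⟪ones, ζ ω⟫ ∂μ with hEXdef
  set d : ℝ := A0 - lam * EX with hddef
  have hd : 0 < d := by rw [hddef]; linarith [hθ]
  have hEX2 : ∫ ω, ⟪ones, ζ ω⟫ ^ 2 ∂μ ≤ K ^ 2 := by
    calc ∫ ω, ⟪ones, ζ ω⟫ ^ 2 ∂μ ≤ ∫ _, K ^ 2 ∂μ := by
          refine integral_mono hX2int (integrable_const _) fun ω => ?_
          have h := pow_le_pow_left₀ (abs_nonneg _) (hM0 ω) 2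
          rwa [sq_abs] at h
      _ = K ^ 2 := by simp [measure_univ]
  have hupper : ∀ t : ℝ, 0 ≤ t → t * K ≤ 1 →
      ∫ ω, Real.exp (t * ⟪ones, ζ ω⟫) ∂μ ≤ 1 + t * EX + 3/4 * t ^ 2 * K ^ 2 := by
    intro t ht htK
    have hpt : ∀ ω, Real.exp (t * ⟪ones, ζ ω⟫)
        ≤ 1 + t * ⟪ones, ζ ω⟫ + 3/4 * t ^ 2 * ⟪ones, ζ ω⟫ ^ 2 := by
      intro ω
      have habs : |t * ⟪ones, ζ ω⟫| ≤ 1 := by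
        rw [abs_mul, abs_of_nonneg ht]
        calc t * |⟪ones, ζ ω⟫| ≤ t * K := mul_le_mul_of_nonneg_left (hM0 ω) ht
          _ ≤ 1 := htK
      have hq := exp_le_quad_aux habs
      have heq : 3/4 * (t * ⟪ones, ζ ω⟫) ^ 2 = 3/4 * t ^ 2 * ⟪ones, ζ ω⟫ ^ 2 := by ring
      linarith [hq, heq]
    have hR : Integrable
        (fun ω => 1 + t * ⟪ones, ζ ω⟫ + 3/4 * t ^ 2 * ⟪ones, ζ ω⟫ ^ 2) μ :=
      ((integrable_const 1).add (hXint.const_mul t)).add (hX2int.const_mul (3/4 * t ^ 2))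
    calc ∫ ω, Real.exp (t * ⟪ones, ζ ω⟫) ∂μ
        ≤ ∫ ω, (1 + t * ⟪ones, ζ ω⟫ + 3/4 * t ^ 2 * ⟪ones, ζ ω⟫ ^ 2) ∂μ :=
          integral_mono (hint t) hR hpt
      _ = 1 + t * EX + 3/4 * t ^ 2 * (∫ ω, ⟪ones, ζ ω⟫ ^ 2 ∂μ) := by
          have e1 : ∫ ω, (1 + t * ⟪ones, ζ ω⟫ + 3/4 * t ^ 2 * ⟪ones, ζ ω⟫ ^ 2) ∂μ
              = (∫ ω, (1 + t * ⟪ones, ζ ω⟫) ∂μ)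
                + ∫ ω, 3/4 * t ^ 2 * ⟪ones, ζ ω⟫ ^ 2 ∂μ :=
            integral_add ((integrable_const 1).add (hXint.const_mul t))
              (hX2int.const_mul (3/4 * t ^ 2))
          have e2 : ∫ ω, (1 + t * ⟪ones, ζ ω⟫) ∂μ
              = (∫ _, (1:ℝ) ∂μ) + ∫ ω, t * ⟪ones, ζ ω⟫ ∂μ :=
            integral_add (integrable_const 1) (hXint.const_mul t)
          rw [e1, e2, integral_const, integral_const_mul, integral_const_mul]
          simp [measure_univ, hEXdef]
      _ ≤ 1 + t * EX + 3/4 * t ^ 2 * K ^ 2 := by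
          have h9 : (0:ℝ) ≤ 3/4 * t ^ 2 := by positivity
          have h10 := mul_le_mul_of_nonneg_left hEX2 h9
          linarith
  -- choose a good small t₀
  clear_value K c A p A0 a b EX d
  set t0 : ℝ := min (d / (2 * lam * (K ^ 2 + 1))) (1 / (K + 1)) with ht0def
  have hden : (0:ℝ) < 2 * lam * (K ^ 2 + 1) :=
    mul_pos (by linarith) (by positivity)
  have hK1 : (0:ℝ) < K + 1 := by linarith
  have ht0 : 0 < t0 := lt_min (div_pos hd hden) (div_pos one_pos hK1)
  have ht0K : t0 * K ≤ 1 := aux_t0K t0 K hK0 (min_le_right _ _)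
  have ht0d : 3/4 * lam * K ^ 2 * t0 ≤ d / 2 :=
    aux_t0d t0 d lam K hlam hd (min_le_left _ _)
  clear_value t0
  have hx0 : t0 * A0 - lam * ((∫ ω, Real.exp (t0 * ⟪ones, ζ ω⟫) ∂μ) - 1) ∈ S := by
    rw [hS]; exact ⟨t0, ht0.le, rfl⟩
  have hx0pos : 0 < t0 * A0 - lam * ((∫ ω, Real.exp (t0 * ⟪ones, ζ ω⟫) ∂μ) - 1) := by
    have hI := hupper t0 ht0.le ht0K
    have h7 := mul_le_mul_of_nonneg_left hI hlam.le
    have h8 : t0 * d = t0 * A0 - lam * (t0 * EX) := by rw [hddef]; ring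
    linarith [h7, h8, mul_le_mul_of_nonneg_left ht0d ht0.le, mul_pos ht0 hd]
  have part1 : 0 < sSup S := lt_csSup_of_lt hbddS hx0 hx0pos
  -- Λ* z is nonnegative
  have hΛnn : ∀ z, (0 : EReal) ≤ Λstar z := by
    intro z
    rw [hΛstar]
    refine le_trans (le_of_eq ?_) (le_iSup (fun t => ((⟪z, t⟫ - Λ t : ℝ) : EReal)) 0)
    rw [hΛ]
    simp [inner_zero_left, inner_zero_right, measure_univ]
  -- part 2
  have part2 : ∀ z : EuclideanSpace ℝ (Fin n), (∀ j, θ j ≤ z j) →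
      ((sSup S : ℝ) : EReal) ≤ Λstar z := by
    intro z hz
    have hub : ∀ x ∈ S, (x : EReal) ≤ Λstar z := by
      intro x hx
      rw [hS] at hx
      obtain ⟨t, ht, rfl⟩ := hx
      rw [hΛstar]
      refine le_trans ?_ (le_iSup (fun s => ((⟪z, s⟫ - Λ s : ℝ) : EReal)) (t • ones))
      rw [EReal.coe_le_coe_iff]
      have hΛeq : Λ (t • ones) = lam * ((∫ ω, Real.exp (t * ⟪ones, ζ ω⟫) ∂μ) - 1) := by
        rw [hΛ]
        simp_rw [real_inner_smul_left]
      have hin : t * A0 ≤ ⟪z, t • ones⟫ := by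
        rw [real_inner_smul_right]
        refine mul_le_mul_of_nonneg_left ?_ ht
        rw [hA0def]
        simp only [PiLp.inner_apply, RCLike.inner_apply, conj_trivial]
        refine Finset.sum_le_sum fun j _ => ?_
        simp [hones j, hz j]
      rw [hΛeq]
      linarith [hin]
    by_contra hlt
    push_neg at hlt
    have hΛz := hΛnn z
    have hne_top : Λstar z ≠ ⊤ := by
      intro h; rw [h] at hlt; exact not_top_lt hlt
    have hne_bot : Λstar z ≠ ⊥ := by
      intro h; rw [h] at hΛz; simp at hΛz
    have hreq : (((Λstar z).toReal : ℝ) : EReal) = Λstar z := EReal.coe_toReal hne_top hne_bot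
    have hub' : ∀ x ∈ S, x ≤ (Λstar z).toReal := by
      intro x hx
      have h := hub x hx
      rw [← hreq] at h
      exact_mod_cast h
    have hsle : sSup S ≤ (Λstar z).toReal := csSup_le hne hub'
    rw [← hreq] at hlt
    rw [EReal.coe_lt_coe_iff] at hlt
    linarith
  refine ⟨part1, part2, ?_⟩
  refine lt_of_lt_of_le ?_ (le_iInf fun z => part2 z.1 z.2)
  exact_mod_cast part1
end

section
/- For every θ > φ, liminf_{ε → 0⁺} Λ_ε*(θ) ≥ Λ*(θ) > 0, where Λ*(θ) = sup_{t ∈ ℝ}(θt − λ(E[e^{t f(ξ)}] − 1)) and Λ_ε*(θ) = sup_{t ∈ ℝ}(θt − λ(E[e^{t f_ε(ξ)}] − 1)). -/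
open MeasureTheory Real Filter Set

lemma fe_bounds {f : ℝ → ℝ} {M : ℝ} (hfbdd : ∀ x, |f x| ≤ M) {ε x : ℝ}
    (hε : 0 ≤ ε) (hx : 0 ≤ x) :
    f x ≤ sSup (f '' {s : ℝ | 0 ≤ s ∧ |s - x| ≤ ε}) ∧
      |sSup (f '' {s : ℝ | 0 ≤ s ∧ |s - x| ≤ ε})| ≤ M := by
  have hmem : x ∈ {s : ℝ | 0 ≤ s ∧ |s - x| ≤ ε} := ⟨hx, by simpa using hε⟩
  have hne : (f '' {s : ℝ | 0 ≤ s ∧ |s - x| ≤ ε}).Nonempty := ⟨f x, mem_image_of_mem f hmem⟩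
  have hbdd : BddAbove (f '' {s : ℝ | 0 ≤ s ∧ |s - x| ≤ ε}) := by
    refine ⟨M, fun y hy => ?_⟩
    rcases hy with ⟨s, _, rfl⟩
    exact (abs_le.1 (hfbdd s)).2
  have h1 : f x ≤ sSup (f '' {s : ℝ | 0 ≤ s ∧ |s - x| ≤ ε}) :=
    le_csSup hbdd (mem_image_of_mem f hmem)
  refine ⟨h1, abs_le.2 ⟨le_trans (abs_le.1 (hfbdd x)).1 h1, ?_⟩⟩
  refine csSup_le hne fun y hy => ?_
  rcases hy with ⟨s, _, rfl⟩
  exact (abs_le.1 (hfbdd s)).2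

lemma fe_meas {Ω : Type*} [MeasurableSpace Ω] {f : ℝ → ℝ} (hfmeas : Measurable f)
    {M : ℝ} (hfbdd : ∀ x, |f x| ≤ M) {ε : ℝ} (hε : 0 ≤ ε)
    {ξ : Ω → ℝ} (hξmeas : Measurable ξ) (hξpos : ∀ ω, 0 ≤ ξ ω) :
    Measurable (fun ω => sSup (f '' {s : ℝ | 0 ≤ s ∧ |s - ξ ω| ≤ ε})) := by
  apply measurable_of_Ioi
  intro a
  set S : Set ℝ := {s : ℝ | 0 ≤ s ∧ a < f s} with hS
  have hSmeas : MeasurableSet S := by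
    have : S = Ici 0 ∩ f ⁻¹' (Ioi a) := by ext s; simp [hS, and_comm]
    rw [this]
    exact measurableSet_Ici.inter (hfmeas measurableSet_Ioi)
  set B : Set ℝ := (⋃ s ∈ S, Metric.ball s ε) ∪ ((· + ε) ⁻¹' S ∪ (· - ε) ⁻¹' S) with hB
  have hBmeas : MeasurableSet B := by
    refine MeasurableSet.union ?_ (MeasurableSet.union ?_ ?_)
    · exact (isOpen_biUnion fun s _ => Metric.isOpen_ball).measurableSet
    · exact (measurable_add_const ε) hSmeas
    · exact (measurable_sub_const ε) hSmeas
  have hkey : (fun ω => sSup (f '' {s : ℝ | 0 ≤ s ∧ |s - ξ ω| ≤ ε})) ⁻¹' Ioi a = ξ ⁻¹' B := by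
    ext ω
    set x := ξ ω with hx
    have hx0 : 0 ≤ x := hξpos ω
    have hmem : x ∈ {s : ℝ | 0 ≤ s ∧ |s - x| ≤ ε} := ⟨hx0, by simpa using hε⟩
    have hne : (f '' {s : ℝ | 0 ≤ s ∧ |s - x| ≤ ε}).Nonempty := ⟨f x, mem_image_of_mem f hmem⟩
    have hbdd : BddAbove (f '' {s : ℝ | 0 ≤ s ∧ |s - x| ≤ ε}) := by
      refine ⟨M, fun y hy => ?_⟩
      rcases hy with ⟨s, _, rfl⟩
      exact (abs_le.1 (hfbdd s)).2
    simp only [mem_preimage, mem_Ioi]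
    rw [lt_csSup_iff hbdd hne]
    constructor
    · rintro ⟨y, ⟨s, ⟨hs0, hsx⟩, rfl⟩, hay⟩
      rcases lt_or_eq_of_le hsx with h | h
      · exact Or.inl (mem_biUnion ⟨hs0, hay⟩ (by simpa [Metric.mem_ball, Real.dist_eq, abs_sub_comm] using h))
      · rcases abs_eq hε |>.1 h with h' | h'
        · exact Or.inr (Or.inl (by simp only [mem_preimage]; rw [show x + ε = s by linarith]; exact ⟨hs0, hay⟩))
        · exact Or.inr (Or.inr (by simp only [mem_preimage]; rw [show x - ε = s by linarith]; exact ⟨hs0, hay⟩))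
    · rintro (h | h | h)
      · rcases mem_iUnion₂.1 h with ⟨s, hsS, hball⟩
        rw [Metric.mem_ball, Real.dist_eq] at hball
        exact ⟨f s, mem_image_of_mem f ⟨hsS.1, by rw [abs_sub_comm]; exact le_of_lt hball⟩, hsS.2⟩
      · rw [mem_preimage] at h
        exact ⟨f (x + ε), mem_image_of_mem f ⟨h.1, by simp [abs_of_nonneg hε]⟩, h.2⟩
      · rw [mem_preimage] at h
        refine ⟨f (x - ε), mem_image_of_mem f ⟨h.1, by rw [show x - ε - x = -ε by ring, abs_neg, abs_of_nonneg hε]⟩, h.2⟩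
  rw [hkey]
  exact hξmeas hBmeas

lemma fe_tendsto {f : ℝ → ℝ} {M : ℝ} (hfbdd : ∀ x, |f x| ≤ M) {x : ℝ} (hx : 0 ≤ x)
    (hc : ContinuousWithinAt f (Ici 0) x) :
    Tendsto (fun ε => sSup (f '' {s : ℝ | 0 ≤ s ∧ |s - x| ≤ ε}))
      (nhdsWithin 0 (Ioi 0)) (nhds (f x)) := by
  rw [Metric.tendsto_nhds]
  intro δ hδ
  rw [Metric.continuousWithinAt_iff] at hc
  obtain ⟨ε₀, hε₀, h⟩ := hc (δ/2) (by linarith)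
  filter_upwards [Ioo_mem_nhdsGT_of_mem (⟨le_refl 0, hε₀⟩ : (0:ℝ) ∈ Ico 0 ε₀)] with ε hε
  obtain ⟨hε1, hε2⟩ := hε
  have hεnn : (0:ℝ) ≤ ε := le_of_lt hε1
  have hmem : x ∈ {s : ℝ | 0 ≤ s ∧ |s - x| ≤ ε} := ⟨hx, by simpa using hεnn⟩
  have hne : (f '' {s : ℝ | 0 ≤ s ∧ |s - x| ≤ ε}).Nonempty := ⟨f x, mem_image_of_mem f hmem⟩
  have hbdd : BddAbove (f '' {s : ℝ | 0 ≤ s ∧ |s - x| ≤ ε}) := by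
    refine ⟨M, fun y hy => ?_⟩
    rcases hy with ⟨s, _, rfl⟩
    exact (abs_le.1 (hfbdd s)).2
  have hlow : f x ≤ sSup (f '' {s : ℝ | 0 ≤ s ∧ |s - x| ≤ ε}) :=
    le_csSup hbdd (mem_image_of_mem f hmem)
  have hup : sSup (f '' {s : ℝ | 0 ≤ s ∧ |s - x| ≤ ε}) ≤ f x + δ/2 := by
    refine csSup_le hne ?_
    rintro y ⟨s, ⟨hs0, hsx⟩, rfl⟩
    have : dist s x < ε₀ := by rw [Real.dist_eq]; exact lt_of_le_of_lt hsx hε2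
    have := h hs0 this
    rw [Real.dist_eq] at this
    linarith [(abs_le.1 (le_of_lt this)).2]
  rw [Real.dist_eq]
  have : |sSup (f '' {s : ℝ | 0 ≤ s ∧ |s - x| ≤ ε}) - f x| ≤ δ/2 :=
    abs_le.2 ⟨by linarith, by linarith⟩
  linarith

lemma integrable_exp_bdd {Ω : Type*} [MeasurableSpace Ω] {μ : Measure Ω}
    [IsProbabilityMeasure μ] {h : Ω → ℝ} (hm : Measurable h) {M : ℝ}
    (hb : ∀ ω, |h ω| ≤ M) (t : ℝ) :
    Integrable (fun ω => Real.exp (t * h ω)) μ := by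
  refine (integrable_const (Real.exp (|t| * M))).mono'
    ((Real.continuous_exp.measurable.comp ((measurable_const.mul hm))).aestronglyMeasurable) ?_
  refine ae_of_all _ fun ω => ?_
  rw [Real.norm_eq_abs, abs_of_pos (Real.exp_pos _)]
  apply Real.exp_le_exp.2
  calc t * h ω ≤ |t * h ω| := le_abs_self _
    _ = |t| * |h ω| := abs_mul _ _
    _ ≤ |t| * M := by
        have := (hb ω)
        have h0 : (0:ℝ) ≤ |h ω| := abs_nonneg _
        nlinarith [abs_nonneg t]

lemma integrable_bdd {Ω : Type*} [MeasurableSpace Ω] {μ : Measure Ω}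
    [IsProbabilityMeasure μ] {h : Ω → ℝ} (hm : Measurable h) {M : ℝ}
    (hb : ∀ ω, |h ω| ≤ M) : Integrable h μ := by
  refine (integrable_const M).mono' hm.aestronglyMeasurable (ae_of_all _ fun ω => ?_)
  simpa using hb ω

lemma bdd_lemma {Ω : Type*} [MeasurableSpace Ω] (μ : Measure Ω) [IsProbabilityMeasure μ]
    {h : Ω → ℝ} (hm : Measurable h) {M : ℝ} (hb : ∀ ω, |h ω| ≤ M)
    {c : ℝ} (hc : 0 < c) {A : Set Ω} (hA : MeasurableSet A) (hAp : 0 < (μ A).toReal)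
    (hcA : ∀ ω ∈ A, c ≤ h ω) {lam θ : ℝ} (hlam : 0 < lam)
    (hθ : lam * ∫ ω, h ω ∂μ < θ) :
    ∀ t : ℝ, θ * t - lam * ((∫ ω, Real.exp (t * h ω) ∂μ) - 1)
      ≤ θ^2 / (4 * (lam * (μ A).toReal * c^2 / 4)) + lam := by
  intro t
  set p := (μ A).toReal with hp
  set a := lam * p * c^2 / 4 with ha
  have hapos : 0 < a := by positivity
  have hBpos : (0:ℝ) ≤ θ^2 / (4*a) := by positivity
  have hint : Integrable (fun ω => Real.exp (t * h ω)) μ := integrable_exp_bdd hm hb t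
  have hinth : Integrable h μ := integrable_bdd hm hb
  rcases le_or_gt t 0 with ht | ht
  · have key : 1 + t * ∫ ω, h ω ∂μ ≤ ∫ ω, Real.exp (t * h ω) ∂μ := by
      have : ∫ ω, (1 + t * h ω) ∂μ ≤ ∫ ω, Real.exp (t * h ω) ∂μ := by
        refine integral_mono ((integrable_const 1).add (hinth.const_mul t)) hint fun ω => ?_
        have := Real.add_one_le_exp (t * h ω)
        linarith
      calc 1 + t * ∫ ω, h ω ∂μ = ∫ ω, (1 + t * h ω) ∂μ := by
            rw [integral_add (integrable_const 1) (hinth.const_mul t), integral_const,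
              integral_const_mul]
            simp
        _ ≤ _ := this
    have h1 : θ * t - lam * ((∫ ω, Real.exp (t * h ω) ∂μ) - 1) ≤ t * (θ - lam * ∫ ω, h ω ∂μ) := by
      nlinarith
    have h2 : t * (θ - lam * ∫ ω, h ω ∂μ) ≤ 0 :=
      mul_nonpos_of_nonpos_of_nonneg ht (by linarith)
    linarith
  · have key : p * Real.exp (t * c) ≤ ∫ ω, Real.exp (t * h ω) ∂μ := by
      have h1 : Real.exp (t * c) * p ≤ ∫ ω in A, Real.exp (t * h ω) ∂μ := by
        refine le_trans (le_of_eq (?_ : Real.exp (t * c) * p = μ.real A • Real.exp (t * c))) ?_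
        · rw [smul_eq_mul, mul_comm]; rfl
        refine setIntegral_ge_of_const_le hA (measure_ne_top μ A) (fun ω hω => ?_)
          (hint.integrableOn)
        exact Real.exp_le_exp.2 (by nlinarith [hcA ω hω])
      have h2 : ∫ ω in A, Real.exp (t * h ω) ∂μ ≤ ∫ ω, Real.exp (t * h ω) ∂μ :=
        setIntegral_le_integral hint (ae_of_all _ fun ω => (Real.exp_pos _).le)
      linarith
    have hexp : (t*c)^2/4 ≤ Real.exp (t * c) := by
      have h1 := Real.add_one_le_exp (t*c/2)
      have h2 : Real.exp (t*c) = (Real.exp (t*c/2))^2 := by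
        rw [← Real.exp_nat_mul]; ring_nf
      nlinarith [Real.exp_pos (t*c/2), mul_pos ht hc]
    have hquad : θ * t - a * t^2 ≤ θ^2/(4*a) := by
      rw [le_div_iff₀ (by positivity : (0:ℝ) < 4*a)]
      nlinarith [sq_nonneg (2*a*t - θ)]
    have : p * ((t*c)^2/4) ≤ ∫ ω, Real.exp (t * h ω) ∂μ := by
      nlinarith [hexp, hAp]
    have : θ * t - lam * ((∫ ω, Real.exp (t * h ω) ∂μ) - 1) ≤ θ * t - a * t^2 + lam := by
      have hlp : 0 < lam * p := by positivity
      nlinarith [this]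
    linarith

/-- With f, f_ε, ξ as in Statement 10, P{f(ξ) > 0} > 0, λ > 0 and
φ = λE[f(ξ)]: for every θ > φ, liminf_{ε→0⁺} Λ_ε*(θ) ≥ Λ*(θ) > 0, where
Λ*(θ) = sup_t (θt − λ(E[e^{t f(ξ)}] − 1)) and Λ_ε*(θ) = sup_t (θt − λ(E[e^{t f_ε(ξ)}] − 1)). -/
theorem stmt11
    {Ω : Type*} [MeasurableSpace Ω] (μ : Measure Ω) [IsProbabilityMeasure μ]
    (f : ℝ → ℝ) (hfmeas : Measurable f) (M : ℝ) (hfbdd : ∀ x, |f x| ≤ M)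
    (fε : ℝ → ℝ → ℝ)
    (hfε : ∀ ε x, fε ε x = sSup (f '' {s : ℝ | 0 ≤ s ∧ |s - x| ≤ ε}))
    (ξ : Ω → ℝ) (hξmeas : Measurable ξ) (hξpos : ∀ ω, 0 ≤ ξ ω)
    (hcont : ∀ᵐ ω ∂μ, ContinuousWithinAt f (Ici 0) (ξ ω))
    (hpos : 0 < μ {ω | 0 < f (ξ ω)})
    (lam : ℝ) (hlam : 0 < lam)
    (φ : ℝ) (hφ : φ = lam * ∫ ω, f (ξ ω) ∂μ)
    (Λstar : ℝ → ℝ)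
    (hΛstar : ∀ θ, Λstar θ
      = ⨆ t : ℝ, (θ * t - lam * ((∫ ω, Real.exp (t * f (ξ ω)) ∂μ) - 1)))
    (Λstarε : ℝ → ℝ → ℝ)
    (hΛstarε : ∀ ε θ, Λstarε ε θ
      = ⨆ t : ℝ, (θ * t - lam * ((∫ ω, Real.exp (t * fε ε (ξ ω)) ∂μ) - 1)))
    (θ : ℝ) (hθ : φ < θ) :
    Λstar θ ≤ liminf (fun ε => Λstarε ε θ) (nhdsWithin 0 (Ioi 0)) ∧ 0 < Λstar θ := by
  have hθm : lam * ∫ ω, f (ξ ω) ∂μ < θ := hφ ▸ hθ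
  obtain ⟨ω₀, hω₀⟩ := nonempty_of_measure_ne_zero hpos.ne'
  have hM : 0 < M := lt_of_lt_of_le hω₀ (le_trans (le_abs_self _) (hfbdd _))
  have hfξ : Measurable (fun ω => f (ξ ω)) := hfmeas.comp hξmeas
  have hfξb : ∀ ω, |f (ξ ω)| ≤ M := fun ω => hfbdd _
  have hfξint : Integrable (fun ω => f (ξ ω)) μ := integrable_bdd hfξ hfξb
  -- choose c and A
  obtain ⟨c, hc, A, hA, hAp, hcA⟩ :
      ∃ c > (0:ℝ), ∃ A : Set Ω, MeasurableSet A ∧ 0 < (μ A).toReal ∧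
        ∀ ω ∈ A, c ≤ f (ξ ω) := by
    have hAn : ∀ n : ℕ, MeasurableSet {ω | 1/((n:ℝ)+1) ≤ f (ξ ω)} := by
      intro n
      exact hfξ measurableSet_Ici
    have hcov : {ω | 0 < f (ξ ω)} ⊆ ⋃ n : ℕ, {ω | 1/((n:ℝ)+1) ≤ f (ξ ω)} := by
      intro ω hω
      obtain ⟨n, hn⟩ := exists_nat_gt (1 / f (ξ ω))
      refine mem_iUnion.2 ⟨n, ?_⟩
      have hy : 0 < f (ξ ω) := hω
      have h1 : 1 / f (ξ ω) < (n:ℝ) + 1 := lt_of_lt_of_le hn (by linarith)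
      have : 1 / ((n:ℝ)+1) < f (ξ ω) := by
        rw [div_lt_iff₀ (by positivity : (0:ℝ) < (n:ℝ)+1)]
        rw [div_lt_iff₀ hy] at h1
        linarith [mul_comm (f (ξ ω)) ((n:ℝ)+1)]
      exact le_of_lt this
    have : ∃ n : ℕ, μ {ω | 1/((n:ℝ)+1) ≤ f (ξ ω)} ≠ 0 := by
      by_contra hcon
      push_neg at hcon
      have : μ {ω | 0 < f (ξ ω)} = 0 :=
        le_antisymm (le_trans (measure_mono hcov) (le_of_eq (measure_iUnion_null hcon))) (zero_le)
      exact absurd this hpos.ne'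
    obtain ⟨n, hn⟩ := this
    refine ⟨1/((n:ℝ)+1), by positivity, _, hAn n,
      ENNReal.toReal_pos hn (measure_ne_top μ _), fun ω hω => hω⟩
  set B : ℝ := θ^2 / (4 * (lam * (μ A).toReal * c^2 / 4)) + lam with hBdef
  -- boundedness for the f-supremum
  have hgB : ∀ t : ℝ, θ * t - lam * ((∫ ω, Real.exp (t * f (ξ ω)) ∂μ) - 1) ≤ B :=
    bdd_lemma μ hfξ hfξb hc hA hAp hcA hlam hθm
  have hBf : BddAbove (range fun t : ℝ => θ * t - lam * ((∫ ω, Real.exp (t * f (ξ ω)) ∂μ) - 1)) := by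
    refine ⟨B, fun y hy => ?_⟩
    obtain ⟨t, rfl⟩ := hy
    exact hgB t
  -- fε facts
  have hfεm : ∀ ε : ℝ, 0 ≤ ε → Measurable (fun ω => fε ε (ξ ω)) := by
    intro ε hε
    simp only [hfε]
    exact fe_meas hfmeas hfbdd hε hξmeas hξpos
  have hfεb : ∀ ε : ℝ, 0 ≤ ε → ∀ ω, f (ξ ω) ≤ fε ε (ξ ω) ∧ |fε ε (ξ ω)| ≤ M := by
    intro ε hε ω
    rw [hfε]
    exact fe_bounds hfbdd hε (hξpos ω)
  have htendae : ∀ᵐ ω ∂μ, Tendsto (fun ε => fε ε (ξ ω)) (nhdsWithin 0 (Ioi 0)) (nhds (f (ξ ω))) := by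
    filter_upwards [hcont] with ω hω
    simp only [hfε]
    exact fe_tendsto hfbdd (hξpos ω) hω
  -- dominated convergence: means
  have hEf : Tendsto (fun ε => ∫ ω, fε ε (ξ ω) ∂μ) (nhdsWithin 0 (Ioi 0))
      (nhds (∫ ω, f (ξ ω) ∂μ)) := by
    apply tendsto_integral_filter_of_dominated_convergence (fun _ => M)
    · filter_upwards [self_mem_nhdsWithin] with ε hε
      exact (hfεm ε (le_of_lt hε)).aestronglyMeasurable
    · filter_upwards [self_mem_nhdsWithin] with ε hε
      exact ae_of_all _ fun ω => by simpa using (hfεb ε (le_of_lt hε) ω).2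
    · exact integrable_const M
    · exact htendae
  -- dominated convergence: exponential moments
  have hEexp : ∀ t : ℝ, Tendsto (fun ε => ∫ ω, Real.exp (t * fε ε (ξ ω)) ∂μ)
      (nhdsWithin 0 (Ioi 0)) (nhds (∫ ω, Real.exp (t * f (ξ ω)) ∂μ)) := by
    intro t
    apply tendsto_integral_filter_of_dominated_convergence (fun _ => Real.exp (|t| * M))
    · filter_upwards [self_mem_nhdsWithin] with ε hε
      exact (Real.continuous_exp.measurable.comp
        (measurable_const.mul (hfεm ε (le_of_lt hε)))).aestronglyMeasurable
    · filter_upwards [self_mem_nhdsWithin] with ε hε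
      refine ae_of_all _ fun ω => ?_
      rw [Real.norm_eq_abs, abs_of_pos (Real.exp_pos _)]
      apply Real.exp_le_exp.2
      calc t * fε ε (ξ ω) ≤ |t * fε ε (ξ ω)| := le_abs_self _
        _ = |t| * |fε ε (ξ ω)| := abs_mul _ _
        _ ≤ |t| * M := mul_le_mul_of_nonneg_left ((hfεb ε (le_of_lt hε) ω).2) (abs_nonneg t)
    · exact integrable_const _
    · filter_upwards [htendae] with ω hω
      exact (Real.continuous_exp.tendsto _).comp (tendsto_const_nhds.mul hω)
  -- eventual boundedness for the fε-suprema
  have hevb : ∀ᶠ ε in nhdsWithin (0:ℝ) (Ioi 0),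
      ∀ t : ℝ, θ * t - lam * ((∫ ω, Real.exp (t * fε ε (ξ ω)) ∂μ) - 1) ≤ B := by
    have hev1 : ∀ᶠ ε in nhdsWithin (0:ℝ) (Ioi 0), lam * ∫ ω, fε ε (ξ ω) ∂μ < θ :=
      Tendsto.eventually_lt_const hθm (hEf.const_mul lam)
    filter_upwards [hev1, self_mem_nhdsWithin] with ε h1 h2
    exact bdd_lemma μ (hfεm ε (le_of_lt h2)) (fun ω => (hfεb ε (le_of_lt h2) ω).2) hc hA hAp
      (fun ω hω => le_trans (hcA ω hω) (hfεb ε (le_of_lt h2) ω).1) hlam h1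
  have hΛεge : ∀ᶠ ε in nhdsWithin (0:ℝ) (Ioi 0),
      ∀ t : ℝ, θ * t - lam * ((∫ ω, Real.exp (t * fε ε (ξ ω)) ∂μ) - 1) ≤ Λstarε ε θ := by
    filter_upwards [hevb] with ε hb t
    rw [hΛstarε]
    have hbA : BddAbove (range fun t : ℝ =>
        θ * t - lam * ((∫ ω, Real.exp (t * fε ε (ξ ω)) ∂μ) - 1)) := by
      refine ⟨B, fun y hy => ?_⟩
      obtain ⟨t', rfl⟩ := hy
      exact hb t'
    exact le_ciSup hbA t
  have hΛεleB : ∀ᶠ ε in nhdsWithin (0:ℝ) (Ioi 0), Λstarε ε θ ≤ B := by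
    filter_upwards [hevb] with ε hb
    rw [hΛstarε]
    exact ciSup_le hb
  constructor
  · -- liminf inequality
    rw [hΛstar]
    refine ciSup_le fun t => ?_
    have h1 : Tendsto (fun ε => θ * t - lam * ((∫ ω, Real.exp (t * fε ε (ξ ω)) ∂μ) - 1))
        (nhdsWithin 0 (Ioi 0))
        (nhds (θ * t - lam * ((∫ ω, Real.exp (t * f (ξ ω)) ∂μ) - 1))) :=
      tendsto_const_nhds.sub (((hEexp t).sub tendsto_const_nhds).const_mul lam)
    rw [← h1.liminf_eq]
    refine liminf_le_liminf ?_ ?_ ?_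
    · filter_upwards [hΛεge] with ε h
      exact h t
    · exact h1.isBoundedUnder_ge
    · exact IsBoundedUnder.isCoboundedUnder_ge ⟨B, eventually_map.2 hΛεleB⟩
  · -- positivity
    set t₀ : ℝ := min (1/M) ((θ - φ)/(2*lam*M^2)) with ht₀def
    have hθφ : 0 < θ - φ := by linarith
    have ht₀ : 0 < t₀ := lt_min (by positivity) (by positivity)
    have hup : ∫ ω, Real.exp (t₀ * f (ξ ω)) ∂μ
        ≤ 1 + t₀ * ∫ ω, f (ξ ω) ∂μ + t₀^2 * M^2 := by
      have hpt : ∀ ω, Real.exp (t₀ * f (ξ ω)) ≤ (1 + t₀^2 * M^2) + t₀ * f (ξ ω) := by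
        intro ω
        have habs : |t₀ * f (ξ ω)| ≤ 1 := by
          rw [abs_mul, abs_of_pos ht₀]
          calc t₀ * |f (ξ ω)| ≤ t₀ * M := mul_le_mul_of_nonneg_left (hfbdd _) ht₀.le
            _ ≤ (1/M) * M := mul_le_mul_of_nonneg_right (min_le_left _ _) hM.le
            _ = 1 := by field_simp
        have h2 := (abs_le.1 (Real.abs_exp_sub_one_sub_id_le habs)).2
        have hsq : (t₀ * f (ξ ω))^2 ≤ t₀^2 * M^2 := by
          rw [mul_pow]
          refine mul_le_mul_of_nonneg_left ?_ (sq_nonneg t₀)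
          nlinarith [hfbdd (ξ ω), abs_nonneg (f (ξ ω)), neg_abs_le (f (ξ ω)), le_abs_self (f (ξ ω))]
        linarith
      calc ∫ ω, Real.exp (t₀ * f (ξ ω)) ∂μ
          ≤ ∫ ω, ((1 + t₀^2 * M^2) + t₀ * f (ξ ω)) ∂μ :=
            integral_mono (integrable_exp_bdd hfξ hfξb t₀)
              ((integrable_const _).add (hfξint.const_mul t₀)) hpt
        _ = (1 + t₀^2 * M^2) + t₀ * ∫ ω, f (ξ ω) ∂μ := by
            rw [integral_add (integrable_const _) (hfξint.const_mul t₀),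
              integral_const, integral_const_mul]
            simp
        _ = 1 + t₀ * ∫ ω, f (ξ ω) ∂μ + t₀^2 * M^2 := by ring
    have h3 : lam * M^2 * t₀ ≤ (θ - φ)/2 := by
      calc lam * M^2 * t₀ ≤ lam * M^2 * ((θ - φ)/(2*lam*M^2)) :=
            mul_le_mul_of_nonneg_left (min_le_right _ _) (by positivity)
        _ = (θ - φ)/2 := by field_simp
    have hval : (θ - φ) * t₀ / 2 ≤ θ * t₀ - lam * ((∫ ω, Real.exp (t₀ * f (ξ ω)) ∂μ) - 1) := by
      have h2 : lam * ((∫ ω, Real.exp (t₀ * f (ξ ω)) ∂μ) - 1)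
          ≤ lam * (t₀ * ∫ ω, f (ξ ω) ∂μ + t₀^2 * M^2) :=
        mul_le_mul_of_nonneg_left (by linarith) hlam.le
      have hφ' : φ = lam * ∫ ω, f (ξ ω) ∂μ := hφ
      nlinarith [ht₀, h3]
    rw [hΛstar]
    calc (0:ℝ) < (θ - φ) * t₀ / 2 := by positivity
      _ ≤ θ * t₀ - lam * ((∫ ω, Real.exp (t₀ * f (ξ ω)) ∂μ) - 1) := hval
      _ ≤ _ := le_ciSup hBf t₀
end

section
/- If θ > (λ/l)∫_0^l g(y) dy and the Lebesgue measure of {y ∈ [0,l] : g(y) > 0} is positive, then the function t ↦ θt − Λ_{g,l}(t) attains its supremum over ℝ at a unique point t*, this t* lies in (0, ∞), and it satisfies θ = Λ'_{g,l}(t*) = (λ/l)∫_0^l g(y) e^{t* g(y)} dy. -/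
open MeasureTheory Real

private lemma integrableOn_of_bdd {l : ℝ} {f : ℝ → ℝ} (hf : Measurable f)
    {C : ℝ} (hC : ∀ y, |f y| ≤ C) : MeasureTheory.IntegrableOn f (Set.Ioc 0 l) := by
  haveI : IsFiniteMeasure (volume.restrict (Set.Ioc (0:ℝ) l)) := by
    constructor
    rw [Measure.restrict_apply_univ]
    exact measure_Ioc_lt_top
  exact ⟨hf.aestronglyMeasurable, HasFiniteIntegral.of_bounded (ae_of_all _ fun y => by
    simpa [Real.norm_eq_abs] using hC y)⟩

/-- Let λ, l > 0 and g : [0,l] → ℝ bounded measurable, with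
Λ_{g,l}(t) = (λ/l)∫_0^l (e^{tg(y)}−1) dy. If θ > (λ/l)∫_0^l g and
|{y ∈ [0,l] : g(y) > 0}| > 0, then t ↦ θt − Λ_{g,l}(t) attains its supremum over ℝ
at a unique point t*, which lies in (0,∞) and satisfies
θ = Λ'_{g,l}(t*) = (λ/l)∫_0^l g(y)e^{t* g(y)} dy. -/
theorem stmt15
    (lam l : ℝ) (hlam : 0 < lam) (hl : 0 < l)
    (g : ℝ → ℝ) (hgmeas : Measurable g) (M : ℝ) (hgbdd : ∀ y, |g y| ≤ M)
    (Λ : ℝ → ℝ)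
    (hΛ : ∀ t, Λ t = (lam / l) * ∫ y in (0:ℝ)..l, (Real.exp (t * g y) - 1))
    (θ : ℝ) (hθ : (lam / l) * (∫ y in (0:ℝ)..l, g y) < θ)
    (hgpos : 0 < volume {y ∈ Set.Icc (0:ℝ) l | 0 < g y}) :
    ∃ tstar : ℝ,
      (0 < tstar) ∧
      (∀ t : ℝ, θ * t - Λ t ≤ θ * tstar - Λ tstar) ∧
      (∀ t : ℝ, (∀ s : ℝ, θ * s - Λ s ≤ θ * t - Λ t) → t = tstar) ∧
      HasDerivAt Λ θ tstar ∧
      θ = (lam / l) * ∫ y in (0:ℝ)..l, g y * Real.exp (tstar * g y) := by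
  have hM0 : 0 ≤ M := le_trans (abs_nonneg _) (hgbdd 0)
  set c : ℝ := lam / l with hc
  have hc0 : 0 < c := div_pos hlam hl
  set φ : ℝ → ℝ := fun t => ∫ y in Set.Ioc (0:ℝ) l, g y * Real.exp (t * g y) with hφdef
  -- integrability of the integrands
  have hbnd : ∀ t y, |g y * Real.exp (t * g y)| ≤ M * Real.exp (|t| * M) := by
    intro t y
    rw [abs_mul, abs_of_pos (Real.exp_pos _)]
    have h1 : t * g y ≤ |t| * M := by
      calc t * g y ≤ |t * g y| := le_abs_self _
        _ = |t| * |g y| := abs_mul _ _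
        _ ≤ |t| * M := mul_le_mul_of_nonneg_left (hgbdd y) (abs_nonneg t)
    exact mul_le_mul (hgbdd y) (Real.exp_le_exp.2 h1) (Real.exp_pos _).le hM0
  have hmeas : ∀ t : ℝ, Measurable (fun y => g y * Real.exp (t * g y)) :=
    fun t => hgmeas.mul (hgmeas.const_mul t).exp
  have hint : ∀ t : ℝ, IntegrableOn (fun y => g y * Real.exp (t * g y)) (Set.Ioc 0 l) :=
    fun t => integrableOn_of_bdd (hmeas t) (hbnd t)
  -- Λ rewritten via set integrals
  have hΛeq : Λ = fun t => c * ∫ y in Set.Ioc (0:ℝ) l, (Real.exp (t * g y) - 1) := by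
    funext t
    rw [hΛ, intervalIntegral.integral_of_le hl.le]
  -- derivative of Λ
  have hderiv : ∀ t₀ : ℝ, HasDerivAt Λ (c * φ t₀) t₀ := by
    intro t₀
    have h1 : HasDerivAt (fun t => ∫ y in Set.Ioc (0:ℝ) l, (Real.exp (t * g y) - 1)) (φ t₀) t₀ := by
      refine (hasDerivAt_integral_of_dominated_loc_of_deriv_le
        (F := fun t y => Real.exp (t * g y) - 1)
        (F' := fun t y => g y * Real.exp (t * g y))
        (bound := fun _ => M * Real.exp ((|t₀| + 1) * M))
        (Metric.ball_mem_nhds t₀ one_pos) ?_ ?_ ?_ ?_ ?_ ?_).2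
      · exact Filter.Eventually.of_forall fun t =>
          ((hgmeas.const_mul t).exp.sub measurable_const).aestronglyMeasurable
      · refine integrableOn_of_bdd ((hgmeas.const_mul t₀).exp.sub measurable_const)
          (C := Real.exp (|t₀| * M) + 1) fun y => ?_
        have h2 : t₀ * g y ≤ |t₀| * M := by
          calc t₀ * g y ≤ |t₀ * g y| := le_abs_self _
            _ = |t₀| * |g y| := abs_mul _ _
            _ ≤ |t₀| * M := mul_le_mul_of_nonneg_left (hgbdd y) (abs_nonneg t₀)
        have h3 := Real.exp_le_exp.2 h2
        have h4 := Real.exp_pos (t₀ * g y)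
        show |Real.exp (t₀ * g y) - 1| ≤ Real.exp (|t₀| * M) + 1
        rw [abs_le]
        constructor <;> nlinarith
      · exact (hmeas t₀).aestronglyMeasurable
      · refine ae_of_all _ fun y x hx => ?_
        have hx1 : |x| ≤ |t₀| + 1 := by
          have := Metric.mem_ball.1 hx
          rw [Real.dist_eq] at this
          have := abs_sub_abs_le_abs_sub x t₀
          linarith
        have h1 : x * g y ≤ (|t₀| + 1) * M := by
          calc x * g y ≤ |x * g y| := le_abs_self _
            _ = |x| * |g y| := abs_mul _ _
            _ ≤ (|t₀| + 1) * M :=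
              mul_le_mul hx1 (hgbdd y) (abs_nonneg _) (by positivity)
        rw [Real.norm_eq_abs, abs_mul, abs_of_pos (Real.exp_pos _)]
        exact mul_le_mul (hgbdd y) (Real.exp_le_exp.2 h1) (Real.exp_pos _).le hM0
      · exact integrableOn_const measure_Ioc_lt_top.ne
      · refine ae_of_all _ fun y x _ => ?_
        have := ((hasDerivAt_mul_const (g y)).exp.sub_const 1 : HasDerivAt
          (fun x : ℝ => Real.exp (x * g y) - 1) (Real.exp (x * g y) * g y) x)
        simpa [mul_comm] using this
    rw [hΛeq]
    exact h1.const_mul c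
  -- strict monotonicity of φ
  have hmono : StrictMono φ := by
    intro s t hst
    have hpos : 0 < φ t - φ s := by
      rw [hφdef]
      simp only
      rw [← integral_sub (hint t) (hint s)]
      rw [setIntegral_pos_iff_support_of_nonneg_ae]
      · -- measure of support positive
        have h0 : 0 < volume ({y | 0 < g y} ∩ Set.Ioc 0 l) := by
          have hsub2 : {y ∈ Set.Icc (0:ℝ) l | 0 < g y} ⊆
              ({y | 0 < g y} ∩ Set.Ioc 0 l) ∪ {0} := by
            rintro y ⟨⟨hy0, hyl⟩, hgy⟩
            rcases eq_or_lt_of_le hy0 with h | h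
            · exact Or.inr (by simp [← h])
            · exact Or.inl ⟨hgy, h, hyl⟩
          calc (0:ENNReal) < volume {y ∈ Set.Icc (0:ℝ) l | 0 < g y} := hgpos
            _ ≤ volume (({y | 0 < g y} ∩ Set.Ioc 0 l) ∪ {0}) := measure_mono hsub2
            _ ≤ volume ({y | 0 < g y} ∩ Set.Ioc 0 l) + volume ({0} : Set ℝ) :=
                measure_union_le _ _
            _ = volume ({y | 0 < g y} ∩ Set.Ioc 0 l) := by simp
        refine lt_of_lt_of_le h0 (measure_mono ?_)
        rintro y ⟨hgy, hyS⟩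
        simp only [Set.mem_setOf_eq] at hgy
        refine ⟨?_, hyS⟩
        simp only [Function.mem_support]
        have h1 : Real.exp (s * g y) < Real.exp (t * g y) :=
          Real.exp_lt_exp.2 (by nlinarith)
        have h2 : 0 < g y * Real.exp (t * g y) - g y * Real.exp (s * g y) := by nlinarith
        exact ne_of_gt h2
      · refine ae_of_all _ fun y => ?_
        show 0 ≤ g y * Real.exp (t * g y) - g y * Real.exp (s * g y)
        rcases lt_trichotomy (g y) 0 with h | h | h
        · have h1 : Real.exp (t * g y) ≤ Real.exp (s * g y) :=
            Real.exp_le_exp.2 (by nlinarith)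
          nlinarith [mul_nonneg (neg_nonneg.2 h.le) (sub_nonneg.2 h1)]
        · simp [h]
        · have h1 : Real.exp (s * g y) ≤ Real.exp (t * g y) :=
            Real.exp_le_exp.2 (by nlinarith)
          nlinarith [mul_nonneg h.le (sub_nonneg.2 h1)]
      · exact (hint t).sub (hint s)
    exact sub_pos.1 hpos
  -- find ε with positive measure level set
  obtain ⟨n, hn⟩ : ∃ n : ℕ, 0 < volume {y ∈ Set.Icc (0:ℝ) l | 1/((n:ℝ)+1) ≤ g y} := by
    by_contra hcon
    push_neg at hcon
    have hsub : {y ∈ Set.Icc (0:ℝ) l | 0 < g y} ⊆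
        ⋃ n : ℕ, {y ∈ Set.Icc (0:ℝ) l | 1/((n:ℝ)+1) ≤ g y} := by
      rintro y ⟨hy, hgy⟩
      obtain ⟨n, hn⟩ := exists_nat_one_div_lt hgy
      exact Set.mem_iUnion.2 ⟨n, hy, hn.le⟩
    have hnull : volume (⋃ n : ℕ, {y ∈ Set.Icc (0:ℝ) l | 1/((n:ℝ)+1) ≤ g y}) = 0 :=
      by
        rw [measure_iUnion_null_iff]
        exact fun n => le_antisymm (hcon n) zero_le
    have hle : volume {y ∈ Set.Icc (0:ℝ) l | 0 < g y} ≤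
        volume (⋃ n : ℕ, {y ∈ Set.Icc (0:ℝ) l | 1/((n:ℝ)+1) ≤ g y}) := measure_mono hsub
    rw [hnull] at hle
    exact absurd (le_antisymm hle zero_le) (ne_of_gt hgpos)
  set ε : ℝ := 1/((n:ℝ)+1) with hεdef
  have hε : 0 < ε := by positivity
  set A : Set ℝ := {y ∈ Set.Ioc (0:ℝ) l | ε ≤ g y} with hAdef
  have hAmeas : MeasurableSet A := measurableSet_Ioc.inter (hgmeas measurableSet_Ici)
  have hAsub : A ⊆ Set.Ioc 0 l := Set.sep_subset _ _
  have hAfin : volume A < ⊤ := lt_of_le_of_lt (measure_mono hAsub) measure_Ioc_lt_top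
  have hApos : 0 < volume A := by
    have hsub2 : {y ∈ Set.Icc (0:ℝ) l | ε ≤ g y} ⊆ A ∪ {0} := by
      rintro y ⟨⟨hy0, hyl⟩, hgy⟩
      rcases eq_or_lt_of_le hy0 with h | h
      · exact Or.inr (by simp [← h])
      · exact Or.inl ⟨⟨h, hyl⟩, hgy⟩
    calc (0:ENNReal) < volume {y ∈ Set.Icc (0:ℝ) l | ε ≤ g y} := hn
      _ ≤ volume (A ∪ {0}) := measure_mono hsub2
      _ ≤ volume A + volume ({0} : Set ℝ) := measure_union_le _ _
      _ = volume A := by simp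
  set a : ℝ := (volume A).toReal with hadef
  have ha : 0 < a := ENNReal.toReal_pos (ne_of_gt hApos) (ne_of_lt hAfin)
  -- lower bound for φ on nonneg t
  have hlb : ∀ t : ℝ, 0 ≤ t → ε * Real.exp (t * ε) * a - M * l ≤ φ t := by
    intro t ht
    have hconst_int : IntegrableOn (fun _ : ℝ => ε * Real.exp (t * ε)) (Set.Ioc 0 l) :=
      integrableOn_const measure_Ioc_lt_top.ne
    have hind_int : IntegrableOn (fun y => A.indicator (fun _ => ε * Real.exp (t * ε)) y - M)
        (Set.Ioc 0 l) :=
      (hconst_int.indicator hAmeas).sub (integrableOn_const measure_Ioc_lt_top.ne)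
    have hmono' : ∫ y in Set.Ioc (0:ℝ) l,
        (A.indicator (fun _ => ε * Real.exp (t * ε)) y - M) ≤ φ t := by
      refine setIntegral_mono_on hind_int (hint t) measurableSet_Ioc fun y hy => ?_
      by_cases hyA : y ∈ A
      · rw [Set.indicator_of_mem hyA]
        have hgy : ε ≤ g y := hyA.2
        have h1 : Real.exp (t * ε) ≤ Real.exp (t * g y) :=
          Real.exp_le_exp.2 (by nlinarith)
        nlinarith [Real.exp_pos (t * ε)]
      · rw [Set.indicator_of_notMem hyA]
        have hMy := abs_le.1 (hgbdd y)
        rcases le_or_gt (g y) 0 with h | h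
        · have h1 : Real.exp (t * g y) ≤ 1 := Real.exp_le_one_iff.2 (by nlinarith)
          nlinarith [Real.exp_pos (t * g y)]
        · nlinarith [mul_pos h (Real.exp_pos (t * g y))]
    have hcalc : ∫ y in Set.Ioc (0:ℝ) l,
        (A.indicator (fun _ => ε * Real.exp (t * ε)) y - M) =
        ε * Real.exp (t * ε) * a - M * l := by
      rw [integral_sub (hconst_int.indicator hAmeas) (integrableOn_const
        measure_Ioc_lt_top.ne)]
      rw [setIntegral_indicator hAmeas, Set.inter_eq_self_of_subset_right hAsub,
        setIntegral_const, setIntegral_const]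
      rw [Measure.real, Measure.real, Real.volume_Ioc]
      simp [hadef, ENNReal.toReal_ofReal hl.le, mul_comm]
    linarith [hcalc ▸ hmono']
  -- choose T with θ < c * φ T
  set T : ℝ := max 1 ((θ/c + M*l + 1)/(ε*ε*a)) with hTdef
  have hT1 : (1:ℝ) ≤ T := le_max_left _ _
  have hT0 : (0:ℝ) ≤ T := by linarith
  have hφT : θ < c * φ T := by
    have h1 := hlb T hT0
    have h2 : T * ε + 1 ≤ Real.exp (T * ε) := Real.add_one_le_exp _
    have h3 : (θ/c + M*l + 1)/(ε*ε*a) ≤ T := le_max_right _ _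
    have h4 : θ/c + M*l + 1 ≤ T * (ε*ε*a) := (div_le_iff₀ (by positivity)).1 h3
    have h5 : ε * a * (T * ε + 1) ≤ ε * a * Real.exp (T * ε) :=
      mul_le_mul_of_nonneg_left h2 (by positivity)
    have h6 : θ/c < φ T := by nlinarith
    calc θ = c * (θ/c) := by field_simp
      _ < c * φ T := mul_lt_mul_of_pos_left h6 hc0
  have hφ0 : c * φ 0 < θ := by
    have hφ0eq : φ 0 = ∫ y in Set.Ioc (0:ℝ) l, g y := by
      simp [hφdef]
    rw [hφ0eq]
    rwa [intervalIntegral.integral_of_le hl.le] at hθ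
  -- Darboux's theorem gives tstar
  obtain ⟨tstar, htmem, htφ⟩ :=
    exists_hasDerivWithinAt_eq_of_gt_of_lt (f := Λ) (f' := fun t => c * φ t) hT0
      (fun x _ => (hderiv x).hasDerivWithinAt) hφ0 hφT
  obtain ⟨ht0, htT⟩ := htmem
  have htφ' : c * φ tstar = θ := htφ
  -- the function h and its derivative
  set h : ℝ → ℝ := fun t => θ * t - Λ t with hhdef
  have hh : ∀ t : ℝ, HasDerivAt h (θ - c * φ t) t := by
    intro t
    have := ((hasDerivAt_id t).const_mul θ).sub (hderiv t)
    simp at this; exact this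
  have hdiffh : Differentiable ℝ h := fun t => (hh t).differentiableAt
  have hderivh : ∀ t : ℝ, deriv h t = θ - c * φ t := fun t => (hh t).deriv
  have hmonoh : StrictMonoOn h (Set.Iic tstar) := by
    refine strictMonoOn_of_deriv_pos (convex_Iic _) hdiffh.continuous.continuousOn
      fun x hx => ?_
    rw [interior_Iic] at hx
    rw [hderivh]
    have h1 : c * φ x < c * φ tstar := mul_lt_mul_of_pos_left (hmono hx) hc0
    rw [htφ'] at h1
    linarith
  have hantih : StrictAntiOn h (Set.Ici tstar) := by
    refine strictAntiOn_of_deriv_neg (convex_Ici _) hdiffh.continuous.continuousOn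
      fun x hx => ?_
    rw [interior_Ici] at hx
    rw [hderivh]
    have h1 : c * φ tstar < c * φ x := mul_lt_mul_of_pos_left (hmono hx) hc0
    rw [htφ'] at h1
    linarith
  have hmax : ∀ t : ℝ, h t ≤ h tstar := by
    intro t
    rcases le_total t tstar with ht | ht
    · exact hmonoh.monotoneOn ht Set.self_mem_Iic ht
    · exact hantih.antitoneOn Set.self_mem_Ici ht ht
  refine ⟨tstar, ht0, hmax, ?_, htφ' ▸ hderiv tstar, ?_⟩
  · intro t hts
    have h1 : h t = h tstar := le_antisymm (hmax t) (hts tstar)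
    by_contra hne
    rcases lt_or_gt_of_ne hne with h2 | h2
    · exact absurd h1 (ne_of_lt (hmonoh h2.le (le_refl tstar) h2))
    · exact absurd h1 (ne_of_lt (hantih (le_refl tstar) h2.le h2))
  · rw [intervalIntegral.integral_of_le hl.le]
    exact htφ'.symm
end

section
/- Suppose θ > (λ/l)∫_0^l g(y) dy and the Lebesgue measure of {y ∈ [0,l] : g(y) > 0} is positive, and let t* ∈ (0,∞) be the unique maximizer of t ↦ θt − Λ_{g,l}(t). Set K = λ∫_0^l e^{t* g(y)} dy and let μ be the probability measure on [0, l] with density y ↦ λe^{t* g(y)}/K with respect to Lebesgue measure. Then: (i) K = l(θt* − Λ*_{g,l}(θ) + λ); (ii) lθ = K ∫_0^l g dμ; and (iii) exp(l Λ*_{g,l}(θ)) · P{ Σ_{i=1}^{N} g(U_i) ≥ lθ } = e^{lθt*} Σ_{n=0}^{∞} e^{−K} (K^n/n!) E[ 1{Σ_{i=1}^{n} g(ξ_i) ≥ lθ} exp(−t* Σ_{i=1}^{n} g(ξ_i)) ], where ξ_1, ξ_2, … are i.i.d. with law μ. -/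
open MeasureTheory Real ProbabilityTheory ENNReal
open scoped NNReal

lemma myLintegralPiProd {n : ℕ} {α : Type*} [MeasurableSpace α] (ν : Measure α) [SigmaFinite ν]
    (f : Fin n → α → ℝ≥0∞) (hf : ∀ i, Measurable (f i)) :
    ∫⁻ x : Fin n → α, ∏ i, f i (x i) ∂(Measure.pi fun _ => ν) = ∏ i, ∫⁻ y, f i y ∂ν := by
  induction n with
  | zero =>
      simp [lintegral_const, Measure.pi_empty_univ]
  | succ n ih =>
      have hmp := (MeasureTheory.measurePreserving_piFinSuccAbove (fun _ : Fin (n+1) => ν) 0).symm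
      rw [← hmp.lintegral_comp (f := fun x : Fin (n+1) → α => ∏ i, f i (x i))
        (Finset.measurable_prod Finset.univ fun i _ => (hf i).comp (measurable_pi_apply i))]
      simp_rw [MeasurableEquiv.piFinSuccAbove_symm_apply, Fin.insertNthEquiv,
        Fin.prod_univ_succ, Fin.insertNth_zero, Equiv.coe_fn_mk, Fin.cons_zero, Fin.cons_succ,
        cast_eq]
      rw [lintegral_prod_mul (f := f 0) (g := fun b : Fin n → α => ∏ i, f i.succ (b i))
        (hf 0).aemeasurable
        (Finset.measurable_prod Finset.univ fun i _ => (hf i.succ).comp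
          (measurable_pi_apply i)).aemeasurable,
        ih (fun i => f i.succ) (fun i => hf i.succ)]

lemma myPiWithDensity {n : ℕ} {α : Type*} [MeasurableSpace α] (ν : Measure α) [IsFiniteMeasure ν]
    (ρ : α → ℝ≥0∞) (hρ : Measurable ρ) [IsFiniteMeasure (ν.withDensity ρ)] :
    Measure.pi (fun _ : Fin n => ν.withDensity ρ)
      = (Measure.pi fun _ : Fin n => ν).withDensity (fun x => ∏ i, ρ (x i)) := by
  refine Measure.pi_eq (μ := fun _ : Fin n => ν.withDensity ρ) fun s hs => ?_
  rw [withDensity_apply _ (MeasurableSet.univ_pi hs)]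
  have : ∀ x : Fin n → α, (Set.pi Set.univ s).indicator (fun x => ∏ i, ρ (x i)) x
      = ∏ i, (s i).indicator ρ (x i) := by
    intro x
    by_cases hx : x ∈ Set.pi Set.univ s
    · rw [Set.indicator_of_mem hx]
      exact Finset.prod_congr rfl fun i _ =>
        (Set.indicator_of_mem (hx i (Set.mem_univ i)) ρ).symm
    · rw [Set.indicator_of_notMem hx]
      obtain ⟨i, hi⟩ : ∃ i, x i ∉ s i := by
        by_contra h
        push_neg at h
        exact hx fun i _ => h i
      exact (Finset.prod_eq_zero (Finset.mem_univ i)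
        (Set.indicator_of_notMem hi ρ)).symm
  rw [← lintegral_indicator (MeasurableSet.univ_pi hs)]
  simp_rw [this]
  rw [myLintegralPiProd ν _ (fun i => hρ.indicator (hs i))]
  exact Finset.prod_congr rfl fun i _ =>
    ((withDensity_apply ρ (hs i)).trans (lintegral_indicator (hs i) ρ).symm).symm

lemma myPiSmul {n : ℕ} {α : Type*} [MeasurableSpace α] (ν : Measure α) [IsFiniteMeasure ν]
    (c : ℝ≥0∞) [SigmaFinite (c • ν)] :
    Measure.pi (fun _ : Fin n => c • ν) = c ^ n • Measure.pi (fun _ : Fin n => ν) := by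
  refine Measure.pi_eq (μ := fun _ : Fin n => c • ν) fun s hs => ?_
  simp [Measure.pi_pi, Finset.prod_mul_distrib, Finset.prod_const, Finset.card_univ]

lemma myJointLaw {Ω : Type*} [MeasurableSpace Ω] (μ : Measure Ω) [IsProbabilityMeasure μ]
    (U : ℕ → Ω → ℝ) (hm : ∀ i, Measurable (U i))
    (hi : iIndepFun U μ) (n : ℕ) :
    Measure.map (fun ω (i : Fin n) => U i ω) μ
      = Measure.pi (fun i : Fin n => Measure.map (U (i : ℕ)) μ) := by
  have hT : Measurable (fun ω (i : Fin n) => U i ω) :=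
    measurable_pi_lambda _ fun i => hm i
  haveI : ∀ i : Fin n, IsProbabilityMeasure (Measure.map (U (i : ℕ)) μ) :=
    fun i => Measure.isProbabilityMeasure_map (hm i).aemeasurable
  refine (Measure.pi_eq (μ := fun i : Fin n => Measure.map (U (i : ℕ)) μ) fun s hs => ?_).symm
  rw [Measure.map_apply hT (MeasurableSet.univ_pi hs)]
  classical
  set s' : ℕ → Set ℝ := fun j => if h : j < n then s ⟨j, h⟩ else Set.univ with hs'
  have hpre : (fun ω (i : Fin n) => U i ω) ⁻¹' Set.pi Set.univ s
      = ⋂ j ∈ Finset.range n, U j ⁻¹' s' j := by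
    ext ω
    simp only [Set.mem_preimage, Set.mem_pi, Set.mem_univ, forall_true_left, Set.mem_iInter,
      Finset.mem_range]
    constructor
    · intro h j hj
      simpa [hs', dif_pos hj] using h ⟨j, hj⟩
    · intro h i
      simpa [hs', dif_pos i.isLt] using h i i.isLt
  rw [hpre, hi.measure_inter_preimage_eq_mul (Finset.range n)
    (fun j hj => by
      by_cases h : j < n
      · simpa [hs', dif_pos h] using hs ⟨j, h⟩
      · simp [hs', dif_neg h]),
    ← Fin.prod_univ_eq_prod_range (fun j => μ (U j ⁻¹' s' j)) n]
  exact Finset.prod_congr rfl fun i _ => by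
    rw [Measure.map_apply (hm i) (hs i)]
    congr 1
    simp [hs', i.isLt]

/-- Same setup as Statement 14. Let t* ∈ (0,∞) be the unique maximizer of
t ↦ θt − Λ_{g,l}(t), K = λ∫_0^l e^{t* g(y)} dy, and let μ' be the probability measure on
[0,l] with density y ↦ λ e^{t* g(y)}/K. Then (i) K = l(θt* − Λ*_{g,l}(θ) + λ),
(ii) lθ = K ∫ g dμ', and (iii) exp(l Λ*_{g,l}(θ)) · P{Σ_{i=1}^N g(U_i) ≥ lθ}
= e^{lθt*} Σ_{n=0}^∞ e^{−K} K^n/n! · E[1{Σ_{i=1}^n g(ξ_i) ≥ lθ} exp(−t* Σ_{i=1}^n g(ξ_i))],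
where the ξ_i are i.i.d. with law μ'. -/
theorem stmt16
    {Ω : Type*} [MeasurableSpace Ω] (μ : Measure Ω) [IsProbabilityMeasure μ]
    {Ω' : Type*} [MeasurableSpace Ω'] (P : Measure Ω') [IsProbabilityMeasure P]
    (lam l : ℝ) (hlam : 0 < lam) (hl : 0 < l)
    (g : ℝ → ℝ) (hgmeas : Measurable g) (M : ℝ) (hgbdd : ∀ y, |g y| ≤ M)
    (N : Ω → ℕ) (hNmeas : Measurable N)
    (hN : Measure.map N μ = poissonMeasure (Real.toNNReal (lam * l)))
    (U : ℕ → Ω → ℝ) (hUmeas : ∀ i, Measurable (U i))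
    (hU : ∀ i, Measure.map (U i) μ
      = (ENNReal.ofReal l)⁻¹ • (volume.restrict (Set.Icc 0 l)))
    (hUindep : iIndepFun U μ)
    (hNU : IndepFun N (fun ω => (fun i => U i ω)) μ)
    (Λ : ℝ → ℝ)
    (hΛ : ∀ t, Λ t = (lam / l) * ∫ y in (0:ℝ)..l, (Real.exp (t * g y) - 1))
    (Λstar : ℝ → ℝ) (hΛstar : ∀ θ, Λstar θ = ⨆ t : ℝ, (θ * t - Λ t))
    (θ : ℝ) (hθ : (lam / l) * (∫ y in (0:ℝ)..l, g y) < θ)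
    (hgpos : 0 < volume {y ∈ Set.Icc (0:ℝ) l | 0 < g y})
    (tstar : ℝ) (htstar_pos : 0 < tstar)
    (htstar_max : ∀ t : ℝ, θ * t - Λ t ≤ θ * tstar - Λ tstar)
    (K : ℝ) (hK : K = lam * ∫ y in (0:ℝ)..l, Real.exp (tstar * g y))
    (μ' : Measure ℝ)
    (hμ' : μ' = (volume.restrict (Set.Icc 0 l)).withDensity
        (fun y => ENNReal.ofReal (lam * Real.exp (tstar * g y) / K)))
    (ξ : ℕ → Ω' → ℝ) (hξmeas : ∀ i, Measurable (ξ i))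
    (hξ : ∀ i, Measure.map (ξ i) P = μ')
    (hξindep : iIndepFun ξ P) :
    K = l * (θ * tstar - Λstar θ + lam) ∧
    l * θ = K * ∫ y, g y ∂μ' ∧
    Real.exp (l * Λstar θ)
        * (μ {ω | l * θ ≤ ∑ i ∈ Finset.range (N ω), g (U i ω)}).toReal
      = Real.exp (l * θ * tstar)
        * ∑' n : ℕ, Real.exp (-K) * K ^ n / (n.factorial : ℝ)
            * ∫ ω', (if l * θ ≤ ∑ i ∈ Finset.range n, g (ξ i ω')
                then Real.exp (-(tstar * ∑ i ∈ Finset.range n, g (ξ i ω')))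
                else 0) ∂P := by
  have hl0 : l ≠ 0 := ne_of_gt hl
  set ν : Measure ℝ := volume.restrict (Set.Icc 0 l) with hν
  haveI : IsFiniteMeasure ν := by
    constructor
    rw [hν, Measure.restrict_apply_univ]
    exact measure_Icc_lt_top
  -- bounded measurable functions are integrable w.r.t. ν
  have hint : ∀ (f : ℝ → ℝ) (C : ℝ), Measurable f → (∀ y, |f y| ≤ C) → Integrable f ν := by
    intro f C hf hC
    exact (integrable_const C).mono' hf.aestronglyMeasurable
      (Filter.Eventually.of_forall fun y => by
        simpa [Real.norm_eq_abs] using hC y)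
  -- interval integral to set integral
  have hconv : ∀ f : ℝ → ℝ, (∫ y in (0:ℝ)..l, f y) = ∫ y, f y ∂ν := by
    intro f
    rw [intervalIntegral.integral_of_le hl.le, hν, ← integral_Icc_eq_integral_Ioc]
  -- bound on exp (tstar * g y)
  have hexp_bd : ∀ y, |Real.exp (tstar * g y)| ≤ Real.exp (tstar * M) := by
    intro y
    rw [abs_of_pos (Real.exp_pos _)]
    apply Real.exp_le_exp.2
    exact mul_le_mul_of_nonneg_left ((le_abs_self _).trans (hgbdd y)) htstar_pos.le
  have hexp_int : Integrable (fun y => Real.exp (tstar * g y)) ν :=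
    hint _ _ (by fun_prop) hexp_bd
  -- value of Λstar θ
  have hbdd : BddAbove (Set.range fun t => θ * t - Λ t) :=
    ⟨θ * tstar - Λ tstar, by rintro x ⟨t, rfl⟩; exact htstar_max t⟩
  have hsup : Λstar θ = θ * tstar - Λ tstar := by
    rw [hΛstar]
    exact le_antisymm (ciSup_le htstar_max) (le_ciSup hbdd tstar)
  -- K as integral over ν
  have hKν : K = lam * ∫ y, Real.exp (tstar * g y) ∂ν := by rw [hK, hconv]
  have hKpos : 0 < K := by
    rw [hKν]
    apply mul_pos hlam
    have h1 : (0:ℝ) < Real.exp (-(tstar * M)) * l := by positivity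
    refine lt_of_lt_of_le h1 ?_
    have : ∫ y, Real.exp (-(tstar * M)) ∂ν = Real.exp (-(tstar * M)) * l := by
      rw [integral_const]
      simp [hν, Real.volume_Icc, hl.le, ENNReal.toReal_ofReal, smul_eq_mul, mul_comm]
    rw [← this]
    apply integral_mono (hint _ _ (by fun_prop) (fun y => le_of_eq (abs_of_pos (Real.exp_pos _))))
      hexp_int
    intro y
    apply Real.exp_le_exp.2
    have := (abs_le.1 (hgbdd y)).1
    nlinarith [htstar_pos.le]
  -- Part (i)
  have hΛtstar : Λ tstar = (lam / l) * ((∫ y, Real.exp (tstar * g y) ∂ν) - l) := by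
    rw [hΛ, hconv]
    congr 1
    rw [integral_sub hexp_int (integrable_const 1)]
    congr 1
    rw [integral_const]
    simp [hν, Real.volume_Icc, hl.le, ENNReal.toReal_ofReal]
  have part1 : K = l * (θ * tstar - Λstar θ + lam) := by
    rw [hsup, hKν]
    rw [show θ * tstar - (θ * tstar - Λ tstar) + lam = Λ tstar + lam by ring, hΛtstar]
    field_simp
    ring
  have hM : 0 ≤ M := le_trans (abs_nonneg _) (hgbdd 0)
  -- derivative of the integral
  have hDeriv : HasDerivAt (fun t => ∫ y, (Real.exp (t * g y) - 1) ∂ν)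
      (∫ y, Real.exp (tstar * g y) * g y ∂ν) tstar := by
    have H := hasDerivAt_integral_of_dominated_loc_of_deriv_le (μ := ν)
      (F := fun t y => Real.exp (t * g y) - 1)
      (F' := fun t y => Real.exp (t * g y) * g y)
      (x₀ := tstar) (bound := fun _ => Real.exp ((|tstar| + 1) * M) * M) (Metric.ball_mem_nhds tstar zero_lt_one)
      (Filter.Eventually.of_forall fun t =>
        (Measurable.aestronglyMeasurable (by fun_prop)))
      (hint _ _ (by fun_prop) (fun y => by
        have := hexp_bd y
        rw [abs_of_pos (Real.exp_pos _)] at this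
        calc |Real.exp (tstar * g y) - 1| ≤ Real.exp (tstar * M) + 1 := by
              rw [abs_sub_comm]
              calc |1 - Real.exp (tstar * g y)| ≤ |(1:ℝ)| + |Real.exp (tstar * g y)| :=
                abs_sub _ _
              _ ≤ Real.exp (tstar * M) + 1 := by
                  rw [abs_of_pos (Real.exp_pos _), abs_one]; linarith
          _ ≤ Real.exp (tstar * M) + 1 := le_refl _))
      (Measurable.aestronglyMeasurable (by fun_prop))
      (Filter.Eventually.of_forall fun y => by
        intro x hx
        have hxb : |x| ≤ |tstar| + 1 := by
          have := mem_ball_iff_norm.1 hx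
          rw [Real.norm_eq_abs] at this
          calc |x| = |tstar + (x - tstar)| := by ring_nf
          _ ≤ |tstar| + |x - tstar| := abs_add_le _ _
          _ ≤ |tstar| + 1 := by linarith
        have h1 : x * g y ≤ (|tstar| + 1) * M := by
          calc x * g y ≤ |x * g y| := le_abs_self _
          _ = |x| * |g y| := abs_mul _ _
          _ ≤ (|tstar| + 1) * M :=
            mul_le_mul hxb (hgbdd y) (abs_nonneg _) (by positivity)
        rw [Real.norm_eq_abs, abs_mul, abs_of_pos (Real.exp_pos _)]
        exact mul_le_mul (Real.exp_le_exp.2 h1) (hgbdd y) (abs_nonneg _)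
          (Real.exp_pos _).le)
      (hint _ _ (by fun_prop) (fun y => le_of_eq (abs_of_nonneg (by positivity))))
      (Filter.Eventually.of_forall fun y => by
        intro x hx
        simpa using ((hasDerivAt_mul_const (g y)).exp.sub_const 1))
    exact H.2
  -- the function whose max is at tstar
  have hobj : HasDerivAt (fun t => θ * t - Λ t)
      (θ - (lam / l) * ∫ y, Real.exp (tstar * g y) * g y ∂ν) tstar := by
    have h1 : HasDerivAt (fun t : ℝ => θ * t) θ tstar := by
      simpa using (hasDerivAt_id tstar).const_mul θ
    have h2 := hDeriv.const_mul (lam / l)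
    have h3 := h1.sub h2
    apply h3.congr_of_eventuallyEq
    apply Filter.Eventually.of_forall
    intro t
    show θ * t - Λ t = θ * t - lam / l * ∫ y, (Real.exp (t * g y) - 1) ∂ν
    rw [hΛ t, hconv]
  have hmax : IsLocalMax (fun t => θ * t - Λ t) tstar :=
    Filter.Eventually.of_forall htstar_max
  have hzero := hmax.hasDerivAt_eq_zero hobj
  have hDval : l * θ = lam * ∫ y, Real.exp (tstar * g y) * g y ∂ν := by
    have : θ = (lam / l) * ∫ y, Real.exp (tstar * g y) * g y ∂ν := by linarith
    rw [this]; field_simp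
  -- Part (ii)
  have hdens_meas : Measurable fun y => lam * Real.exp (tstar * g y) / K := by fun_prop
  have part2 : l * θ = K * ∫ y, g y ∂μ' := by
    rw [hμ']
    rw [show (fun y => ENNReal.ofReal (lam * Real.exp (tstar * g y) / K))
        = fun y => ((Real.toNNReal (lam * Real.exp (tstar * g y) / K) : ℝ≥0) : ℝ≥0∞) from rfl]
    rw [integral_withDensity_eq_integral_smul hdens_meas.real_toNNReal g]
    have heq : (fun y => Real.toNNReal (lam * Real.exp (tstar * g y) / K) • g y)
        = fun y => (lam / K) * (Real.exp (tstar * g y) * g y) := by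
      funext y
      rw [NNReal.smul_def, Real.coe_toNNReal _ (by positivity)]
      simp [smul_eq_mul]
      ring
    rw [heq, integral_const_mul]
    rw [show K * (lam / K * ∫ y, Real.exp (tstar * g y) * g y ∂ν)
        = lam * ∫ y, Real.exp (tstar * g y) * g y ∂ν by field_simp]
    exact hDval
  refine ⟨part1, part2, ?_⟩
  classical
  -- Part (iii)
  have hrcoe : ((Real.toNNReal (lam * l) : ℝ≥0) : ℝ) = lam * l :=
    Real.coe_toNNReal _ (by positivity)
  -- events A n
  set A : ℕ → Set Ω := fun n => {ω | l * θ ≤ ∑ i ∈ Finset.range n, g (U i ω)} with hA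
  have hAmeas : ∀ n, MeasurableSet (A n) := fun n =>
    measurableSet_le measurable_const (Finset.measurable_sum _ fun i _ => hgmeas.comp (hUmeas i))
  -- decomposition of the event
  have hdecomp : {ω | l * θ ≤ ∑ i ∈ Finset.range (N ω), g (U i ω)}
      = ⋃ n, (N ⁻¹' {n} ∩ A n) := by
    ext ω
    simp only [Set.mem_setOf_eq, Set.mem_iUnion, Set.mem_inter_iff, Set.mem_preimage,
      Set.mem_singleton_iff, hA]
    constructor
    · intro h; exact ⟨N ω, rfl, h⟩
    · rintro ⟨n, rfl, h⟩; exact h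
  have hdisj : Pairwise (Function.onFun Disjoint fun n => N ⁻¹' {n} ∩ A n) := by
    intro m n hmn
    refine Set.disjoint_left.2 ?_
    rintro ω ⟨hm, -⟩ ⟨hn, -⟩
    exact hmn ((Set.mem_singleton_iff.1 hm).symm.trans (Set.mem_singleton_iff.1 hn))
  -- independence N ⊥ (A n)
  have hindep : ∀ n, μ (N ⁻¹' {n} ∩ A n) = μ (N ⁻¹' {n}) * μ (A n) := by
    intro n
    have hBn : MeasurableSet {u : ℕ → ℝ | l * θ ≤ ∑ i ∈ Finset.range n, g (u i)} :=
      measurableSet_le measurable_const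
        (Finset.measurable_sum _ fun i _ => hgmeas.comp (measurable_pi_apply i))
    exact hNU.measure_inter_preimage_eq_mul {n} _ (measurableSet_singleton n) hBn
  have hmeasE : μ {ω | l * θ ≤ ∑ i ∈ Finset.range (N ω), g (U i ω)}
      = ∑' n, μ (N ⁻¹' {n}) * μ (A n) := by
    rw [hdecomp, measure_iUnion hdisj
      (fun n => (hNmeas (measurableSet_singleton n)).inter (hAmeas n))]
    exact tsum_congr hindep
  -- Poisson probabilities
  have hpois : ∀ n, μ (N ⁻¹' {n})
      = ENNReal.ofReal (Real.exp (-(lam * l)) * (lam * l) ^ n / (n.factorial : ℝ)) := by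
    intro n
    rw [← Measure.map_apply hNmeas (measurableSet_singleton n), hN, poissonMeasure_singleton,
      hrcoe]
  -- product spaces
  haveI hsmulfin : IsFiniteMeasure ((ENNReal.ofReal l)⁻¹ • ν) := by
    constructor
    rw [Measure.smul_apply, smul_eq_mul]
    exact ENNReal.mul_lt_top (ENNReal.inv_lt_top.2 (ENNReal.ofReal_pos.2 hl)) (measure_lt_top _ _)
  have hUlaw : ∀ n : ℕ, Measure.map (fun ω (i : Fin n) => U i ω) μ
      = Measure.pi (fun _ : Fin n => (ENNReal.ofReal l)⁻¹ • ν) := by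
    intro n
    rw [myJointLaw μ U hUmeas hUindep n]
    exact congrArg Measure.pi (funext fun i => hU i)
  haveI hμ'prob : IsProbabilityMeasure μ' := by
    rw [← hξ 0]
    exact Measure.isProbabilityMeasure_map (hξmeas 0).aemeasurable
  have hξlaw : ∀ n : ℕ, Measure.map (fun ω' (i : Fin n) => ξ i ω') P
      = Measure.pi (fun _ : Fin n => μ') := by
    intro n
    rw [myJointLaw P ξ hξmeas hξindep n]
    exact congrArg Measure.pi (funext fun i => hξ i)
  -- the sets C n and the measures m n
  have hCmeas : ∀ n : ℕ, MeasurableSet {x : Fin n → ℝ | l * θ ≤ ∑ i, g (x i)} :=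
    fun n => measurableSet_le measurable_const
      (Finset.measurable_sum _ fun i _ => hgmeas.comp (measurable_pi_apply i))
  set c : ℕ → ℝ := fun n =>
    ((Measure.pi (fun _ : Fin n => ν)) {x : Fin n → ℝ | l * θ ≤ ∑ i, g (x i)}).toReal with hc
  -- measure of A n
  have haAn : ∀ n, (μ (A n)).toReal = (l⁻¹) ^ n * c n := by
    intro n
    have hTn : (fun ω (i : Fin n) => U i ω) ⁻¹' {x : Fin n → ℝ | l * θ ≤ ∑ i, g (x i)}
        = A n := by
      ext ω
      simp only [Set.mem_preimage, Set.mem_setOf_eq, hA,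
        Fin.sum_univ_eq_sum_range (fun i => g (U i ω)) n]
    have h1 : μ (A n) = Measure.map (fun ω (i : Fin n) => U i ω) μ
        {x : Fin n → ℝ | l * θ ≤ ∑ i, g (x i)} := by
      rw [Measure.map_apply (measurable_pi_lambda (fun ω (i : Fin n) => U i ω) fun i => hUmeas (i : Fin n).val) (hCmeas n), hTn]
    rw [h1, hUlaw n, myPiSmul ν _, Measure.smul_apply, smul_eq_mul, ENNReal.toReal_mul,
      ENNReal.toReal_pow, ENNReal.toReal_inv, ENNReal.toReal_ofReal hl.le]
  -- the ξ expectation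
  have hbn : ∀ n : ℕ,
      (∫ ω', (if l * θ ≤ ∑ i ∈ Finset.range n, g (ξ i ω')
          then Real.exp (-(tstar * ∑ i ∈ Finset.range n, g (ξ i ω'))) else 0) ∂P)
      = (lam / K) ^ n * c n := by
    intro n
    set φ : (Fin n → ℝ) → ℝ := fun x =>
      if l * θ ≤ ∑ i, g (x i) then Real.exp (-(tstar * ∑ i, g (x i))) else 0 with hφ
    have hφmeas : Measurable φ := by
      refine Measurable.ite (hCmeas n) ?_ measurable_const
      fun_prop
    have hcomp : (fun ω' => (if l * θ ≤ ∑ i ∈ Finset.range n, g (ξ i ω')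
          then Real.exp (-(tstar * ∑ i ∈ Finset.range n, g (ξ i ω'))) else 0))
        = fun ω' => φ (fun i : Fin n => ξ i ω') := by
      funext ω'
      simp only [hφ, Fin.sum_univ_eq_sum_range (fun i => g (ξ i ω')) n]
    rw [hcomp]
    have hTmeas : Measurable (fun ω' (i : Fin n) => ξ i ω') :=
      measurable_pi_lambda (fun ω' (i : Fin n) => ξ i ω') fun i => hξmeas (i : Fin n).val
    rw [← integral_map hTmeas.aemeasurable hφmeas.aestronglyMeasurable, hξlaw n]
    haveI : IsFiniteMeasure (ν.withDensity fun y =>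
        ENNReal.ofReal (lam * Real.exp (tstar * g y) / K)) := by
      rw [← hμ']; infer_instance
    rw [hμ', myPiWithDensity ν _ hdens_meas.ennreal_ofReal]
    have hdcoe : (fun x : Fin n → ℝ =>
          ∏ i, ENNReal.ofReal (lam * Real.exp (tstar * g (x i)) / K))
        = fun x => ((∏ i, Real.toNNReal (lam * Real.exp (tstar * g (x i)) / K) : ℝ≥0) : ℝ≥0∞) := by
      funext x
      rw [ENNReal.coe_finset_prod]
      rfl
    rw [hdcoe, integral_withDensity_eq_integral_smul
      (f := fun x : Fin n → ℝ => ∏ i, Real.toNNReal (lam * Real.exp (tstar * g (x i)) / K))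
      (Finset.measurable_prod Finset.univ fun i _ =>
        Measurable.real_toNNReal (by fun_prop)) φ]
    have hpt : (fun x : Fin n → ℝ =>
          (∏ i, Real.toNNReal (lam * Real.exp (tstar * g (x i)) / K)) • φ x)
        = fun x => Set.indicator {x : Fin n → ℝ | l * θ ≤ ∑ i, g (x i)}
            (fun _ => (lam / K) ^ n) x := by
      funext x
      have h0 : ((∏ i, Real.toNNReal (lam * Real.exp (tstar * g (x i)) / K) : ℝ≥0) : ℝ)
          = (lam / K) ^ n * Real.exp (tstar * ∑ i, g (x i)) := by
        rw [NNReal.coe_prod]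
        have hterm : ∀ i : Fin n, ((Real.toNNReal (lam * Real.exp (tstar * g (x i)) / K)) : ℝ)
            = (lam / K) * Real.exp (tstar * g (x i)) := fun i => by
          rw [Real.coe_toNNReal _ (by positivity)]; ring
        rw [Finset.prod_congr rfl fun i _ => hterm i, Finset.prod_mul_distrib,
          Finset.prod_const, Finset.card_univ, Fintype.card_fin, ← Real.exp_sum,
          ← Finset.mul_sum]
      rw [NNReal.smul_def, h0, smul_eq_mul]
      simp only [hφ]
      by_cases hx : l * θ ≤ ∑ i, g (x i)
      · rw [if_pos hx, Set.indicator_of_mem (show x ∈ {x : Fin n → ℝ | l * θ ≤ ∑ i, g (x i)} from hx), mul_assoc, ← Real.exp_add]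
        simp
      · rw [if_neg hx, Set.indicator_of_notMem (show x ∉ {x : Fin n → ℝ | l * θ ≤ ∑ i, g (x i)} from hx), mul_zero]
    rw [hpt, integral_indicator_const _ (hCmeas n), smul_eq_mul, measureReal_def, mul_comm]
  -- assemble
  have hterm_ne : ∀ n, μ (N ⁻¹' {n}) * μ (A n) ≠ ⊤ := fun n =>
    ENNReal.mul_ne_top (measure_ne_top μ _) (measure_ne_top μ _)
  have hEreal : (μ {ω | l * θ ≤ ∑ i ∈ Finset.range (N ω), g (U i ω)}).toReal
      = ∑' n, Real.exp (-(lam * l)) * (lam * l) ^ n / (n.factorial : ℝ)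
          * ((l⁻¹) ^ n * c n) := by
    rw [hmeasE, ENNReal.tsum_toReal_eq hterm_ne]
    refine tsum_congr fun n => ?_
    rw [ENNReal.toReal_mul, hpois n, ENNReal.toReal_ofReal (by positivity), haAn n]
  rw [hEreal]
  simp only [hbn]
  rw [← tsum_mul_left, ← tsum_mul_left]
  refine tsum_congr fun n => ?_
  have hexps : Real.exp (l * Λstar θ) * Real.exp (-(lam * l))
      = Real.exp (l * θ * tstar) * Real.exp (-K) := by
    rw [← Real.exp_add, ← Real.exp_add]
    congr 1
    linear_combination part1
  have h1 : (lam * l) ^ n * (l⁻¹) ^ n = lam ^ n := by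
    rw [← mul_pow, mul_assoc, mul_inv_cancel₀ hl0, mul_one]
  have h2 : K ^ n * (lam / K) ^ n = lam ^ n := by
    rw [← mul_pow]
    congr 1
    field_simp
  calc Real.exp (l * Λstar θ)
        * (Real.exp (-(lam * l)) * (lam * l) ^ n / (n.factorial : ℝ) * ((l⁻¹) ^ n * c n))
      = (Real.exp (l * Λstar θ) * Real.exp (-(lam * l)))
        * (((lam * l) ^ n * (l⁻¹) ^ n) / (n.factorial : ℝ) * c n) := by ring
    _ = (Real.exp (l * θ * tstar) * Real.exp (-K))
        * ((K ^ n * (lam / K) ^ n) / (n.factorial : ℝ) * c n) := by rw [hexps, h1, h2]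
    _ = Real.exp (l * θ * tstar)
        * (Real.exp (-K) * K ^ n / (n.factorial : ℝ) * ((lam / K) ^ n * c n)) := by ring
end

section
/- For every δ > 0 there exist a constant c > 0 and K₀ > 0 such that for all real K ≥ K₀, Σ_{n ∈ ℕ, K ≤ n ≤ K + δ√K} e^{−K} K^n / n! ≥ c. -/
open Real

lemma fact_le_stirling (n : ℕ) (hn : 1 ≤ n) :
    (n.factorial : ℝ) ≤ Real.exp 1 * Real.sqrt n * ((n : ℝ) / Real.exp 1) ^ n := by
  obtain ⟨m, rfl⟩ : ∃ m, n = m + 1 := ⟨n - 1, (Nat.succ_pred_eq_of_pos hn).symm⟩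
  have h := Stirling.stirlingSeq'_antitone (Nat.zero_le m)
  simp only [Function.comp, Nat.succ_eq_add_one, zero_add, Stirling.stirlingSeq_one] at h
  have hpos : (0:ℝ) < Real.sqrt (2 * (m+1 : ℕ)) * (((m+1 : ℕ):ℝ) / Real.exp 1) ^ (m+1) := by
    have : (0:ℝ) < ((m+1 : ℕ):ℝ) := by positivity
    positivity
  rw [Stirling.stirlingSeq, div_le_iff₀ hpos] at h
  refine h.trans (le_of_eq ?_)
  have h2 : Real.sqrt (2 * ((m:ℕ)+1 : ℕ)) = Real.sqrt 2 * Real.sqrt ((m:ℕ)+1 : ℕ) := by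
    push_cast
    rw [Real.sqrt_mul (by norm_num)]
  push_cast at h2 ⊢
  rw [h2]
  have hs2 : Real.sqrt 2 ≠ 0 := by positivity
  field_simp

-- key exponent inequality: for 1 ≤ K ≤ n ≤ K + δ√K,  exp(K - δ²) * n^n ≤ exp n * K^n
lemma key_exp (δ K : ℝ) (hδ : 0 < δ) (hK1 : 1 ≤ K) (n : ℕ)
    (hKn : K ≤ (n:ℝ)) (hnK : (n:ℝ) ≤ K + δ * Real.sqrt K) :
    Real.exp (K - δ^2) * (n:ℝ) ^ n ≤ Real.exp (n:ℝ) * K ^ n := by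
  have hK0 : (0:ℝ) < K := by linarith
  have hn0 : (0:ℝ) < (n:ℝ) := lt_of_lt_of_le hK0 hKn
  have hKn' : K ^ n = Real.exp ((n:ℝ) * Real.log K) := by
    rw [← Real.exp_log hK0, ← Real.exp_nat_mul, Real.exp_log hK0]
  have hnn' : (n:ℝ) ^ n = Real.exp ((n:ℝ) * Real.log (n:ℝ)) := by
    rw [← Real.exp_log hn0, ← Real.exp_nat_mul, Real.exp_log hn0]
  rw [hKn', hnn', ← Real.exp_add, ← Real.exp_add, Real.exp_le_exp]
  -- goal : K - δ^2 + n * log n ≤ n + n * log K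
  have hlog : Real.log ((n:ℝ)/K) ≤ (n:ℝ)/K - 1 := Real.log_le_sub_one_of_pos (by positivity)
  rw [Real.log_div (ne_of_gt hn0) (ne_of_gt hK0)] at hlog
  have hmul : (n:ℝ) * (Real.log (n:ℝ) - Real.log K) ≤ (n:ℝ) * ((n:ℝ)/K - 1) := by
    exact mul_le_mul_of_nonneg_left hlog (le_of_lt hn0)
  have hsq : Real.sqrt K ^ 2 = K := Real.sq_sqrt hK0.le
  have hsk : 0 ≤ Real.sqrt K := Real.sqrt_nonneg K
  have hsub : ((n:ℝ) - K)^2 ≤ δ^2 * K := by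
    have h1 : (0:ℝ) ≤ (n:ℝ) - K := by linarith
    have h2 : (n:ℝ) - K ≤ δ * Real.sqrt K := by linarith
    calc ((n:ℝ) - K)^2 ≤ (δ * Real.sqrt K)^2 := by nlinarith
      _ = δ^2 * K := by rw [mul_pow, hsq]
  -- n * (n/K - 1) = n*(n-K)/K ≤ (n-K) + δ²
  have hdiv : (n:ℝ) * ((n:ℝ)/K - 1) ≤ ((n:ℝ) - K) + δ^2 := by
    rw [div_sub_one (ne_of_gt hK0), ← mul_div_assoc, div_le_iff₀ hK0]
    nlinarith
  linarith

/-- For every δ > 0 there exist c > 0 and K₀ > 0 such that for all real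
K ≥ K₀, Σ_{n ∈ ℕ, K ≤ n ≤ K + δ√K} e^{−K} K^n / n! ≥ c. -/
theorem stmt17 (δ : ℝ) (hδ : 0 < δ) :
    ∃ c > (0 : ℝ), ∃ K₀ > (0 : ℝ), ∀ K : ℝ, K₀ ≤ K →
      c ≤ ∑' n : ℕ,
        (if K ≤ (n : ℝ) ∧ (n : ℝ) ≤ K + δ * Real.sqrt K
          then Real.exp (-K) * K ^ n / (n.factorial : ℝ) else 0) := by
  refine ⟨δ * Real.exp (-(δ^2)) / (4 * Real.exp 1), by positivity,
    1 + δ^2 + 4/δ^2, by positivity, fun K hK => ?_⟩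
  have hK1 : 1 ≤ K := by nlinarith [sq_nonneg δ, div_pos (by norm_num : (0:ℝ) < 4) (pow_pos hδ 2)]
  have hK0 : (0:ℝ) < K := by linarith
  have hsk : 0 < Real.sqrt K := Real.sqrt_pos.2 hK0
  have hsq : Real.sqrt K ^ 2 = K := Real.sq_sqrt hK0.le
  have hKδ2 : δ^2 ≤ K := by nlinarith [div_pos (by norm_num : (0:ℝ) < 4) (pow_pos hδ 2)]
  have h2δ : 2 ≤ δ * Real.sqrt K := by
    have h4 : 4/δ^2 ≤ K := by nlinarith [sq_nonneg δ]
    have : 2/δ ≤ Real.sqrt K := by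
      rw [show (2:ℝ)/δ = Real.sqrt ((2/δ)^2) by rw [Real.sqrt_sq (by positivity)]]
      apply Real.sqrt_le_sqrt
      rw [div_pow]
      norm_num
      linarith
    calc (2:ℝ) = δ * (2/δ) := by field_simp
      _ ≤ δ * Real.sqrt K := by gcongr
  set f : ℕ → ℝ := fun n => (if K ≤ (n : ℝ) ∧ (n : ℝ) ≤ K + δ * Real.sqrt K
          then Real.exp (-K) * K ^ n / (n.factorial : ℝ) else 0) with hf
  have hf0 : ∀ n, 0 ≤ f n := by
    intro n
    simp only [hf]
    split
    · positivity
    · exact le_rfl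
  have hsummable : Summable f := by
    refine Summable.of_nonneg_of_le hf0 (fun n => ?_)
      ((Real.summable_pow_div_factorial K).mul_left (Real.exp (-K)))
    simp only [hf]
    split
    · exact le_of_eq (mul_div_assoc _ _ _)
    · positivity
  set a := ⌈K⌉₊ with ha
  set b := ⌊K + δ * Real.sqrt K⌋₊ with hb
  have haK : K ≤ (a:ℝ) := Nat.le_ceil K
  have ha1 : (a:ℝ) < K + 1 := Nat.ceil_lt_add_one hK0.le
  have hbK : (b:ℝ) ≤ K + δ * Real.sqrt K := Nat.floor_le (by positivity)
  have hb1 : K + δ * Real.sqrt K - 1 < (b:ℝ) := Nat.sub_one_lt_floor _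
  have hab : a ≤ b := by
    have : (a:ℝ) ≤ (b:ℝ) := by linarith
    exact_mod_cast this
  set t : ℝ := Real.exp (-(δ^2)) / (2 * Real.exp 1 * Real.sqrt K) with ht
  have hterm : ∀ n ∈ Finset.Icc a b, t ≤ f n := by
    intro n hn
    rw [Finset.mem_Icc] at hn
    have hKn : K ≤ (n:ℝ) := haK.trans (by exact_mod_cast hn.1)
    have hnK : (n:ℝ) ≤ K + δ * Real.sqrt K := le_trans (by exact_mod_cast hn.2) hbK
    have hn0 : (0:ℝ) < (n:ℝ) := lt_of_lt_of_le hK0 hKn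
    have hn1 : 1 ≤ n := by exact_mod_cast (show (1:ℝ) ≤ (n:ℝ) by linarith)
    have hfn : f n = Real.exp (-K) * K ^ n / (n.factorial : ℝ) := by
      simp only [hf]
      exact if_pos ⟨hKn, hnK⟩
    rw [hfn]
    have hfact := fact_le_stirling n hn1
    have hfp : (0:ℝ) < (n.factorial : ℝ) := by exact_mod_cast Nat.factorial_pos n
    have hden : (0:ℝ) < Real.exp 1 * Real.sqrt n * ((n:ℝ)/Real.exp 1)^n := by positivity
    have step1 : Real.exp (-K) * K ^ n / (Real.exp 1 * Real.sqrt n * ((n:ℝ)/Real.exp 1)^n)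
        ≤ Real.exp (-K) * K ^ n / (n.factorial : ℝ) := by
      gcongr
    refine le_trans ?_ step1
    have hsn : Real.sqrt (n:ℝ) ≤ 2 * Real.sqrt K := by
      have hn2K : (n:ℝ) ≤ 4*K := by nlinarith
      calc Real.sqrt (n:ℝ) ≤ Real.sqrt (4*K) := Real.sqrt_le_sqrt hn2K
        _ = 2 * Real.sqrt K := by
            rw [Real.sqrt_mul (by norm_num), show Real.sqrt 4 = 2 by
              rw [show (4:ℝ) = 2^2 by norm_num, Real.sqrt_sq (by norm_num)]]
    have hkey := key_exp δ K hδ hK1 n hKn hnK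
    rw [ht, div_le_div_iff₀ (by positivity) hden]
    have hpow : ((n:ℝ)/Real.exp 1)^n = (n:ℝ)^n / Real.exp n := by
      rw [div_pow, Real.exp_one_pow]
    rw [hpow]
    have hnn : (n:ℝ)^n ≤ Real.exp (n:ℝ) * K^n * Real.exp (δ^2 - K) := by
      have h := hkey
      have he : 0 < Real.exp (K - δ^2) := Real.exp_pos _
      rw [← le_div_iff₀' he] at h
      refine h.trans (le_of_eq ?_)
      rw [show δ^2 - K = -(K - δ^2) by ring, Real.exp_neg, div_eq_mul_inv]
    have hee : Real.exp (-(δ^2)) * Real.exp (δ^2 - K) = Real.exp (-K) := by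
      rw [← Real.exp_add]; congr 1; ring
    calc Real.exp (-(δ^2)) * (Real.exp 1 * Real.sqrt n * ((n:ℝ)^n / Real.exp n))
        ≤ Real.exp (-(δ^2)) * (Real.exp 1 * (2*Real.sqrt K) *
            ((Real.exp (n:ℝ) * K^n * Real.exp (δ^2 - K)) / Real.exp n)) := by
          gcongr
      _ = Real.exp (-K) * K ^ n * (2 * Real.exp 1 * Real.sqrt K) := by
          have hEn : Real.exp (n:ℝ) ≠ 0 := ne_of_gt (Real.exp_pos _)
          have hc : (Real.exp (n:ℝ) * K^n * Real.exp (δ^2-K)) / Real.exp (n:ℝ)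
              = K^n * Real.exp (δ^2-K) := by field_simp
          rw [hc, ← hee]; ring
  have hsum1 : (Finset.Icc a b).card • t ≤ ∑ n ∈ Finset.Icc a b, f n :=
    Finset.card_nsmul_le_sum _ _ _ hterm
  have hsum2 : ∑ n ∈ Finset.Icc a b, f n ≤ ∑' n, f n :=
    Summable.sum_le_tsum _ (fun n _ => hf0 n) hsummable
  have hcardR : ((Finset.Icc a b).card : ℝ) = (b:ℝ) + 1 - (a:ℝ) := by
    rw [Nat.card_Icc]
    have : a ≤ b + 1 := hab.trans (Nat.le_succ b)
    push_cast [Nat.cast_sub this]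
    ring
  have hcard_ge : δ * Real.sqrt K / 2 ≤ ((Finset.Icc a b).card : ℝ) := by
    rw [hcardR]; linarith
  have ht0 : 0 ≤ t := by rw [ht]; positivity
  have : δ * Real.exp (-(δ^2)) / (4 * Real.exp 1) = (δ * Real.sqrt K / 2) * t := by
    rw [ht]; field_simp; ring
  rw [this]
  calc (δ * Real.sqrt K / 2) * t ≤ ((Finset.Icc a b).card : ℝ) * t := by gcongr
    _ = (Finset.Icc a b).card • t := (nsmul_eq_mul _ _).symm
    _ ≤ ∑ n ∈ Finset.Icc a b, f n := hsum1
    _ ≤ ∑' n, f n := hsum2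
end

section
/- Let 0 < x₁ < x₂ < … < x_N < n with N ≥ 1, set x₀ = 0 and x_{N+1} = n, and let S = {x₁, …, x_N}. Then ∫_0^n g(d(y, S)) dy = 2 Σ_{i=0}^{N} G((x_{i+1} − x_i)/2) + G(x₁) + G(n − x_N) − 2G(x₁/2) − 2G((n − x_N)/2), where d(y, S) = min_{1 ≤ i ≤ N} |y − x_i|. -/
open MeasureTheory Real

lemma aux_intInt {g : ℝ → ℝ} (hg : Measurable g) {M : ℝ}
    (hM : ∀ y, |g y| ≤ M) {φ : ℝ → ℝ} (hφ : Measurable φ) (a b : ℝ) :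
    IntervalIntegrable (fun y => g (φ y)) volume a b := by
  constructor <;>
  · refine MeasureTheory.Measure.integrableOn_of_bounded (M := M) ?_
      ((hg.comp hφ).aestronglyMeasurable) ?_
    · exact (measure_Ioc_lt_top).ne
    · filter_upwards with y
      simpa [Real.norm_eq_abs] using hM (φ y)

/-- Let g be bounded measurable on [0,∞) with G(x) = ∫_0^x g. Let
0 < x₁ < … < x_N < L (N ≥ 1), x₀ = 0, x_{N+1} = L, S = {x₁,…,x_N} and
d(y,S) = min_{1≤i≤N}|y − x_i|. Then ∫_0^L g(d(y,S)) dy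
= 2Σ_{i=0}^N G((x_{i+1}−x_i)/2) + G(x₁) + G(L−x_N) − 2G(x₁/2) − 2G((L−x_N)/2). -/
theorem stmt18
    (g : ℝ → ℝ) (hgmeas : Measurable g) (M : ℝ) (hgbdd : ∀ y, |g y| ≤ M)
    (G : ℝ → ℝ) (hG : ∀ x, G x = ∫ s in (0:ℝ)..x, g s)
    (N : ℕ) (hN : 1 ≤ N) (L : ℝ) (x : ℕ → ℝ)
    (hx0 : x 0 = 0) (hxlast : x (N + 1) = L)
    (hmono : ∀ i ≤ N, x i < x (i + 1)) :
    (∫ y in (0:ℝ)..L,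
        g ((Finset.Icc 1 N).inf' (Finset.nonempty_Icc.2 hN) (fun i => |y - x i|)))
      = 2 * (∑ i ∈ Finset.range (N + 1), G ((x (i + 1) - x i) / 2))
        + G (x 1) + G (L - x N) - 2 * G (x 1 / 2) - 2 * G ((L - x N) / 2) := by
  set d : ℝ → ℝ :=
    fun y => (Finset.Icc 1 N).inf' (Finset.nonempty_Icc.2 hN) (fun i => |y - x i|) with hd
  -- monotonicity
  have hle : ∀ i j, i ≤ j → j ≤ N + 1 → x i ≤ x j := by
    intro i j hij hj
    induction j with
    | zero => interval_cases i; exact le_rfl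
    | succ k ih =>
      rcases Nat.eq_or_lt_of_le hij with h | h
      · rw [h]
      · exact le_trans (ih (Nat.lt_succ_iff.mp h) (by omega)) (hmono k (by omega)).le
  -- continuity / measurability of d
  have hdcont : Continuous d :=
    Continuous.finset_inf'_apply _ fun i _ => (continuous_id.sub continuous_const).abs
  have hdmeas : Measurable d := hdcont.measurable
  -- lower bound on each |y - x j|
  have hbound : ∀ i ≤ N, ∀ y, x i ≤ y → y ≤ x (i + 1) → ∀ j ∈ Finset.Icc 1 N,
      (if j ≤ i then y - x i else x (i + 1) - y) ≤ |y - x j| := by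
    intro i hi y hy1 hy2 j hj
    simp only [Finset.mem_Icc] at hj
    split_ifs with h
    · have hxj : x j ≤ x i := hle j i h (by omega)
      rw [abs_of_nonneg (by linarith)]; linarith
    · have hxj : x (i + 1) ≤ x j := hle (i + 1) j (by omega) (by omega)
      rw [abs_of_nonpos (by linarith)]; linarith
  -- values of d on each interval
  have hd0 : ∀ y, 0 ≤ y → y ≤ x 1 → d y = x 1 - y := by
    intro y hy1 hy2
    apply le_antisymm
    · calc d y ≤ |y - x 1| := Finset.inf'_le _ (by simp [hN])
        _ = x 1 - y := by rw [abs_of_nonpos (by linarith)]; ring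
    · apply Finset.le_inf'
      intro j hj
      have := hbound 0 (by omega) y (by rw [hx0]; exact hy1) (by simpa using hy2) j hj
      simp only [Finset.mem_Icc] at hj
      rw [if_neg (by omega : ¬ j ≤ 0)] at this
      exact this
  have hdN : ∀ y, x N ≤ y → y ≤ L → d y = y - x N := by
    intro y hy1 hy2
    apply le_antisymm
    · calc d y ≤ |y - x N| := Finset.inf'_le _ (by simp [hN])
        _ = y - x N := abs_of_nonneg (by linarith)
    · apply Finset.le_inf'
      intro j hj
      have := hbound N le_rfl y hy1 (by rw [hxlast]; exact hy2) j hj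
      simp only [Finset.mem_Icc] at hj
      rw [if_pos hj.2] at this
      exact this
  have hdmid : ∀ i, 1 ≤ i → i + 1 ≤ N → ∀ y, x i ≤ y → y ≤ x (i + 1) →
      d y = min (y - x i) (x (i + 1) - y) := by
    intro i hi1 hi2 y hy1 hy2
    apply le_antisymm
    · apply le_min
      · calc d y ≤ |y - x i| := Finset.inf'_le _ (by simp; omega)
          _ = y - x i := abs_of_nonneg (by linarith)
      · calc d y ≤ |y - x (i + 1)| := Finset.inf'_le _ (by simp; omega)
          _ = x (i + 1) - y := by rw [abs_of_nonpos (by linarith)]; ring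
    · apply Finset.le_inf'
      intro j hj
      have := hbound i (by omega) y hy1 hy2 j hj
      split_ifs at this with h
      · exact le_trans (min_le_left _ _) this
      · exact le_trans (min_le_right _ _) this
  have hII : ∀ a b : ℝ, IntervalIntegrable (fun y => g (d y)) volume a b :=
    fun a b => aux_intInt hgmeas hgbdd hdmeas a b
  change (∫ y in (0:ℝ)..L, g (d y)) = _
  have hsplit : (∫ y in (0:ℝ)..L, g (d y))
      = ∑ i ∈ Finset.range (N + 1), ∫ y in (x i)..(x (i+1)), g (d y) := by
    rw [← hx0, ← hxlast]
    exact (intervalIntegral.sum_integral_adjacent_intervals fun k hk => hII _ _).symm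
  have hV0 : (∫ y in (x 0)..(x 1), g (d y)) = G (x 1) := by
    have h01 : (0:ℝ) ≤ x 1 := by rw [← hx0]; exact (hmono 0 (by omega)).le
    rw [hx0]
    rw [intervalIntegral.integral_congr (g := fun y => g (x 1 - y))
      (fun y hy => by
        rw [Set.uIcc_of_le h01] at hy
        simp only
        rw [hd0 y hy.1 hy.2])]
    rw [intervalIntegral.integral_comp_sub_left, sub_self, sub_zero, hG]
  have hVN : (∫ y in (x N)..(x (N+1)), g (d y)) = G (L - x N) := by
    have h1 : x N ≤ L := by rw [← hxlast]; exact (hmono N le_rfl).le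
    rw [hxlast]
    rw [intervalIntegral.integral_congr (g := fun y => g (y - x N))
      (fun y hy => by
        rw [Set.uIcc_of_le h1] at hy
        simp only
        rw [hdN y hy.1 hy.2])]
    rw [intervalIntegral.integral_comp_sub_right, sub_self, hG]
  have hVmid : ∀ i, 1 ≤ i → i + 1 ≤ N →
      (∫ y in (x i)..(x (i+1)), g (d y)) = 2 * G ((x (i+1) - x i)/2) := by
    intro i h1 h2
    set a := x i with ha
    set b := x (i+1) with hb
    have hab : a ≤ b := (hmono i (by omega)).le
    set m := (a + b)/2 with hm
    have ham : a ≤ m := by rw [hm]; linarith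
    have hmb : m ≤ b := by rw [hm]; linarith
    rw [← intervalIntegral.integral_add_adjacent_intervals (b := m) (hII a m) (hII m b)]
    have e1 : (∫ y in a..m, g (d y)) = G ((b - a)/2) := by
      rw [intervalIntegral.integral_congr (g := fun y => g (y - a))
        (fun y hy => by
          rw [Set.uIcc_of_le ham] at hy
          simp only
          rw [hdmid i h1 h2 y hy.1 (le_trans hy.2 hmb),
            min_eq_left (by rw [hm] at hy; linarith [hy.2])])]
      rw [intervalIntegral.integral_comp_sub_right, sub_self, ← hG,
        show m - a = (b - a)/2 by rw [hm]; ring]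
    have e2 : (∫ y in m..b, g (d y)) = G ((b - a)/2) := by
      rw [intervalIntegral.integral_congr (g := fun y => g (b - y))
        (fun y hy => by
          rw [Set.uIcc_of_le hmb] at hy
          simp only
          rw [hdmid i h1 h2 y (le_trans ham hy.1) hy.2,
            min_eq_right (by rw [hm] at hy; linarith [hy.1])])]
      rw [intervalIntegral.integral_comp_sub_left, sub_self, ← hG,
        show b - m = (b - a)/2 by rw [hm]; ring]
    rw [e1, e2]; ring
  rw [hsplit]
  have h0mem : (0:ℕ) ∈ Finset.range (N+1) := Finset.mem_range.2 (by omega)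
  have hNmem : N ∈ (Finset.range (N+1)).erase 0 :=
    Finset.mem_erase.2 ⟨by omega, Finset.mem_range.2 (by omega)⟩
  have hsum : ∀ f : ℕ → ℝ, ∑ i ∈ Finset.range (N+1), f i
      = f 0 + (f N + ∑ i ∈ ((Finset.range (N+1)).erase 0).erase N, f i) := by
    intro f
    rw [← Finset.add_sum_erase _ f h0mem, ← Finset.add_sum_erase _ f hNmem]
  rw [hsum, hsum (fun i => G ((x (i+1) - x i)/2))]
  have hcore : ∑ i ∈ ((Finset.range (N+1)).erase 0).erase N,
        (∫ y in (x i)..(x (i+1)), g (d y))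
      = ∑ i ∈ ((Finset.range (N+1)).erase 0).erase N, 2 * G ((x (i+1) - x i)/2) := by
    apply Finset.sum_congr rfl
    intro i hi
    simp only [Finset.mem_erase, Finset.mem_range] at hi
    exact hVmid i (by omega) (by omega)
  rw [hV0, hVN, hcore, ← Finset.mul_sum]
  norm_num [hx0, hxlast, sub_zero]
  ring
end
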